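/- arXiv:1907.07424 — 5 statements merged into one kernel-verified Lean document; each statement's English description precedes it below -/
import Mathlib

section
/- Let X be a nonempty compact metrizable topological space and let ψ : X → X be a minimal homeomorphism (i.e., every orbit {ψ^n(x) : n ∈ ℤ} is dense in X). Then (X,ψ) is a factor of a minimal Cantor system: there exist a Cantor space M, a minimal homeomorphism σ : M → M, and a continuous surjection p : M → X such that p ∘ σ = ψ ∘ p. -/
/-- The group of self-homeomorphisms of a topological space, under composition. -/
instance homeoGroup {X : Type*} [TopologicalSpace X] : Group (X ≃ₜ X) where
  mul a b := b.trans a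
  one := Homeomorph.refl X
  inv := Homeomorph.symm
  mul_assoc a b c := rfl
  one_mul a := Homeomorph.ext fun _ => rfl
  mul_one a := Homeomorph.ext fun _ => rfl
  inv_mul_cancel a := Homeomorph.ext fun x => a.symm_apply_apply x

@[simp] lemma homeo_mul_apply {X : Type*} [TopologicalSpace X] (f g : X ≃ₜ X) (x : X) :
    (f * g) x = f (g x) := rfl

@[simp] lemma homeo_one_apply {X : Type*} [TopologicalSpace X] (x : X) :
    (1 : X ≃ₜ X) x = x := rfl

lemma homeo_zpow_add_apply {X : Type*} [TopologicalSpace X] (φ : X ≃ₜ X) (a b : ℤ) (x : X) :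
    (φ ^ (a + b)) x = (φ ^ a) ((φ ^ b) x) := by
  rw [zpow_add]; rfl

/-- A *Cantor space* is a topological space homeomorphic to `{0,1}^ℕ`. -/
def IsCantorSpace (X : Type*) [TopologicalSpace X] : Prop :=
  Nonempty (X ≃ₜ (ℕ → Bool))

/-- A homeomorphism is *minimal* if every `ℤ`-orbit `{φ^n x : n ∈ ℤ}` is dense. -/
def IsMinimalHomeo {X : Type*} [TopologicalSpace X] (φ : X ≃ₜ X) : Prop :=
  ∀ x : X, Dense (Set.range fun n : ℤ => (φ ^ n) x)


open Function Set

namespace CantorAux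

/-- agreement of two sequences below `n` -/
def Agr (n : ℕ) (y x : ℕ → Bool) : Prop := ∀ i, i < n → y i = x i

lemma Agr.mono {n m} {y x : ℕ → Bool} (h : Agr n y x) (hm : m ≤ n) : Agr m y x :=
  fun i hi => h i (lt_of_lt_of_le hi hm)

lemma Agr.trans' {n} {z y x : ℕ → Bool} (h1 : Agr n z y) (h2 : Agr n y x) : Agr n z x :=
  fun i hi => (h1 i hi).trans (h2 i hi)

lemma agr_refl (n : ℕ) (x : ℕ → Bool) : Agr n x x := fun _ _ => rfl

lemma agr_update {n : ℕ} {w : ℕ → Bool} (b : Bool) : Agr n (update w n b) w := fun i hi => by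
  simp [Function.update_apply, Nat.ne_of_lt hi]

/-- the cylinder around `x` of depth `n` meets `K` -/
def Live (K : Set (ℕ → Bool)) (x : ℕ → Bool) (n : ℕ) : Prop := ∃ y ∈ K, Agr n y x

lemma bool_cases {a b c : Bool} (h : a ≠ b) : c = a ∨ c = b := by
  revert h; revert a b c; decide

def SplitProp (K : Set (ℕ → Bool)) (x : ℕ → Bool) (n : ℕ) (w : ℕ → Bool) (N : ℕ) : Prop :=
  n ≤ N ∧ Agr n w x ∧ (∀ b : Bool, Live K (update w N b) (N + 1)) ∧
    ∀ y ∈ K, Agr n y x → Agr N y w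

section

variable {K : Set (ℕ → Bool)}

lemma exists_splitProp (hperf : ∀ x ∈ K, ∀ n : ℕ, ∃ y ∈ K, y ≠ x ∧ Agr n y x)
    {x : ℕ → Bool} {n : ℕ} (h : Live K x n) :
    ∃ wN : (ℕ → Bool) × ℕ, SplitProp K x n wN.1 wN.2 := by
  classical
  -- first, there is some split above (x, n)
  have hP : ∃ j : ℕ, n ≤ j ∧ ∃ w, Agr n w x ∧ ∀ b : Bool, Live K (update w j b) (j + 1) := by
    obtain ⟨y, hy, hyx⟩ := h
    obtain ⟨z, hz, hzy, hzagr⟩ := hperf y hy n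
    have hne : ∃ i, y i ≠ z i := by
      by_contra hc
      push_neg at hc
      exact hzy (funext fun i => (hc i).symm)
    have hjspec : y (Nat.find hne) ≠ z (Nat.find hne) := Nat.find_spec hne
    set j := Nat.find hne with hjdef
    have hjmin : ∀ i, i < j → y i = z i := fun i hi => by
      have := Nat.find_min hne hi; simpa using this
    have hnj : n ≤ j := by
      by_contra hc
      push_neg at hc
      exact hjspec (hzagr j hc).symm
    refine ⟨j, hnj, y, hyx, fun b => ?_⟩
    rcases bool_cases (c := b) hjspec.symm with hb | hb
    · -- b = z j, witness z
      refine ⟨z, hz, fun i hi => ?_⟩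
      rcases Nat.lt_succ_iff_lt_or_eq.mp hi with hi' | hi'
      · simp [Function.update_apply, Nat.ne_of_lt hi', (hjmin i hi').symm]
      · subst hi'; simp [hb]
    · -- b = y j, witness y
      refine ⟨y, hy, fun i hi => ?_⟩
      rcases Nat.lt_succ_iff_lt_or_eq.mp hi with hi' | hi'
      · simp [Function.update_apply, Nat.ne_of_lt hi']
      · subst hi'; simp [hb]
  -- now take a split of minimal depth
  set N := Nat.find hP with hNdef
  obtain ⟨hnN, w, hwx, hlive⟩ : n ≤ N ∧ ∃ w, Agr n w x ∧
      ∀ b : Bool, Live K (update w N b) (N + 1) := Nat.find_spec hP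
  refine ⟨(w, N), hnN, hwx, hlive, ?_⟩
  -- pass-through property
  intro y hy hyx
  by_contra hc
  have hne : ∃ i, ¬ y i = w i := by
    simp only [Agr, not_forall] at hc
    obtain ⟨i, hi, hiy⟩ := hc
    exact ⟨i, hiy⟩
  have hjspec : y (Nat.find hne) ≠ w (Nat.find hne) := Nat.find_spec hne
  set j := Nat.find hne with hjdef
  have hjmin : ∀ i, i < j → y i = w i := fun i hi => by
    have := Nat.find_min hne hi; simpa using this
  have hjN : j < N := by
    simp only [Agr, not_forall] at hc
    obtain ⟨i, hi, hiy⟩ := hc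
    exact lt_of_le_of_lt (Nat.find_min' hne hiy) hi
  have hnj : n ≤ j := by
    by_contra hcc
    push_neg at hcc
    exact hjspec ((hyx j hcc).trans (hwx j hcc).symm)
  -- a point of K through (w, N) (hence through (w restricted to j+1) with bit w j)
  obtain ⟨z, hz, hzw'⟩ := hlive false
  have hzw : Agr N z w := fun i hi => by
    have := hzw' i (Nat.lt_succ_of_lt hi)
    rwa [update_of_ne (Nat.ne_of_lt hi)] at this
  -- so (y, j) is a split of depth j < N: contradiction
  have : n ≤ j ∧ ∃ w', Agr n w' x ∧ ∀ b : Bool, Live K (update w' j b) (j + 1) := by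
    refine ⟨hnj, y, hyx, fun b => ?_⟩
    rcases bool_cases (c := b) hjspec.symm with hb | hb
    · -- b = w j, witness z
      refine ⟨z, hz, fun i hi => ?_⟩
      rcases Nat.lt_succ_iff_lt_or_eq.mp hi with hi' | hi'
      · rw [update_of_ne (Nat.ne_of_lt hi'), hjmin i hi']
        exact hzw i (lt_trans hi' hjN)
      · subst hi'; rw [hb, update_self]
        exact hzw j hjN
    · -- b = y j, witness y
      refine ⟨y, hy, fun i hi => ?_⟩
      rcases Nat.lt_succ_iff_lt_or_eq.mp hi with hi' | hi'
      · rw [update_of_ne (Nat.ne_of_lt hi')]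
      · subst hi'; rw [hb, update_self]
  exact absurd (Nat.find_min' hP this) (Nat.not_le.mpr hjN)

/-- one step of the construction: the canonical split node above `(x, n)`. -/
noncomputable def nodeStep (K : Set (ℕ → Bool)) (x : ℕ → Bool) (n : ℕ) : (ℕ → Bool) × ℕ := by
  classical
  exact if h : ∃ wN : (ℕ → Bool) × ℕ, SplitProp K x n wN.1 wN.2 then h.choose else (x, n + 1)

lemma nodeStep_spec (hperf : ∀ x ∈ K, ∀ n : ℕ, ∃ y ∈ K, y ≠ x ∧ Agr n y x)
    {x : ℕ → Bool} {n : ℕ} (h : Live K x n) :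
    SplitProp K x n (nodeStep K x n).1 (nodeStep K x n).2 := by
  classical
  have hex := exists_splitProp hperf h
  rw [nodeStep, dif_pos hex]
  exact hex.choose_spec

/-- the chain of split nodes determined by `x : ℕ → Bool`. -/
noncomputable def chain (K : Set (ℕ → Bool)) (x : ℕ → Bool) : ℕ → (ℕ → Bool) × ℕ
  | 0 => nodeStep K (fun _ => false) 0
  | k + 1 => nodeStep K (update (chain K x k).1 (chain K x k).2 (x k)) ((chain K x k).2 + 1)

variable (hK : IsClosed K) (hne : K.Nonempty)
  (hperf : ∀ x ∈ K, ∀ n : ℕ, ∃ y ∈ K, y ≠ x ∧ Agr n y x)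

include hne hperf in
lemma chain_live (x : ℕ → Bool) : ∀ k : ℕ, ∀ b : Bool,
    Live K (update (chain K x k).1 (chain K x k).2 b) ((chain K x k).2 + 1) := by
  intro k
  induction k with
  | zero =>
    have h0 : Live K (fun _ => false) 0 := ⟨hne.choose, hne.choose_spec, fun i hi => by omega⟩
    exact (nodeStep_spec hperf h0).2.2.1
  | succ k ih =>
    exact (nodeStep_spec hperf (ih (x k))).2.2.1

include hne hperf in
lemma chain_zero_spec (x : ℕ → Bool) :
    SplitProp K (fun _ => false) 0 (chain K x 0).1 (chain K x 0).2 :=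
  nodeStep_spec hperf ⟨hne.choose, hne.choose_spec, fun i hi => by omega⟩

include hne hperf in
lemma chain_succ_spec (x : ℕ → Bool) (k : ℕ) :
    SplitProp K (update (chain K x k).1 (chain K x k).2 (x k)) ((chain K x k).2 + 1)
      (chain K x (k + 1)).1 (chain K x (k + 1)).2 :=
  nodeStep_spec hperf (chain_live hne hperf x k (x k))

include hne hperf in
lemma chain_mono (x : ℕ → Bool) {k k' : ℕ} (h : k ≤ k') :
    (chain K x k).2 ≤ (chain K x k').2 := by
  induction k' with
  | zero => simp_all
  | succ m ih =>
    rcases Nat.le_succ_iff.mp h with h' | h'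
    · exact le_trans (ih h') (le_trans (Nat.le_succ _) (chain_succ_spec hne hperf x m).1)
    · exact le_of_eq (by rw [h'])

include hne hperf in
lemma chain_ge (x : ℕ → Bool) (k : ℕ) : k ≤ (chain K x k).2 := by
  induction k with
  | zero => exact Nat.zero_le _
  | succ m ih =>
    exact le_trans (Nat.succ_le_succ ih) (chain_succ_spec hne hperf x m).1

include hne hperf in
lemma chain_agr_succ (x : ℕ → Bool) (k : ℕ) :
    Agr (chain K x k).2 (chain K x (k + 1)).1 (chain K x k).1 ∧
      (chain K x (k + 1)).1 (chain K x k).2 = x k := by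
  have h := (chain_succ_spec hne hperf x k).2.1
  constructor
  · intro i hi
    have := h i (Nat.lt_succ_of_lt hi)
    rwa [update_of_ne (Nat.ne_of_lt hi)] at this
  · have := h (chain K x k).2 (Nat.lt_succ_self _)
    rwa [update_self] at this

include hne hperf in
lemma chain_coh (x : ℕ → Bool) {k k' : ℕ} (h : k ≤ k') :
    Agr (chain K x k).2 (chain K x k').1 (chain K x k).1 := by
  induction k' with
  | zero =>
    have : k = 0 := Nat.le_zero.mp h
    subst this; exact agr_refl _ _
  | succ m ih =>
    rcases Nat.le_succ_iff.mp h with h' | h'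
    · exact ((chain_agr_succ hne hperf x m).1.mono
        (chain_mono hne hperf x h')).trans' (ih h')
    · subst h'; exact agr_refl _ _

/-- the limit point of the chain of split nodes of `x`. -/
noncomputable def limitF (K : Set (ℕ → Bool)) (x : ℕ → Bool) : ℕ → Bool :=
  fun i => (chain K x (i + 1)).1 i

include hne hperf in
lemma limit_eq (x : ℕ → Bool) {k i : ℕ} (hi : i < (chain K x k).2) :
    limitF K x i = (chain K x k).1 i := by
  rcases le_total k (i + 1) with h | h
  · exact chain_coh hne hperf x h i hi
  · have hi' : i < (chain K x (i + 1)).2 :=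
      lt_of_lt_of_le (Nat.lt_succ_self i) (chain_ge hne hperf x (i + 1))
    exact (chain_coh hne hperf x h i hi').symm

/-- cylinders are a neighborhood basis in `ℕ → Bool`. -/
lemma exists_cyl_subset {U : Set (ℕ → Bool)} (hU : IsOpen U) {z : ℕ → Bool} (hz : z ∈ U) :
    ∃ n : ℕ, ∀ y, Agr n y z → y ∈ U := by
  obtain ⟨I, u, hIu, hsub⟩ := isOpen_pi_iff.mp hU z hz
  refine ⟨(I.sup id) + 1, fun y hy => hsub fun a ha => ?_⟩
  have : y a = z a := hy a (Nat.lt_succ_of_le (Finset.le_sup (f := id) ha))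
  rw [this]
  exact (hIu a ha).2

include hK hne hperf in
lemma limit_mem (x : ℕ → Bool) : limitF K x ∈ K := by
  by_contra hc
  obtain ⟨n, hcyl⟩ := exists_cyl_subset hK.isOpen_compl hc
  obtain ⟨y, hy, hyw'⟩ := chain_live hne hperf x n false
  have hyw : Agr (chain K x n).2 y (chain K x n).1 := fun i hi => by
    have := hyw' i (Nat.lt_succ_of_lt hi)
    rwa [update_of_ne (Nat.ne_of_lt hi)] at this
  refine hcyl y (fun i hi => ?_) hy
  have hiN : i < (chain K x n).2 := lt_of_lt_of_le hi (chain_ge hne hperf x n)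
  rw [hyw i hiN, ← limit_eq hne hperf x hiN]

lemma chain_congr {x x' : ℕ → Bool} {k : ℕ} (h : ∀ j, j < k → x j = x' j) :
    chain K x k = chain K x' k := by
  induction k with
  | zero => rfl
  | succ m ih =>
    have hm : chain K x m = chain K x' m := ih fun j hj => h j (Nat.lt_succ_of_lt hj)
    show nodeStep K _ _ = nodeStep K _ _
    rw [hm, h m (Nat.lt_succ_self m)]

include hne hperf in
lemma limitF_injective : Function.Injective (limitF K) := by
  intro x x' hxx
  by_contra hc
  have hne2 : ∃ j, x j ≠ x' j := by
    by_contra hc2; push_neg at hc2; exact hc (funext hc2)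
  have hjspec : x (Nat.find hne2) ≠ x' (Nat.find hne2) := Nat.find_spec hne2
  set j := Nat.find hne2 with hjdef
  have hjmin : ∀ i, i < j → x i = x' i := fun i hi => by
    have := Nat.find_min hne2 hi; simpa using this
  have hcc : chain K x j = chain K x' j := chain_congr hjmin
  have h1 : limitF K x (chain K x j).2 = x j := by
    have hlt : (chain K x j).2 < (chain K x (j + 1)).2 :=
      Nat.lt_of_succ_le (chain_succ_spec hne hperf x j).1
    rw [limit_eq hne hperf x hlt]
    exact (chain_agr_succ hne hperf x j).2
  have h2 : limitF K x' (chain K x' j).2 = x' j := by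
    have hlt : (chain K x' j).2 < (chain K x' (j + 1)).2 :=
      Nat.lt_of_succ_le (chain_succ_spec hne hperf x' j).1
    rw [limit_eq hne hperf x' hlt]
    exact (chain_agr_succ hne hperf x' j).2
  rw [← hxx, ← hcc] at h2
  exact hjspec (h1.symm.trans h2)

include hne hperf in
lemma limitF_surjective {y : ℕ → Bool} (hy : y ∈ K) : ∃ x, limitF K x = y := by
  classical
  -- successive approximations to the preimage
  let Xa : ℕ → (ℕ → Bool) := fun k => Nat.rec (fun _ => false)
    (fun m Xm => fun j => if j = m then y ((chain K Xm m).2) else Xm j) k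
  have hXa_succ : ∀ k j, Xa (k + 1) j = if j = k then y ((chain K (Xa k) k).2) else Xa k j :=
    fun k j => rfl
  set xs : ℕ → Bool := fun k => Xa (k + 1) k with hxs
  have hstab : ∀ k j, j < k → Xa k j = xs j := by
    intro k
    induction k with
    | zero => omega
    | succ m ih =>
      intro j hj
      rcases Nat.lt_succ_iff_lt_or_eq.mp hj with hj' | hj'
      · rw [hXa_succ m j, if_neg (Nat.ne_of_lt hj')]
        exact ih j hj'
      · subst hj'; rfl
  have hchain : ∀ k, chain K xs k = chain K (Xa k) k :=
    fun k => chain_congr fun j hj => (hstab k j hj).symm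
  have hkey : ∀ k, xs k = y ((chain K xs k).2) := by
    intro k
    show Xa (k + 1) k = _
    rw [hXa_succ k k, if_pos rfl, hchain k]
  -- y passes through every node of the chain of xs
  have hinv : ∀ k, Agr (chain K xs k).2 y (chain K xs k).1 := by
    intro k
    induction k with
    | zero =>
      exact (chain_zero_spec hne hperf xs).2.2.2 y hy (fun i hi => by omega)
    | succ m ih =>
      refine (chain_succ_spec hne hperf xs m).2.2.2 y hy (fun i hi => ?_)
      rcases Nat.lt_succ_iff_lt_or_eq.mp hi with hi' | hi'
      · rw [update_of_ne (Nat.ne_of_lt hi')]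
        exact ih i hi'
      · subst hi'; rw [update_self]
        exact (hkey m).symm
  refine ⟨xs, funext fun i => ?_⟩
  have hi : i < (chain K xs (i + 1)).2 :=
    lt_of_lt_of_le (Nat.lt_succ_self i) (chain_ge hne hperf xs (i + 1))
  rw [limit_eq hne hperf xs hi]
  exact (hinv (i + 1) i hi).symm

lemma limitF_continuous : Continuous (limitF K) := by
  refine continuous_pi fun i => ?_
  have hfac : (fun x => limitF K x i) =
      (fun v : Fin (i + 1) → Bool =>
        (chain K (fun j => if h : j < i + 1 then v ⟨j, h⟩ else false) (i + 1)).1 i) ∘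
      (fun x j => x (j : ℕ)) := by
    funext x
    show (chain K x (i+1)).1 i = _
    have : chain K x (i + 1) =
        chain K (fun j => if h : j < i + 1 then x j else false) (i + 1) :=
      chain_congr fun j hj => by simp [hj]
    rw [this]
    rfl
  rw [hfac]
  exact (continuous_of_discreteTopology).comp (continuous_pi fun j => continuous_apply _)

/-- **Brouwer-type theorem**: a nonempty closed subset of the Cantor space without
isolated points (in the cylinder sense) is homeomorphic to the Cantor space. -/
lemma cantor_homeo (K : Set (ℕ → Bool)) (hK : IsClosed K) (hne : K.Nonempty)
    (hperf : ∀ x ∈ K, ∀ n : ℕ, ∃ y ∈ K, y ≠ x ∧ Agr n y x) :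
    Nonempty (↥K ≃ₜ (ℕ → Bool)) := by
  let F : (ℕ → Bool) → ↥K := fun x => ⟨limitF K x, limit_mem hK hne hperf x⟩
  have hFbij : Function.Bijective F := by
    constructor
    · intro a b hab
      exact limitF_injective hne hperf (congrArg Subtype.val hab)
    · rintro ⟨y, hy⟩
      obtain ⟨x, hx⟩ := limitF_surjective hne hperf hy
      exact ⟨x, Subtype.ext hx⟩
  have hFcont : Continuous F := (limitF_continuous (K := K)).subtype_mk _
  exact ⟨(Continuous.homeoOfEquivCompactToT2 (f := Equiv.ofBijective F hFbij) hFcont).symm⟩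

end

/-! ### A closed subset of Cantor space surjecting onto a compact metrizable space -/

section Surjection

/-- binary digits: every `r ∈ [0,1]` is a binary sum -/
lemma exists_binary_digits (r : ℝ) (h0 : 0 ≤ r) (h1 : r ≤ 1) :
    ∃ b : ℕ → Bool, ∑' i : ℕ, (if b i then ((2:ℝ)⁻¹) ^ (i + 1) else 0) = r := by
  classical
  -- greedy partial sums
  let s : ℕ → ℝ := fun n => Nat.rec 0
    (fun m sm => sm + (if sm + (2:ℝ)⁻¹ ^ (m + 1) ≤ r then (2:ℝ)⁻¹ ^ (m + 1) else 0)) n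
  have hs_succ : ∀ n, s (n + 1) =
      s n + (if s n + (2:ℝ)⁻¹ ^ (n + 1) ≤ r then (2:ℝ)⁻¹ ^ (n + 1) else 0) := fun n => rfl
  let b : ℕ → Bool := fun n => decide (s n + (2:ℝ)⁻¹ ^ (n + 1) ≤ r)
  have hinv : ∀ n, 0 ≤ r - s n ∧ r - s n ≤ (2:ℝ)⁻¹ ^ n := by
    intro n
    induction n with
    | zero =>
      have hs0 : s 0 = 0 := rfl
      rw [hs0, pow_zero]
      exact ⟨by linarith, by linarith⟩
    | succ m ih =>
      rw [hs_succ m]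
      have hp : (0:ℝ) < (2:ℝ)⁻¹ ^ (m + 1) := by positivity
      have hpow : (2:ℝ)⁻¹ ^ (m + 1) = (2:ℝ)⁻¹ ^ m * 2⁻¹ := pow_succ _ _
      by_cases hc : s m + (2:ℝ)⁻¹ ^ (m + 1) ≤ r
      · rw [if_pos hc]
        constructor
        · linarith
        · have := ih.2
          rw [hpow] at *
          linarith
      · rw [if_neg hc, add_zero]
        push_neg at hc
        exact ⟨ih.1, by linarith⟩
  have hsum : ∀ n, ∑ i ∈ Finset.range n, (if b i then ((2:ℝ)⁻¹) ^ (i + 1) else 0) = s n := by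
    intro n
    induction n with
    | zero => rfl
    | succ m ih =>
      rw [Finset.sum_range_succ, ih, hs_succ m]
      by_cases hc : s m + (2:ℝ)⁻¹ ^ (m + 1) ≤ r
      · simp [b, hc]
      · simp [b, hc]
  have hsummable : Summable (fun i : ℕ => (if b i then ((2:ℝ)⁻¹) ^ (i + 1) else 0)) := by
    refine Summable.of_nonneg_of_le (fun i => ?_) (fun i => ?_)
      (summable_geometric_of_lt_one (by norm_num) (by norm_num : (2:ℝ)⁻¹ < 1))
    · by_cases hc : b i <;> simp [hc] <;> positivity
    · have hle : ((2:ℝ)⁻¹) ^ (i + 1) ≤ ((2:ℝ)⁻¹) ^ i :=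
        pow_le_pow_of_le_one (by norm_num) (by norm_num) (Nat.le_succ i)
      by_cases hc : b i <;> simp [hc]
      · simpa using hle
  refine ⟨b, ?_⟩
  have htend1 : Filter.Tendsto (fun n => ∑ i ∈ Finset.range n,
      (if b i then ((2:ℝ)⁻¹) ^ (i + 1) else 0)) Filter.atTop
      (nhds (∑' i : ℕ, (if b i then ((2:ℝ)⁻¹) ^ (i + 1) else 0))) :=
    hsummable.hasSum.tendsto_sum_nat
  have htend2 : Filter.Tendsto s Filter.atTop (nhds r) := by
    have hlow : Filter.Tendsto (fun n => r - (2:ℝ)⁻¹ ^ n) Filter.atTop (nhds r) := by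
      have : Filter.Tendsto (fun n : ℕ => (2:ℝ)⁻¹ ^ n) Filter.atTop (nhds 0) :=
        tendsto_pow_atTop_nhds_zero_of_lt_one (by norm_num) (by norm_num)
      simpa using Filter.Tendsto.sub (tendsto_const_nhds (x := r)) this
    refine tendsto_of_tendsto_of_tendsto_of_le_of_le hlow tendsto_const_nhds
      (fun n => by linarith [(hinv n).2]) (fun n => by linarith [(hinv n).1])
  have := tendsto_nhds_unique htend1 (by simpa only [hsum] using htend2 :
    Filter.Tendsto (fun n => ∑ i ∈ Finset.range n,
      (if b i then ((2:ℝ)⁻¹) ^ (i + 1) else 0)) Filter.atTop (nhds r))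
  exact this

/-- Every nonempty compact metrizable space is the continuous image of a closed
subset of Cantor space. -/
lemma exists_cantor_closed_surjection (X : Type*) [TopologicalSpace X] [Nonempty X]
    [CompactSpace X] [TopologicalSpace.MetrizableSpace X] :
    ∃ (K : Set (ℕ → Bool)) (q : ↥K → X), IsClosed K ∧ Continuous q ∧ Function.Surjective q := by
  classical
  letI : MetricSpace X := TopologicalSpace.metrizableSpaceMetric X
  haveI : TopologicalSpace.SeparableSpace X :=
    TopologicalSpace.isSeparable_univ_iff.mp isCompact_univ.isSeparable
  set d : ℕ → X := TopologicalSpace.denseSeq X with hd_def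
  have hd : DenseRange d := TopologicalSpace.denseRange_denseSeq X
  -- the embedding into the Hilbert cube
  set e : X → ℕ → ℝ := fun x n => min (dist x (d n)) 1 with he_def
  have he_cont : Continuous e :=
    continuous_pi fun n => (continuous_id.dist continuous_const).min continuous_const
  have he_mem : ∀ x n, 0 ≤ e x n ∧ e x n ≤ 1 :=
    fun x n => ⟨le_min dist_nonneg zero_le_one, min_le_right _ _⟩
  have he_inj : Function.Injective e := by
    intro x y hxy
    by_contra hne
    have hdxy : 0 < dist x y := dist_pos.mpr hne
    set ε : ℝ := min (dist x y) 1 with hε_def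
    have hε : 0 < ε := lt_min hdxy one_pos
    obtain ⟨n, hn⟩ := hd.exists_dist_lt x (by positivity : 0 < ε / 4)
    have hε1 : ε ≤ 1 := min_le_right _ _
    have hεd : ε ≤ dist x y := min_le_left _ _
    have hex : e x n = dist x (d n) := min_eq_left (by linarith)
    have hey : e y n ≥ 3 * ε / 4 := by
      have hyd : dist x y ≤ dist x (d n) + dist y (d n) := by
        have h3 := dist_triangle x (d n) y
        rwa [dist_comm (d n) y] at h3
      exact le_min (by linarith) (by linarith)
    have : e x n = e y n := congrFun hxy n
    rw [hex] at this
    linarith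
  have hemb : Topology.IsClosedEmbedding e := he_cont.isClosedEmbedding he_inj
  -- the folding surjection from Cantor space onto the Hilbert cube
  set pr : ℕ × ℕ ≃ ℕ := Denumerable.eqv (ℕ × ℕ) with hpr_def
  set F : (ℕ → Bool) → ℕ → ℝ :=
    fun ω n => ∑' i : ℕ, (if ω (pr (n, i)) then ((2:ℝ)⁻¹) ^ (i + 1) else 0) with hF_def
  have hF_cont : Continuous F := by
    refine continuous_pi fun n => continuous_tsum (u := fun i => ((2:ℝ)⁻¹) ^ i)
      (fun i => ?_) (summable_geometric_of_lt_one (by norm_num) (by norm_num)) ?_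
    · exact Continuous.comp (continuous_of_discreteTopology
        (f := fun b : Bool => if b = true then ((2:ℝ)⁻¹) ^ (i + 1) else 0)) (continuous_apply _)
    · intro i ω
      have hle : ((2:ℝ)⁻¹) ^ (i + 1) ≤ ((2:ℝ)⁻¹) ^ i :=
        pow_le_pow_of_le_one (by norm_num) (by norm_num) (Nat.le_succ i)
      have hnn : (0:ℝ) ≤ ((2:ℝ)⁻¹) ^ (i + 1) := by positivity
      by_cases hc : ω (pr (n, i)) <;> simp [hc, Real.norm_eq_abs]
      · simpa using hle
  have hF_covers : ∀ x : X, ∃ ω, F ω = e x := by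
    intro x
    have : ∀ n, ∃ bn : ℕ → Bool,
        ∑' i : ℕ, (if bn i then ((2:ℝ)⁻¹) ^ (i + 1) else 0) = e x n :=
      fun n => exists_binary_digits _ (he_mem x n).1 (he_mem x n).2
    choose β hβ using this
    refine ⟨fun k => β (pr.symm k).1 (pr.symm k).2, funext fun n => ?_⟩
    simp only [hF_def, Equiv.symm_apply_apply]
    exact hβ n
  -- the closed set and the surjection
  refine ⟨F ⁻¹' (Set.range e), ?_, hemb.isClosed_range.preimage hF_cont, ?_, ?_⟩
  · exact fun k => Classical.choose (k.2 : F k.1 ∈ Set.range e)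
  · have hcomp : ∀ k : ↥(F ⁻¹' (Set.range e)),
        e (Classical.choose (k.2 : F k.1 ∈ Set.range e)) = F k.1 :=
      fun k => Classical.choose_spec (k.2 : F k.1 ∈ Set.range e)
    rw [Topology.IsEmbedding.continuous_iff hemb.isEmbedding]
    have : (e ∘ fun k : ↥(F ⁻¹' (Set.range e)) =>
        Classical.choose (k.2 : F k.1 ∈ Set.range e)) = F ∘ Subtype.val :=
      funext fun k => hcomp k
    rw [this]
    exact hF_cont.comp continuous_subtype_val
  · intro x
    obtain ⟨ω, hω⟩ := hF_covers x
    have hmem : ω ∈ F ⁻¹' (Set.range e) := ⟨x, hω.symm⟩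
    refine ⟨⟨ω, hmem⟩, he_inj ?_⟩
    rw [Classical.choose_spec (hmem : F ω ∈ Set.range e)]
    exact hω

end Surjection

/-! ### Dynamical systems machinery -/

section Dynamics

/-- iterate commutation for powers of homeomorphisms -/
lemma homeo_zpow_succ_apply {Y : Type*} [TopologicalSpace Y] (φ : Y ≃ₜ Y) (n : ℤ) (y : Y) :
    (φ ^ (n + 1)) y = φ ((φ ^ n) y) := by
  rw [show n + 1 = 1 + n by ring, homeo_zpow_add_apply, zpow_one]

lemma homeo_zpow_neg_cancel {Y : Type*} [TopologicalSpace Y] (φ : Y ≃ₜ Y) (n : ℤ) (y : Y) :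
    (φ ^ (-n)) ((φ ^ n) y) = y := by
  rw [← homeo_zpow_add_apply, neg_add_cancel, zpow_zero, homeo_one_apply]

/-- a compact space with a minimal homeomorphism and an isolated point is finite -/
lemma equivariant_zpow {A B : Type*} [TopologicalSpace A] [TopologicalSpace B]
    (f : A ≃ₜ A) (g : B ≃ₜ B) (v : A → B) (h : ∀ a, v (f a) = g (v a)) :
    ∀ (n : ℤ) (a : A), v ((f ^ n) a) = (g ^ n) (v a) := by
  have hsymm : ∀ a, v (f.symm a) = g.symm (v a) := by
    intro a
    apply g.injective
    rw [← h (f.symm a), f.apply_symm_apply, g.apply_symm_apply]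
  intro n
  induction n using Int.induction_on with
  | zero => intro a; rw [zpow_zero, zpow_zero, homeo_one_apply, homeo_one_apply]
  | succ k ih => intro a; rw [homeo_zpow_succ_apply, homeo_zpow_succ_apply, ← ih a, h]
  | pred k ih =>
    intro a
    have e1 : (f ^ (-(k:ℤ) - 1)) a = f.symm ((f ^ (-(k:ℤ))) a) := by
      apply f.injective
      rw [f.apply_symm_apply, ← homeo_zpow_succ_apply, sub_add_cancel]
    have e2 : (g ^ (-(k:ℤ) - 1)) (v a) = g.symm ((g ^ (-(k:ℤ))) (v a)) := by
      apply g.injective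
      rw [g.apply_symm_apply, ← homeo_zpow_succ_apply, sub_add_cancel]
    rw [e1, e2, hsymm, ih a]

lemma homeo_mem_image {α β : Type*} [TopologicalSpace α] [TopologicalSpace β]
    (e : α ≃ₜ β) (A : Set α) (y : β) : y ∈ e '' A ↔ e.symm y ∈ A := by
  constructor
  · rintro ⟨a, ha, rfl⟩
    rwa [e.symm_apply_apply]
  · intro h
    exact ⟨e.symm y, h, e.apply_symm_apply y⟩

lemma finite_of_minimal_isolated {Y : Type*} [TopologicalSpace Y] [CompactSpace Y]
    (φ : Y ≃ₜ Y) (hmin : IsMinimalHomeo φ) (y₀ : Y) (hy₀ : IsOpen ({y₀} : Set Y)) :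
    Finite Y := by
  have hall : ∀ z : Y, ∃ n : ℤ, z = (φ ^ n) y₀ := by
    intro z
    obtain ⟨w, ⟨n, rfl⟩, hw⟩ := (hmin z).exists_mem_open hy₀ ⟨y₀, rfl⟩
    refine ⟨-n, ?_⟩
    rw [← (Set.mem_singleton_iff.mp hw), homeo_zpow_neg_cancel]
  have hopen : ∀ z : Y, IsOpen ({z} : Set Y) := by
    intro z
    obtain ⟨n, rfl⟩ := hall z
    have : ((φ ^ n) '' {y₀}) = {(φ ^ n) y₀} := Set.image_singleton
    rw [← this]
    exact (Homeomorph.isOpen_image (φ ^ n)).mpr hy₀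
  haveI : DiscreteTopology Y := discreteTopology_iff_isOpen_singleton.mpr hopen
  exact finite_of_compact_of_discrete

/-- the homeomorphism `(ℤ → ℕ → Bool) ≃ₜ (ℕ → Bool)` -/
noncomputable def theta : (ℤ → ℕ → Bool) ≃ₜ (ℕ → Bool) := by
  refine Homeomorph.trans
    { toEquiv := (Equiv.curry ℤ ℕ Bool).symm
      continuous_toFun := continuous_pi fun p =>
        (continuous_apply p.2).comp (continuous_apply p.1)
      continuous_invFun := continuous_pi fun a => continuous_pi fun b =>
        continuous_apply ((a, b) : ℤ × ℕ) }
    (Homeomorph.piCongrLeft (Y := fun _ => Bool) (Denumerable.eqv (ℤ × ℕ)))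

lemma dense_homeo_image {α β : Type*} [TopologicalSpace α] [TopologicalSpace β]
    (e : α ≃ₜ β) {s : Set α} (hs : Dense s) : Dense (e '' s) := by
  rw [dense_iff_closure_eq, ← Homeomorph.image_closure, hs.closure_eq, Set.image_univ,
    ← Set.range_eq_univ.mpr e.surjective]

/-- **Main construction** (infinite case): any minimal homeomorphism of an infinite
nonempty compact metrizable space is a factor of a minimal Cantor system. -/
lemma main_infinite {X : Type*} [TopologicalSpace X] [Nonempty X] [CompactSpace X]
    [TopologicalSpace.MetrizableSpace X] [Infinite X]
    (ψ : X ≃ₜ X) (hmin : IsMinimalHomeo ψ) :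
    ∃ (M : Type) (_ : TopologicalSpace M) (σ : M ≃ₜ M) (p : M → X),
      IsCantorSpace M ∧ IsMinimalHomeo σ ∧ Continuous p ∧ Function.Surjective p ∧
        ∀ m, p (σ m) = ψ (p m) := by
  classical
  letI : MetricSpace X := TopologicalSpace.metrizableSpaceMetric X
  obtain ⟨K, q, hKcl, hqc, hqs⟩ := exists_cantor_closed_surjection X
  haveI : CompactSpace ↥K := isCompact_iff_compactSpace.mp hKcl.isCompact
  -- the transition relation
  set R : Set ((ℕ → Bool) × (ℕ → Bool)) :=
    (fun uv : ↥K × ↥K => ((uv.1 : ℕ → Bool), (uv.2 : ℕ → Bool))) ''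
      {uv : ↥K × ↥K | q uv.2 = ψ (q uv.1)} with hR_def
  have hRcl : IsClosed R := by
    have h1 : IsClosed {uv : ↥K × ↥K | q uv.2 = ψ (q uv.1)} :=
      isClosed_eq (hqc.comp continuous_snd) (ψ.continuous.comp (hqc.comp continuous_fst))
    exact (h1.isCompact.image
      ((continuous_subtype_val.comp continuous_fst).prodMk
        (continuous_subtype_val.comp continuous_snd))).isClosed
  have hRmem : ∀ a b : ↥K, q b = ψ (q a) → ((a : ℕ → Bool), (b : ℕ → Bool)) ∈ R :=
    fun a b h => ⟨(a, b), h, rfl⟩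
  have hRK : ∀ a b : ℕ → Bool, (a, b) ∈ R → a ∈ K ∧ b ∈ K := by
    rintro a b ⟨⟨u, v⟩, _, heq⟩
    obtain ⟨h1, h2⟩ := Prod.mk.injEq .. ▸ heq
    exact ⟨h1 ▸ u.2, h2 ▸ v.2⟩
  have hRq : ∀ (a b : ℕ → Bool) (hab : (a, b) ∈ R) (ha : a ∈ K) (hb : b ∈ K),
      q ⟨b, hb⟩ = ψ (q ⟨a, ha⟩) := by
    rintro a b ⟨⟨u, v⟩, hq, heq⟩ ha hb
    obtain ⟨h1, h2⟩ := Prod.mk.injEq .. ▸ heq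
    have hu : (⟨a, ha⟩ : ↥K) = u := Subtype.ext h1.symm
    have hv : (⟨b, hb⟩ : ↥K) = v := Subtype.ext h2.symm
    rw [hu, hv]
    exact hq
  -- the shift on Ω = ℤ → (ℕ → Bool)
  set S : (ℤ → ℕ → Bool) ≃ₜ (ℤ → ℕ → Bool) :=
    { toFun := fun c n => c (n + 1)
      invFun := fun c n => c (n - 1)
      left_inv := fun c => funext fun n => by
        show c (n - 1 + 1) = c n
        rw [sub_add_cancel]
      right_inv := fun c => funext fun n => by
        show c (n + 1 - 1) = c n
        rw [add_sub_cancel_right]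
      continuous_toFun := continuous_pi fun n => continuous_apply (n + 1)
      continuous_invFun := continuous_pi fun n => continuous_apply (n - 1) } with hS_def
  have hS_apply : ∀ (c : ℤ → ℕ → Bool) (n : ℤ), S c n = c (n + 1) := fun _ _ => rfl
  -- the subshift
  set M₀ : Set (ℤ → ℕ → Bool) := {c | ∀ n : ℤ, (c n, c (n + 1)) ∈ R} with hM₀_def
  have hM₀cl : IsClosed M₀ := by
    have : M₀ = ⋂ n : ℤ, (fun c : ℤ → ℕ → Bool => (c n, c (n + 1))) ⁻¹' R := by
      ext c; simp [hM₀_def]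
    rw [this]
    exact isClosed_iInter fun n =>
      hRcl.preimage ((continuous_apply n).prodMk (continuous_apply (n + 1)))
  have hψsucc : ∀ (n : ℤ) (x : X), (ψ ^ (n + 1)) x = ψ ((ψ ^ n) x) :=
    fun n x => homeo_zpow_succ_apply ψ n x
  have hM₀ne : M₀.Nonempty := by
    obtain ⟨x₀⟩ := (inferInstance : Nonempty X)
    have hg : ∀ n : ℤ, ∃ k : ↥K, q k = (ψ ^ n) x₀ := fun n => hqs ((ψ ^ n) x₀)
    choose g hgq using hg
    refine ⟨fun n => (g n : ℕ → Bool), fun n => ?_⟩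
    refine hRmem (g n) (g (n + 1)) ?_
    rw [hgq n, hgq (n + 1), hψsucc]
  have hmem_shift : ∀ c, c ∈ M₀ → S c ∈ M₀ := by
    intro c hc n
    exact hc (n + 1)
  have hmem_shift' : ∀ c, S c ∈ M₀ → c ∈ M₀ := by
    intro c hc n
    have h := hc (n - 1)
    rw [hS_apply, hS_apply, sub_add_cancel] at h
    exact h
  have hM₀inv : S '' M₀ = M₀ := by
    apply Set.eq_of_subset_of_subset
    · rintro y ⟨c, hc, rfl⟩; exact hmem_shift c hc
    · intro y hy
      refine ⟨S.symm y, ?_, S.apply_symm_apply y⟩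
      apply hmem_shift'
      rw [S.apply_symm_apply]
      exact hy
  -- Zorn: a minimal subsystem
  set 𝒮 : Set (Set (ℤ → ℕ → Bool)) :=
    {A | A ⊆ M₀ ∧ A.Nonempty ∧ IsClosed A ∧ S '' A = A} with h𝒮_def
  have hM₀𝒮 : M₀ ∈ 𝒮 := ⟨subset_rfl, hM₀ne, hM₀cl, hM₀inv⟩
  obtain ⟨M', hM'M₀, hM'min⟩ := zorn_superset_nonempty 𝒮 (by
    intro c hc𝒮 hchain hcne
    haveI : Nonempty ↥c := hcne.to_subtype
    refine ⟨⋂₀ c, ⟨?_, ?_, ?_, ?_⟩, fun s hs => Set.sInter_subset_of_mem hs⟩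
    · obtain ⟨A, hA⟩ := hcne
      exact (Set.sInter_subset_of_mem hA).trans (hc𝒮 hA).1
    · have hdir : DirectedOn (· ⊇ ·) c := by
        intro A hA B hB
        rcases eq_or_ne A B with rfl | hne
        · exact ⟨A, hA, subset_rfl, subset_rfl⟩
        · rcases hchain hA hB hne with h | h
          · exact ⟨A, hA, subset_rfl, h⟩
          · exact ⟨B, hB, h, subset_rfl⟩
      exact IsCompact.nonempty_sInter_of_directed_nonempty_isCompact_isClosed
        hdir (fun U hU => (hc𝒮 hU).2.1)
        (fun U hU => (hc𝒮 hU).2.2.1.isCompact) (fun U hU => (hc𝒮 hU).2.2.1)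
    · exact isClosed_sInter fun U hU => (hc𝒮 hU).2.2.1
    · ext y
      rw [homeo_mem_image]
      simp only [Set.mem_sInter]
      constructor
      · intro h A hA
        rw [← (hc𝒮 hA).2.2.2, homeo_mem_image]
        exact h A hA
      · intro h A hA
        have := h A hA
        rw [← (hc𝒮 hA).2.2.2, homeo_mem_image] at this
        exact this) M₀ hM₀𝒮
  have hM'𝒮 : M' ∈ 𝒮 := hM'min.prop
  obtain ⟨hM'sub, hM'ne, hM'cl, hM'inv⟩ := hM'𝒮
  haveI : CompactSpace ↥M' := isCompact_iff_compactSpace.mp hM'cl.isCompact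
  haveI : Nonempty ↥M' := hM'ne.to_subtype
  -- the restricted shift
  have hSmem : ∀ m : ↥M', S (m : ℤ → ℕ → Bool) ∈ M' := by
    intro m
    have := Set.mem_image_of_mem S m.2
    rwa [hM'inv] at this
  have hSmem' : ∀ m : ↥M', S.symm (m : ℤ → ℕ → Bool) ∈ M' := by
    intro m
    have : (m : ℤ → ℕ → Bool) ∈ S '' M' := hM'inv.symm ▸ m.2
    rwa [homeo_mem_image] at this
  set σ : ↥M' ≃ₜ ↥M' :=
    { toFun := fun m => ⟨S (m : ℤ → ℕ → Bool), hSmem m⟩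
      invFun := fun m => ⟨S.symm (m : ℤ → ℕ → Bool), hSmem' m⟩
      left_inv := fun m => Subtype.ext (S.symm_apply_apply _)
      right_inv := fun m => Subtype.ext (S.apply_symm_apply _)
      continuous_toFun := (S.continuous.comp continuous_subtype_val).subtype_mk _
      continuous_invFun :=
        (S.symm.continuous.comp continuous_subtype_val).subtype_mk _ } with hσ_def
  have hσ_apply : ∀ m : ↥M', (σ m : ℤ → ℕ → Bool) = S (m : ℤ → ℕ → Bool) := fun _ => rfl
  -- compatibility of powers
  have hσpow : ∀ (n : ℤ) (m : ↥M'), ((σ ^ n) m : ℤ → ℕ → Bool) = (S ^ n) (m : ℤ → ℕ → Bool) :=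
    equivariant_zpow σ S Subtype.val hσ_apply
  -- minimality of the subshift
  have hσmin : IsMinimalHomeo σ := by
    intro m
    set A : Set (ℤ → ℕ → Bool) :=
      closure (Set.range fun n : ℤ => (S ^ n) (m : ℤ → ℕ → Bool)) with hA_def
    have hAsub : A ⊆ M' := by
      apply closure_minimal _ hM'cl
      rintro y ⟨n, rfl⟩
      show (S ^ n) (m : ℤ → ℕ → Bool) ∈ M'
      rw [← hσpow n m]
      exact ((σ ^ n) m).2
    have hA𝒮 : A ∈ 𝒮 := by
      refine ⟨hAsub.trans hM'sub, ⟨(m : ℤ → ℕ → Bool), subset_closure ⟨0,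
        show (S ^ (0:ℤ)) (m : ℤ → ℕ → Bool) = (m : ℤ → ℕ → Bool) by
          rw [zpow_zero, homeo_one_apply]⟩⟩, isClosed_closure, ?_⟩
      have hrange : S '' (Set.range fun n : ℤ => (S ^ n) (m : ℤ → ℕ → Bool)) =
          Set.range fun n : ℤ => (S ^ n) (m : ℤ → ℕ → Bool) := by
        rw [← Set.range_comp]
        apply Set.eq_of_subset_of_subset
        · rintro y ⟨n, rfl⟩
          exact ⟨n + 1, homeo_zpow_succ_apply S n _⟩
        · rintro y ⟨n, rfl⟩
          refine ⟨n - 1, ?_⟩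
          show S ((S ^ (n - 1)) (m : ℤ → ℕ → Bool)) = (S ^ n) (m : ℤ → ℕ → Bool)
          rw [← homeo_zpow_succ_apply, sub_add_cancel]
      rw [hA_def, Homeomorph.image_closure, hrange]
    have hAM' : A = M' := subset_antisymm hAsub (hM'min.2 hA𝒮 hAsub)
    rw [dense_iff_closure_eq]
    apply Set.eq_of_subset_of_subset (Set.subset_univ _)
    intro z _
    have hz : (z : ℤ → ℕ → Bool) ∈ closure
        (Subtype.val '' (Set.range fun n : ℤ => (σ ^ n) m)) := by
      have himg : Subtype.val '' (Set.range fun n : ℤ => (σ ^ n) m) =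
          Set.range fun n : ℤ => (S ^ n) (m : ℤ → ℕ → Bool) := by
        rw [← Set.range_comp]
        apply Set.eq_of_subset_of_subset
        · rintro y ⟨n, rfl⟩
          exact ⟨n, (hσpow n m).symm⟩
        · rintro y ⟨n, rfl⟩
          exact ⟨n, hσpow n m⟩
      rw [himg, ← hA_def, hAM']
      exact z.2
    rw [Topology.IsInducing.subtypeVal.closure_eq_preimage_closure_image]
    exact hz
  -- the factor map
  have hmemK : ∀ (m : ↥M') (n : ℤ), (m : ℤ → ℕ → Bool) n ∈ K :=
    fun m n => (hRK _ _ (hM'sub m.2 n)).1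
  set p : ↥M' → X := fun m => q ⟨(m : ℤ → ℕ → Bool) 0, hmemK m 0⟩ with hp_def
  have hpc : Continuous p :=
    hqc.comp (((continuous_apply (0 : ℤ)).comp continuous_subtype_val).subtype_mk _)
  have hpequiv : ∀ m : ↥M', p (σ m) = ψ (p m) := by
    intro m
    have h := hM'sub m.2 0
    have := hRq _ _ h (hRK _ _ h).1 (hRK _ _ h).2
    exact this
  -- surjectivity of the factor map
  have hpzpow : ∀ (n : ℤ) (m : ↥M'), p ((σ ^ n) m) = (ψ ^ n) (p m) :=
    equivariant_zpow σ ψ p hpequiv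
  have hpsurj : Function.Surjective p := by
    rw [← Set.range_eq_univ]
    have hcl : IsClosed (Set.range p) := (isCompact_range hpc).isClosed
    obtain ⟨m₀⟩ := (inferInstance : Nonempty ↥M')
    have hsub : Set.range (fun n : ℤ => (ψ ^ n) (p m₀)) ⊆ Set.range p := by
      rintro y ⟨n, rfl⟩
      exact ⟨(σ ^ n) m₀, hpzpow n m₀⟩
    have hdense : Dense (Set.range p) := Dense.mono hsub (hmin (p m₀))
    rw [← hcl.closure_eq]
    exact hdense.closure_eq
  -- the Cantor property
  have hcantor : IsCantorSpace ↥M' := by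
    set K' : Set (ℕ → Bool) := theta '' M' with hK'_def
    have hK'cl : IsClosed K' := (hM'cl.isCompact.image theta.continuous).isClosed
    have hK'ne : K'.Nonempty := hM'ne.image theta
    have hperf : ∀ x ∈ K', ∀ n : ℕ, ∃ y ∈ K', y ≠ x ∧ Agr n y x := by
      by_contra hcon
      push_neg at hcon
      obtain ⟨x, hx, n, hn⟩ := hcon
      -- x is an isolated point of K', hence M' has an isolated point
      set U : Set (ℕ → Bool) := {y | Agr n y x} with hU_def
      have hUopen : IsOpen U := by
        have : U = ⋂ i : Fin n, {y : ℕ → Bool | y (i : ℕ) = x (i : ℕ)} := by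
          ext y
          simp only [hU_def, Set.mem_iInter, Set.mem_setOf_eq]
          exact ⟨fun h i => h i i.2, fun h i hi => h ⟨i, hi⟩⟩
        rw [this]
        refine isOpen_iInter_of_finite fun i => ?_
        have heq : {y : ℕ → Bool | y (i : ℕ) = x (i : ℕ)} =
            (fun y : ℕ → Bool => y (i : ℕ)) ⁻¹' {x (i : ℕ)} := rfl
        rw [heq]
        exact IsOpen.preimage (continuous_apply (i : ℕ))
          (isOpen_discrete ({x (i : ℕ)} : Set Bool))
      obtain ⟨c, hc, rfl⟩ := hx
      have hsingle : {z : ↥M' | theta (z : ℤ → ℕ → Bool) ∈ U} = {⟨c, hc⟩} := by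
        apply Set.eq_of_subset_of_subset
        · intro z hz
          have hzK' : theta (z : ℤ → ℕ → Bool) ∈ K' := ⟨z, z.2, rfl⟩
          have := hn _ hzK'
          rcases eq_or_ne (theta (z : ℤ → ℕ → Bool)) (theta c) with heq | hne2
          · have : (z : ℤ → ℕ → Bool) = c := theta.injective heq
            exact Set.mem_singleton_iff.mpr (Subtype.ext this)
          · exact absurd hz (this hne2)
        · intro z hz
          rw [Set.mem_singleton_iff.mp hz]
          exact fun i hi => rfl
      have hopen : IsOpen ({(⟨c, hc⟩ : ↥M')} : Set ↥M') := by
        rw [← hsingle]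
        exact (hUopen.preimage theta.continuous).preimage continuous_subtype_val
      haveI hfin : Finite ↥M' := finite_of_minimal_isolated σ hσmin _ hopen
      haveI : Finite X := Finite.of_surjective p hpsurj
      exact not_finite X
    obtain ⟨h1⟩ := cantor_homeo K' hK'cl hK'ne hperf
    exact ⟨(theta.image M').trans h1⟩
  exact ⟨↥M', inferInstance, σ, p, hcantor, hσmin, hpc, hpsurj, hpequiv⟩

end Dynamics

end CantorAux

/-- Every minimal homeomorphism of a nonempty compact metrizable space is a
factor of a minimal Cantor system. -/
theorem factor_of_minimal_cantor_system {X : Type*} [TopologicalSpace X] [Nonempty X]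
    [CompactSpace X] [TopologicalSpace.MetrizableSpace X]
    (ψ : X ≃ₜ X) (hmin : IsMinimalHomeo ψ) :
    ∃ (M : Type) (_ : TopologicalSpace M) (σ : M ≃ₜ M) (p : M → X),
      IsCantorSpace M ∧ IsMinimalHomeo σ ∧ Continuous p ∧ Function.Surjective p ∧
        ∀ m, p (σ m) = ψ (p m) := by
  classical
  by_cases hfin : Finite X
  case neg =>
    haveI : Infinite X := not_finite_iff_infinite.mp hfin
    exact CantorAux.main_infinite ψ hmin
  case pos =>
    haveI := hfin
    letI : MetricSpace X := TopologicalSpace.metrizableSpaceMetric X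
    haveI : Fact ((0:ℝ) < 1) := ⟨one_pos⟩
    -- transitivity of the finite minimal system
    have htrans : ∀ x y : X, ∃ k : ℤ, (ψ ^ k) x = y := by
      intro x y
      have hfr : (Set.range fun n : ℤ => (ψ ^ n) x).Finite := Set.toFinite _
      have huniv : Set.range (fun n : ℤ => (ψ ^ n) x) = Set.univ := by
        rw [← hfr.isClosed.closure_eq]
        exact (hmin x).closure_eq
      show y ∈ Set.range fun n : ℤ => (ψ ^ n) x
      rw [huniv]
      exact Set.mem_univ y
    obtain ⟨x₀⟩ := (inferInstance : Nonempty X)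
    -- a nonzero period
    obtain ⟨a, b, hab, habeq⟩ := Finite.exists_ne_map_eq_of_infinite (fun k : ℤ => (ψ ^ k) x₀)
    set N : ℤ := b - a with hN_def
    have hN0 : N ≠ 0 := sub_ne_zero_of_ne (Ne.symm hab)
    have hper : ∀ x : X, (ψ ^ N) x = x := by
      have h1 : (ψ ^ N) ((ψ ^ a) x₀) = (ψ ^ b) x₀ := by
        rw [← homeo_zpow_add_apply, sub_add_cancel]
      rw [habeq] at h1
      intro x
      obtain ⟨k, rfl⟩ := htrans ((ψ ^ b) x₀) x
      rw [← homeo_zpow_add_apply, add_comm, homeo_zpow_add_apply, h1]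
    have hperneg : ∀ x : X, (ψ ^ (-N)) x = x := by
      intro x
      have := CantorAux.homeo_zpow_neg_cancel ψ N x
      rwa [hper x] at this
    have hper_mul : ∀ (j : ℤ) (x : X), (ψ ^ (j * N)) x = x := by
      intro j
      induction j using Int.induction_on with
      | zero => intro x; rw [zero_mul, zpow_zero, homeo_one_apply]
      | succ k ih =>
        intro x
        rw [show ((k:ℤ) + 1) * N = k * N + N by ring,
          homeo_zpow_add_apply, hper x, ih x]
      | pred k ih =>
        intro x
        rw [show (-(k:ℤ) - 1) * N = (-k) * N + (-N) by ring,
          homeo_zpow_add_apply, hperneg x, ih x]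
    -- the circle rotation by √2
    set cmap : ℝ →+ AddCircle (1:ℝ) :=
      QuotientAddGroup.mk' (AddSubgroup.zmultiples (1:ℝ)) with hcmap_def
    have hcmap_cont : Continuous cmap := AddCircle.continuous_mk' 1
    have hcmap_surj : Function.Surjective cmap := QuotientAddGroup.mk'_surjective _
    set cτ : AddCircle (1:ℝ) := cmap (Real.sqrt 2) with hcτ_def
    set rot : AddCircle (1:ℝ) ≃ₜ AddCircle (1:ℝ) := Homeomorph.addLeft cτ with hrot_def
    have hrot_apply : ∀ t, rot t = cτ + t := fun t => rfl
    have hrot : ∀ (k : ℤ) (t : AddCircle (1:ℝ)), (rot ^ k) t = k • cτ + t := by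
      intro k
      induction k using Int.induction_on with
      | zero => intro t; rw [zpow_zero, homeo_one_apply, zero_zsmul, zero_add]
      | succ k ih =>
        intro t
        rw [CantorAux.homeo_zpow_succ_apply, ih t, hrot_apply, add_zsmul, one_zsmul]
        abel
      | pred k ih =>
        intro t
        apply rot.injective
        rw [← CantorAux.homeo_zpow_succ_apply, sub_add_cancel, ih t, hrot_apply,
          sub_zsmul, one_zsmul]
        abel
    -- the product system
    set Y := X × AddCircle (1:ℝ) with hY_def
    set ψY : Y ≃ₜ Y := ψ.prodCongr rot with hψY_def
    have hψY_apply : ∀ z : Y, ψY z = (ψ z.1, rot z.2) := fun z => rfl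
    have hYpow : ∀ (k : ℤ) (z : Y), (ψY ^ k) z = ((ψ ^ k) z.1, (rot ^ k) z.2) := by
      intro k z
      have h1 := CantorAux.equivariant_zpow ψY ψ Prod.fst (fun _ => rfl) k z
      have h2 := CantorAux.equivariant_zpow ψY rot Prod.snd (fun _ => rfl) k z
      exact Prod.ext h1 h2
    haveI : Infinite (AddCircle (1:ℝ)) := by
      haveI : Infinite (Set.Ico (0:ℝ) (0 + 1)) := Set.Ico.infinite (by norm_num)
      exact Infinite.of_injective _ (AddCircle.equivIco 1 0).symm.injective
    haveI : Infinite Y := Infinite.of_injective (fun t => ((x₀, t) : Y))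
      (fun s t h => by simpa using congrArg Prod.snd h)
    -- density of the N√2 subgroup
    have hNirr : Irrational ((N:ℝ) * Real.sqrt 2) := irrational_sqrt_two.intCast_mul hN0
    have hdense_sub :
        Dense ((AddSubgroup.closure {((N:ℝ) * Real.sqrt 2), 1} : AddSubgroup ℝ) : Set ℝ) := by
      rcases AddSubgroup.dense_or_cyclic
        (AddSubgroup.closure {((N:ℝ) * Real.sqrt 2), 1}) with h | ⟨g, hg⟩
      · exact h
      · exfalso
        have h1 : ((N:ℝ) * Real.sqrt 2) ∈ AddSubgroup.closure {((N:ℝ) * Real.sqrt 2), 1} :=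
          AddSubgroup.subset_closure (by simp)
        have h2 : (1:ℝ) ∈ AddSubgroup.closure {((N:ℝ) * Real.sqrt 2), 1} :=
          AddSubgroup.subset_closure (by simp)
        rw [hg, AddSubgroup.mem_closure_singleton] at h1 h2
        obtain ⟨mz, hm⟩ := h1
        obtain ⟨nz, hn2⟩ := h2
        have hnz0 : nz ≠ 0 := by
          rintro rfl
          rw [zero_zsmul] at hn2
          exact zero_ne_one hn2
        have key : (nz:ℝ) * ((N:ℝ) * Real.sqrt 2) = (mz:ℝ) := by
          calc (nz:ℝ) * ((N:ℝ) * Real.sqrt 2) = nz • ((N:ℝ) * Real.sqrt 2) :=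
                (zsmul_eq_mul _ _).symm
            _ = nz • (mz • g) := by rw [hm]
            _ = mz • (nz • g) := smul_comm nz mz g
            _ = mz • (1:ℝ) := by rw [hn2]
            _ = (mz:ℝ) := by rw [zsmul_eq_mul, mul_one]
        have hnzR : (nz:ℝ) ≠ 0 := Int.cast_ne_zero.mpr hnz0
        refine hNirr ⟨(mz : ℚ) / (nz : ℚ), ?_⟩
        push_cast
        rw [div_eq_iff hnzR, eq_comm, mul_comm ((N:ℝ) * Real.sqrt 2) (nz:ℝ)]
        exact key
    have hdense_img :
        Dense (⇑cmap '' ((AddSubgroup.closure {((N:ℝ) * Real.sqrt 2), 1} : AddSubgroup ℝ) : Set ℝ)) :=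
      (hcmap_surj.denseRange).dense_image hcmap_cont hdense_sub
    have hcmap_int : ∀ nn : ℤ, cmap (nn • (1:ℝ)) = 0 := by
      intro nn
      exact (QuotientAddGroup.eq_zero_iff _).2 (AddSubgroup.mem_zmultiples_iff.mpr ⟨nn, rfl⟩)
    have hNτ : ∀ mm : ℤ, cmap (mm • ((N:ℝ) * Real.sqrt 2)) = mm • (N • cτ) := by
      intro mm
      rw [AddMonoidHom.map_zsmul]
      congr 1
      rw [show (N:ℝ) * Real.sqrt 2 = N • Real.sqrt 2 by rw [zsmul_eq_mul],
        AddMonoidHom.map_zsmul]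
    have hdense_range : Dense (Set.range fun j : ℤ => j • (N • cτ)) := by
      refine Dense.mono ?_ hdense_img
      rintro _ ⟨r, hr, rfl⟩
      rw [SetLike.mem_coe, AddSubgroup.mem_closure_pair] at hr
      obtain ⟨mm, nn, rfl⟩ := hr
      refine ⟨mm, ?_⟩
      rw [map_add, hcmap_int nn, add_zero, hNτ mm]
    -- minimality of the product system
    have hYmin : IsMinimalHomeo ψY := by
      rintro ⟨x, t⟩
      rw [dense_iff_inter_open]
      rintro U hU ⟨⟨y, u⟩, hyu⟩
      obtain ⟨V, W, hV, hW, hyV, huW, hVW⟩ := isOpen_prod_iff.mp hU y u hyu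
      obtain ⟨k₀, hk₀⟩ := htrans x y
      -- the translated orbit on the circle is dense
      have hTdense : Dense (Set.range fun j : ℤ => (k₀ + j * N) • cτ + t) := by
        have h1 : Dense ((Homeomorph.addLeft (k₀ • cτ + t)) ''
            (Set.range fun j : ℤ => j • (N • cτ))) :=
          CantorAux.dense_homeo_image _ hdense_range
        refine Dense.mono ?_ h1
        rintro _ ⟨_, ⟨j, rfl⟩, rfl⟩
        refine ⟨j, ?_⟩
        show (k₀ + j * N) • cτ + t = (k₀ • cτ + t) + j • (N • cτ)
        rw [add_zsmul, mul_zsmul]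
        abel
      obtain ⟨w, ⟨j, rfl⟩, hwW⟩ := hTdense.exists_mem_open hW ⟨u, huW⟩
      set k : ℤ := k₀ + j * N with hk_def
      refine ⟨(ψY ^ k) (x, t), hVW ?_, ⟨k, rfl⟩⟩
      rw [hYpow]
      constructor
      · show (ψ ^ k) x ∈ V
        rw [hk_def, homeo_zpow_add_apply, hper_mul j x, hk₀]
        exact hyV
      · show (rot ^ k) t ∈ W
        rw [hrot k t]
        exact hwW
    -- conclude via the infinite case
    obtain ⟨M, tM, σM, p', hc, hm', hpc', hps', heq'⟩ := CantorAux.main_infinite ψY hYmin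
    refine ⟨M, tM, σM, fun m => (p' m).1, hc, hm', continuous_fst.comp hpc', ?_, ?_⟩
    · intro x
      obtain ⟨m, hm2⟩ := hps' ((x, 0) : Y)
      exact ⟨m, by show (p' m).1 = x; rw [hm2]⟩
    · intro m
      show (p' (σM m)).1 = ψ (p' m).1
      rw [heq' m, hψY_apply]
end

section
/- Let (X,φ) be a minimal Cantor system. If (X,φ) is not an odometer, then there exists a continuous map π : X → {0,1}^ℤ with π ∘ φ = σ ∘ π, where σ is the shift σ(y)(n) = y(n+1) on {0,1}^ℤ, such that the image π(X) is infinite. -/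
/-- We endow each `ZMod n` with the discrete topology. -/
instance zmodTopology (n : ℕ) : TopologicalSpace (ZMod n) := ⊥

/-- The underlying space of the odometer of type `a`: coherent sequences in `∏ ℤ/a_nℤ`. -/
def OdometerSystem (a : ℕ → ℕ) : Type :=
  {z : (n : ℕ) → ZMod (a n) // ∀ n, (ZMod.cast (z (n + 1)) : ZMod (a n)) = z n}

instance (a : ℕ → ℕ) : TopologicalSpace (OdometerSystem a) :=
  inferInstanceAs (TopologicalSpace
    {z : (n : ℕ) → ZMod (a n) // ∀ n, (ZMod.cast (z (n + 1)) : ZMod (a n)) = z n})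

/-- A Cantor system is an *odometer* if it is conjugate to the `+1` map on the odometer of
some type `a`, where `a n ≥ 2`, `a n ∣ a (n+1)` and `a n < a (n+1)` for all `n`. -/
def IsOdometer {X : Type*} [TopologicalSpace X] (φ : X ≃ₜ X) : Prop :=
  ∃ a : ℕ → ℕ, (∀ n, 2 ≤ a n) ∧ (∀ n, a n ∣ a (n + 1)) ∧ (∀ n, a n < a (n + 1)) ∧
    ∃ h : X ≃ₜ OdometerSystem a, ∀ (x : X) (n : ℕ), (h (φ x)).val n = (h x).val n + 1

section OdometerAux

instance zmodDiscrete (n : ℕ) : DiscreteTopology (ZMod n) := ⟨rfl⟩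

variable {X : Type*} [TopologicalSpace X]

/-- A bundled cyclic factor map: a continuous equivariant map onto the `p`-cycle,
normalized at a base point. -/
structure CycSys (φ : X ≃ₜ X) (x0 : X) where
  p : ℕ
  hp : 0 < p
  c : X → ZMod p
  cont : Continuous c
  step : ∀ x, c (φ x) = c x + 1
  base : c x0 = 0

variable {φ : X ≃ₜ X} {x0 : X}

lemma CycSys.czpow (A : CycSys φ x0) (n : ℤ) : A.c ((φ ^ n) x0) = (n : ZMod A.p) := by
  induction n using Int.induction_on with
  | zero => simpa using A.base
  | succ n ih =>
      have h1 : (φ ^ ((n : ℤ) + 1)) x0 = φ ((φ ^ (n : ℤ)) x0) := by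
        rw [add_comm, homeo_zpow_add_apply, zpow_one]
      rw [h1, A.step, ih]; push_cast; ring
  | pred n ih =>
      have h1 : φ ((φ ^ (-(n : ℤ) - 1)) x0) = (φ ^ (-(n : ℤ))) x0 := by
        have h2 := homeo_zpow_add_apply φ 1 (-(n : ℤ) - 1) x0
        rw [zpow_one] at h2
        rw [← h2]; norm_num
      have h3 := A.step ((φ ^ (-(n : ℤ) - 1)) x0)
      rw [h1, ih] at h3
      have h4 : A.c ((φ ^ (-(n : ℤ) - 1)) x0) = ((-(n : ℤ) - 1 : ℤ) : ZMod A.p) := by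
        push_cast at h3 ⊢
        linear_combination -h3
      exact h4

lemma CycSys.surj (A : CycSys φ x0) : Function.Surjective A.c := by
  haveI : NeZero A.p := ⟨A.hp.ne'⟩
  intro j
  refine ⟨(φ ^ ((j.val : ℕ) : ℤ)) x0, ?_⟩
  rw [A.czpow]
  push_cast
  rw [ZMod.natCast_val, ZMod.cast_id]

/-- Key extraction lemma: a continuous equivariant map with finite range into a
Hausdorff space factors the minimal system onto a finite cycle refining its fibers. -/
lemma exists_cyc {F : Type*} [TopologicalSpace F] [T2Space F]
    (hdense : Dense (Set.range fun n : ℤ => (φ ^ n) x0))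
    (s : Equiv.Perm F) (f : X → F) (hc : Continuous f)
    (hfin : (Set.range f).Finite) (heq : ∀ x, f (φ x) = s (f x)) :
    ∃ A : CycSys φ x0, ∀ x y, A.c x = A.c y → f x = f y := by
  classical
  have key : ∀ (n : ℤ) (x : X), f ((φ ^ n) x) = (s ^ n) (f x) := by
    intro n
    induction n using Int.induction_on with
    | zero => intro x; simp
    | succ n ih =>
        intro x
        have h1 : (φ ^ ((n : ℤ) + 1)) x = φ ((φ ^ (n : ℤ)) x) := by
          rw [add_comm, homeo_zpow_add_apply, zpow_one]
        have h2 : (s ^ ((n : ℤ) + 1)) = s * s ^ (n : ℤ) := by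
          rw [add_comm, zpow_add, zpow_one]
        rw [h1, heq, ih, h2, Equiv.Perm.mul_apply]
    | pred n ih =>
        intro x
        have h1 : φ ((φ ^ (-(n : ℤ) - 1)) x) = (φ ^ (-(n : ℤ))) x := by
          have h2 := homeo_zpow_add_apply φ 1 (-(n : ℤ) - 1) x
          rw [zpow_one] at h2
          rw [← h2]; norm_num
        have h3 : s ((s ^ (-(n : ℤ) - 1)) (f x)) = (s ^ (-(n : ℤ))) (f x) := by
          have h4 : s * s ^ (-(n : ℤ) - 1) = s ^ (-(n : ℤ)) := by
            rw [← zpow_one_add]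
            congr 1
            ring
          rw [← h4, Equiv.Perm.mul_apply]
        have h5 := heq ((φ ^ (-(n : ℤ) - 1)) x)
        rw [h1, ih] at h5
        have h6 : (s ^ (-(n : ℤ) - 1)) (f x) = f ((φ ^ (-(n : ℤ) - 1)) x) := by
          apply s.injective
          rw [← h5, h3]
        exact h6.symm
  set v0 := f x0 with hv0
  have comp : ∀ (a b : ℤ) (v : F), (s ^ a) ((s ^ b) v) = (s ^ (a + b)) v := by
    intro a b v
    rw [zpow_add]
    exact (Equiv.Perm.mul_apply _ _ _).symm
  have hshift : ∀ a b : ℤ, (s ^ a) v0 = (s ^ b) v0 ↔ (s ^ (a - b)) v0 = v0 := by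
    intro a b
    constructor
    · intro h
      have h1 := congrArg (s ^ (-b) : Equiv.Perm F) h
      rw [comp, comp] at h1
      rw [show -b + a = a - b by ring, show -b + b = 0 by ring] at h1
      simpa using h1
    · intro h
      have h1 := congrArg (s ^ b : Equiv.Perm F) h
      rw [comp, show b + (a - b) = a by ring] at h1
      exact h1
  set O : Set F := Set.range (fun n : ℤ => (s ^ n) v0) with hO
  have hOsub : O ⊆ Set.range f := by
    rintro _ ⟨n, rfl⟩
    exact ⟨(φ ^ n) x0, key n x0⟩
  have hOfin : O.Finite := hfin.subset hOsub
  have hper : v0 ∈ Function.periodicPts (s • ·) := by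
    haveI := hOfin.to_subtype
    obtain ⟨m, n, hmn, h⟩ := Finite.exists_ne_map_eq_of_infinite
      (fun n : ℕ => (⟨(s ^ (n : ℤ)) v0, ⟨n, rfl⟩⟩ : O))
    have h' : ((s ^ (m : ℤ)) v0 : F) = (s ^ (n : ℤ)) v0 := congrArg Subtype.val h
    have hkey : ∀ m n : ℕ, m < n → ((s ^ (m : ℤ)) v0 : F) = (s ^ (n : ℤ)) v0 →
        v0 ∈ Function.periodicPts (s • ·) := by
      intro m n hlt hh
      refine Function.mk_mem_periodicPts (by omega : 0 < n - m) ?_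
      show (s • ·)^[n - m] v0 = v0
      rw [smul_iterate]
      show (s ^ (n - m)) v0 = v0
      have h1 : (s ^ (n - m)) v0 = (s ^ (((n - m : ℕ) : ℤ))) v0 := by
        rw [zpow_natCast]
      rw [h1, show (((n - m : ℕ) : ℤ)) = (n : ℤ) - (m : ℤ) by omega]
      exact (hshift _ _).1 hh.symm
    rcases hmn.lt_or_gt with hlt | hlt
    · exact hkey m n hlt h'
    · exact hkey n m hlt h'.symm
  set p := Function.minimalPeriod (s • ·) v0 with hpdef
  have hp : 0 < p := Function.minimalPeriod_pos_of_mem_periodicPts hper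
  have keyZ : ∀ k : ℤ, (s ^ k) v0 = v0 ↔ (p : ℤ) ∣ k := by
    intro k
    have h := MulAction.zpow_smul_eq_iff_minimalPeriod_dvd (a := s) (b := v0) (n := k)
    exact h
  have key2 : ∀ m n : ℤ, (s ^ m) v0 = (s ^ n) v0 ↔ ((m : ZMod p) = (n : ZMod p)) := by
    intro m n
    rw [hshift m n, keyZ, ZMod.intCast_eq_intCast_iff, Int.modEq_iff_dvd]
    exact dvd_sub_comm
  -- every value of f lies in the orbit O
  have hcover : ∀ x : X, ∃ n : ℤ, f x = (s ^ n) v0 := by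
    have hWclosed : IsClosed (f ⁻¹' O) := (hOfin.isClosed).preimage hc
    have hWsub : Set.range (fun n : ℤ => (φ ^ n) x0) ⊆ f ⁻¹' O := by
      rintro _ ⟨n, rfl⟩
      exact ⟨n, (key n x0).symm⟩
    have hWuniv : (f ⁻¹' O) = Set.univ := by
      apply Set.eq_univ_of_univ_subset
      rw [← hdense.closure_eq]
      exact closure_minimal hWsub hWclosed
    intro x
    have hx : f x ∈ O := by
      have hx' : x ∈ f ⁻¹' O := by rw [hWuniv]; trivial
      exact hx'
    obtain ⟨n, hn⟩ := hx
    exact ⟨n, hn.symm⟩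
  choose nn hnn using hcover
  haveI : NeZero p := ⟨hp.ne'⟩
  set c : X → ZMod p := fun x => ((nn x : ℤ) : ZMod p) with hcdef
  have cspec : ∀ (x : X) (n : ℤ), c x = (n : ZMod p) ↔ f x = (s ^ n) v0 := by
    intro x n
    constructor
    · intro h
      rw [hnn x]
      exact (key2 _ _).2 h
    · intro h
      have h2 : (s ^ (nn x)) v0 = (s ^ n) v0 := by rw [← hnn x, h]
      exact (key2 _ _).1 h2
  have hfibers : ∀ j : ZMod p, c ⁻¹' {j} = f ⁻¹' {(s ^ ((j.val : ℕ) : ℤ)) v0} := by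
    intro j
    ext x
    simp only [Set.mem_preimage, Set.mem_singleton_iff]
    rw [← cspec x]
    have hj : (((j.val : ℕ) : ℤ) : ZMod p) = j := by
      push_cast
      rw [ZMod.natCast_val, ZMod.cast_id]
    rw [hj]
  have hopenfib : ∀ v : F, IsOpen (f ⁻¹' {v}) := by
    intro v
    have h1 : f ⁻¹' {v} = (f ⁻¹' (Set.range f \ {v}))ᶜ := by
      ext x
      simp only [Set.mem_preimage, Set.mem_compl_iff, Set.mem_diff, Set.mem_singleton_iff]
      have hm : f x ∈ Set.range f := Set.mem_range_self x
      tauto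
    rw [h1]
    exact (((Set.Finite.diff hfin : (Set.range f \ {v}).Finite).isClosed).preimage hc).isOpen_compl
  have hccont : Continuous c :=
    continuous_discrete_rng.2 (fun j => by rw [hfibers j]; exact hopenfib _)
  have hstep : ∀ x, c (φ x) = c x + 1 := by
    intro x
    have h1 : f (φ x) = (s ^ ((nn x : ℤ) + 1)) v0 := by
      rw [heq, hnn x, show (nn x : ℤ) + 1 = 1 + nn x by ring, ← comp 1 (nn x) v0, zpow_one]
    have h2 : c (φ x) = (((nn x : ℤ) + 1 : ℤ) : ZMod p) := (cspec _ _).2 h1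
    rw [h2]
    push_cast
    rfl
  have hbase : c x0 = 0 := by
    have h1 : f x0 = (s ^ (0 : ℤ)) v0 := by simp [hv0]
    have h2 := (cspec x0 0).2 h1
    simpa using h2
  refine ⟨⟨p, hp, c, hccont, hstep, hbase⟩, ?_⟩
  intro x y h
  rw [hnn x, hnn y]
  exact (key2 _ _).2 h

/-- Joining two cyclic factor maps. -/
lemma cyc_join (hdense : Dense (Set.range fun n : ℤ => (φ ^ n) x0))
    (A B : CycSys φ x0) :
    ∃ C : CycSys φ x0, A.p ∣ C.p ∧ B.p ∣ C.p ∧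
      ∀ x y, C.c x = C.c y → A.c x = A.c y ∧ B.c x = B.c y := by
  haveI : NeZero A.p := ⟨A.hp.ne'⟩
  haveI : NeZero B.p := ⟨B.hp.ne'⟩
  set s : Equiv.Perm (ZMod A.p × ZMod B.p) := Equiv.addRight ((1, 1) : ZMod A.p × ZMod B.p)
    with hs
  set f : X → ZMod A.p × ZMod B.p := fun x => (A.c x, B.c x) with hf
  have hc : Continuous f := A.cont.prodMk B.cont
  have hfin : (Set.range f).Finite := Set.toFinite _
  have heq : ∀ x, f (φ x) = s (f x) := by
    intro x
    show (A.c (φ x), B.c (φ x)) = (A.c x, B.c x) + (1, 1)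
    rw [A.step, B.step]
    rfl
  obtain ⟨C, hC⟩ := exists_cyc hdense s f hc hfin heq
  have hdvd : ∀ (D : CycSys φ x0), (∀ x y, C.c x = C.c y → D.c x = D.c y) → D.p ∣ C.p := by
    intro D href
    have h0 : C.c ((φ ^ (C.p : ℤ)) x0) = C.c x0 := by
      rw [C.czpow, C.base]
      push_cast
      rw [ZMod.natCast_self]
    have h1 := href _ _ h0
    rw [D.czpow, D.base] at h1
    have h2 : ((C.p : ℤ) : ZMod D.p) = 0 := h1
    rw [ZMod.intCast_zmod_eq_zero_iff_dvd] at h2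
    exact_mod_cast h2
  refine ⟨C, ?_, ?_, fun x y h => ?_⟩
  · exact hdvd A (fun x y h => congrArg Prod.fst (hC x y h))
  · exact hdvd B (fun x y h => congrArg Prod.snd (hC x y h))
  · exact ⟨congrArg Prod.fst (hC x y h), congrArg Prod.snd (hC x y h)⟩

/-- Coherence: reduction between cyclic factor maps with dividing periods. -/
lemma cyc_cast (hdense : Dense (Set.range fun n : ℤ => (φ ^ n) x0))
    (A B : CycSys φ x0) (hd : B.p ∣ A.p) (x : X) :
    (ZMod.cast (A.c x) : ZMod B.p) = B.c x := by
  have hcl : IsClosed {x : X | (ZMod.cast (A.c x) : ZMod B.p) = B.c x} := by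
    have h1 : Continuous fun x : X => (ZMod.cast (A.c x) : ZMod B.p) :=
      Continuous.comp continuous_of_discreteTopology A.cont
    exact isClosed_eq h1 B.cont
  have hsub : Set.range (fun n : ℤ => (φ ^ n) x0) ⊆
      {x : X | (ZMod.cast (A.c x) : ZMod B.p) = B.c x} := by
    rintro _ ⟨n, rfl⟩
    show (ZMod.cast (A.c ((φ ^ n) x0)) : ZMod B.p) = B.c ((φ ^ n) x0)
    rw [A.czpow, B.czpow, ← ZMod.castHom_apply (h := hd), map_intCast]
  have huniv : {x : X | (ZMod.cast (A.c x) : ZMod B.p) = B.c x} = Set.univ := by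
    apply Set.eq_univ_of_univ_subset
    rw [← hdense.closure_eq]
    exact closure_minimal hsub hcl
  have := Set.eq_univ_iff_forall.1 huniv x
  exact this

/-- If a refinement between cyclic factor maps has equal period, it is an equivalence. -/
lemma cyc_invert (A B : CycSys φ x0) (hpq : A.p = B.p)
    (hAB : ∀ x y : X, A.c x = A.c y → B.c x = B.c y) :
    ∀ x y : X, B.c x = B.c y → A.c x = A.c y := by
  classical
  haveI : NeZero A.p := ⟨A.hp.ne'⟩
  haveI : NeZero B.p := ⟨B.hp.ne'⟩
  choose g hg using A.surj
  set u : ZMod A.p → ZMod B.p := fun j => B.c (g j) with hu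
  have huc : ∀ x, u (A.c x) = B.c x := fun x => hAB (g (A.c x)) x (hg _)
  have husurj : Function.Surjective u := by
    intro j
    obtain ⟨x, hx⟩ := B.surj j
    exact ⟨A.c x, by rw [huc x, hx]⟩
  have hubij : Function.Bijective u := by
    rw [Fintype.bijective_iff_surjective_and_card]
    exact ⟨husurj, by rw [ZMod.card, ZMod.card, hpq]⟩
  intro x y h
  apply hubij.injective
  rw [huc x, huc y, h]

end OdometerAux

/-- A minimal Cantor system which is not an odometer admits a continuous
equivariant map to the full 2-shift with infinite image. -/
theorem exists_shift_factor_with_infinite_image {X : Type*} [TopologicalSpace X]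
    (hX : IsCantorSpace X) (φ : X ≃ₜ X) (hmin : IsMinimalHomeo φ)
    (hodo : ¬ IsOdometer φ) :
    ∃ π : X → (ℤ → Bool), Continuous π ∧ (∀ (x : X) (n : ℤ), π (φ x) n = π x (n + 1)) ∧
      (Set.range π).Infinite := by
  classical
  by_contra hcon
  push_neg at hcon
  obtain ⟨e⟩ := hX
  haveI : CompactSpace X := e.symm.compactSpace
  haveI : Infinite X := Infinite.of_injective e.symm e.symm.injective
  have x0 : X := e.symm fun _ => true
  have hdense := hmin x0
  -- the shift on ℤ → Bool as a permutation
  set s : Equiv.Perm (ℤ → Bool) :=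
    ⟨fun v n => v (n + 1), fun v n => v (n - 1),
      fun v => by funext n; simp, fun v => by funext n; simp⟩ with hsdef
  -- basic separating cyclic factor maps
  have hCi : ∀ i : ℕ, ∃ A : CycSys φ x0, ∀ x y, A.c x = A.c y → e x i = e y i := by
    intro i
    set f : X → ℤ → Bool := fun x n => e ((φ ^ n) x) i with hfdef
    have hc : Continuous f := continuous_pi fun n =>
      (continuous_apply i).comp (e.continuous.comp (φ ^ n).continuous)
    have heqv : ∀ (x : X) (n : ℤ), f (φ x) n = f x (n + 1) := by
      intro x n
      show e ((φ ^ n) (φ x)) i = e ((φ ^ (n + 1)) x) i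
      rw [homeo_zpow_add_apply φ n 1 x, zpow_one]
    have heq : ∀ x, f (φ x) = s (f x) := by
      intro x
      funext n
      exact heqv x n
    have hfin : (Set.range f).Finite :=
      hcon f hc heqv
    obtain ⟨A, hA⟩ := exists_cyc hdense s f hc hfin heq
    refine ⟨A, fun x y h => ?_⟩
    have h0 := congrFun (hA x y h) 0
    simpa [hfdef] using h0
  choose C hC using hCi
  -- joins
  have hJex : ∀ A B : CycSys φ x0, ∃ Cj : CycSys φ x0, A.p ∣ Cj.p ∧ B.p ∣ Cj.p ∧
      ∀ x y, Cj.c x = Cj.c y → A.c x = A.c y ∧ B.c x = B.c y :=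
    fun A B => cyc_join hdense A B
  choose J hJ1 hJ2 hJ3 using hJex
  set D : ℕ → CycSys φ x0 := fun k => Nat.rec (C 0) (fun k Dk => J Dk (C (k + 1))) k with hD
  have hDs : ∀ k, D (k + 1) = J (D k) (C (k + 1)) := fun k => rfl
  have href1 : ∀ k (x y : X), (D (k + 1)).c x = (D (k + 1)).c y → (D k).c x = (D k).c y := by
    intro k x y h
    exact (hJ3 (D k) (C (k + 1)) x y h).1
  have hchain : ∀ k l, k ≤ l → ∀ x y : X, (D l).c x = (D l).c y → (D k).c x = (D k).c y := by
    intro k l hkl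
    induction l, hkl using Nat.le_induction with
    | base => exact fun x y h => h
    | succ l hkl ih => exact fun x y h => ih x y (href1 l x y h)
  have hrefC : ∀ k (x y : X), (D k).c x = (D k).c y → e x k = e y k := by
    intro k
    cases k with
    | zero => exact hC 0
    | succ k => exact fun x y h => hC (k + 1) x y (hJ3 (D k) (C (k + 1)) x y h).2
  have hdvd1 : ∀ k, (D k).p ∣ (D (k + 1)).p := fun k => hJ1 (D k) (C (k + 1))
  have hdvdle : ∀ k l, k ≤ l → (D k).p ∣ (D l).p := by
    intro k l hkl
    induction l, hkl using Nat.le_induction with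
    | base => exact dvd_rfl
    | succ l hkl ih => exact ih.trans (hdvd1 l)
  have hmono : ∀ k l, k ≤ l → (D k).p ≤ (D l).p :=
    fun k l hkl => Nat.le_of_dvd (D l).hp (hdvdle k l hkl)
  -- unboundedness of the periods
  have hunb : ∀ N, ∃ k, N < (D k).p := by
    by_contra hb
    push_neg at hb
    obtain ⟨N, hN⟩ := hb
    -- the sequence of periods attains a maximum
    have hbdd : BddAbove (Set.range fun k => (D k).p) := ⟨N, by rintro _ ⟨k, rfl⟩; exact hN k⟩
    have hne : (Set.range fun k => (D k).p).Nonempty := ⟨(D 0).p, 0, rfl⟩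
    obtain ⟨K, hK⟩ := Nat.sSup_mem hne hbdd
    have hK' : (D K).p = sSup (Set.range fun k => (D k).p) := hK
    have hmax : ∀ k, (D k).p ≤ (D K).p := by
      intro k
      rw [hK']
      exact le_csSup hbdd ⟨k, rfl⟩
    have hconst : ∀ k, K ≤ k → (D k).p = (D K).p :=
      fun k hk => le_antisymm (hmax k) (hmono K k hk)
    -- equality of fibers transfers upward
    have hup : ∀ k, K ≤ k → ∀ x y : X, (D K).c x = (D K).c y → (D k).c x = (D k).c y := by
      intro k hk
      induction k, hk using Nat.le_induction with
      | base => exact fun x y h => h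
      | succ k hk ih =>
          intro x y h
          have hinv := cyc_invert (D (k + 1)) (D k)
            (by rw [hconst (k + 1) (by omega), hconst k hk])
            (href1 k)
          exact hinv x y (ih x y h)
    -- so (D K).c is injective, contradicting infiniteness of X
    have hinj : Function.Injective (D K).c := by
      intro x y h
      apply e.injective
      funext i
      rcases le_total i K with hiK | hKi
      · exact hrefC i x y (hchain i K hiK x y h)
      · exact hrefC i x y (hup i hKi x y h)
    haveI : NeZero (D K).p := ⟨(D K).hp.ne'⟩
    exact (Finite.of_injective _ hinj).not_infinite ‹Infinite X›
  -- build a strictly increasing subsequence of indices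
  obtain ⟨k0, hk0⟩ := hunb 1
  choose nxt hnxt using fun k => hunb ((D k).p)
  set idx : ℕ → ℕ := fun n => Nat.rec k0 (fun _ k => nxt k) n with hidx
  have hidxs : ∀ n, idx (n + 1) = nxt (idx n) := fun n => rfl
  have hplt : ∀ n, (D (idx n)).p < (D (idx (n + 1))).p := fun n => hnxt (idx n)
  have hile : ∀ n, idx n ≤ idx (n + 1) := by
    intro n
    by_contra h
    push_neg at h
    exact absurd (hmono _ _ h.le) (not_le.2 (hplt n))
  have hilt : ∀ n, idx n < idx (n + 1) := by
    intro n
    rcases lt_or_eq_of_le (hile n) with h | h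
    · exact h
    · exfalso
      have h2 := hplt n
      rw [← h] at h2
      exact lt_irrefl _ h2
  have hige : ∀ n, n ≤ idx n := by
    intro n
    induction n with
    | zero => omega
    | succ n ih => have := hilt n; omega
  set a : ℕ → ℕ := fun n => (D (idx n)).p with ha
  have ha2 : ∀ n, 2 ≤ a n := by
    intro n
    induction n with
    | zero => exact hk0
    | succ n ih =>
        have h1 : a n < a (n + 1) := hplt n
        omega
  have hadvd : ∀ n, a n ∣ a (n + 1) := fun n => hdvdle (idx n) (idx (n + 1)) (hile n)
  have halt : ∀ n, a n < a (n + 1) := fun n => hplt n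
  -- the conjugacy to the odometer
  set H : X → OdometerSystem a := fun x =>
    ⟨fun n => (D (idx n)).c x, fun n => cyc_cast hdense (D (idx (n + 1))) (D (idx n)) (hadvd n) x⟩
    with hHdef
  have Hcont : Continuous H :=
    Continuous.subtype_mk (continuous_pi fun n => (D (idx n)).cont) _
  have Hval : ∀ (x : X) (n : ℕ), (H x).val n = (D (idx n)).c x := fun x n => rfl
  have Hinj : Function.Injective H := by
    intro x y hxy
    have hcoord : ∀ n, (D (idx n)).c x = (D (idx n)).c y :=
      fun n => congrFun (congrArg Subtype.val hxy) n
    apply e.injective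
    funext i
    exact hrefC i x y (hchain i (idx i) (hige i) x y (hcoord i))
  haveI : T2Space (OdometerSystem a) := inferInstanceAs (T2Space
    {z : (n : ℕ) → ZMod (a n) // ∀ n, (ZMod.cast (z (n + 1)) : ZMod (a n)) = z n})
  have hvalcont : Continuous fun w : OdometerSystem a => (w.val : (n : ℕ) → ZMod (a n)) :=
    continuous_induced_dom
  have Hsurj : Function.Surjective H := by
    intro z
    set Kst : ℕ → Set (OdometerSystem a) :=
      fun n => Set.range H ∩ {w | w.val n = z.val n} with hKst
    have hdec : ∀ n, Kst (n + 1) ⊆ Kst n := by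
      rintro n w ⟨hw1, hw2⟩
      refine ⟨hw1, ?_⟩
      have hcw := w.property n
      have hcz := z.property n
      show w.val n = z.val n
      rw [← hcw, ← hcz, hw2]
    have hne : ∀ n, (Kst n).Nonempty := by
      intro n
      haveI : NeZero (a n) := ⟨by have := ha2 n; omega⟩
      refine ⟨H ((φ ^ (((z.val n).val : ℕ) : ℤ)) x0), Set.mem_range_self _, ?_⟩
      show (H _).val n = z.val n
      rw [Hval, (D (idx n)).czpow]
      push_cast
      rw [ZMod.natCast_val, ZMod.cast_id]
    have hclosedcoord : ∀ n, IsClosed {w : OdometerSystem a | w.val n = z.val n} := by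
      intro n
      have h1 : Continuous fun w : OdometerSystem a => w.val n :=
        (continuous_apply n).comp hvalcont
      exact isClosed_eq h1 continuous_const
    have hclosed : ∀ n, IsClosed (Kst n) := by
      intro n
      exact ((isCompact_range Hcont).isClosed).inter (hclosedcoord n)
    have hcmp : IsCompact (Kst 0) :=
      (isCompact_range Hcont).inter_right (hclosedcoord 0)
    obtain ⟨w, hw⟩ := IsCompact.nonempty_iInter_of_sequence_nonempty_isCompact_isClosed
      Kst hdec hne hcmp hclosed
    rw [Set.mem_iInter] at hw
    obtain ⟨x, hx⟩ := (hw 0).1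
    refine ⟨x, ?_⟩
    rw [hx]
    apply Subtype.ext
    funext n
    exact (hw n).2
  set E : X ≃ OdometerSystem a := Equiv.ofBijective H ⟨Hinj, Hsurj⟩ with hE
  have hEc : Continuous (E : X → OdometerSystem a) := Hcont
  set Ht : X ≃ₜ OdometerSystem a := Continuous.homeoOfEquivCompactToT2 hEc with hHt
  apply hodo
  refine ⟨a, ha2, hadvd, halt, Ht, ?_⟩
  intro x n
  show (H (φ x)).val n = (H x).val n + 1
  rw [Hval, Hval]
  exact (D (idx n)).step x
end

section
/- Let (X,φ) be a minimal Cantor system. Then for every integer n ≥ 1 there is an injective group homomorphism from the permutational wreath product ℤ ≀_n S_n := ℤ^n ⋊ S_n, where the symmetric group S_n acts on ℤ^n by permuting coordinates, into the topological full group 𝔗(φ). -/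
/-- The topological full group of a homeomorphism `φ`: all homeomorphisms `γ` admitting a
continuous orbit cocycle `f : X → ℤ` with `γ x = φ ^ (f x) x` for all `x`. -/
def topFullGroup {X : Type*} [TopologicalSpace X] (φ : X ≃ₜ X) : Subgroup (X ≃ₜ X) where
  carrier := {γ | ∃ f : X → ℤ, Continuous f ∧ ∀ x, γ x = (φ ^ f x) x}
  one_mem' := ⟨fun _ => 0, continuous_const, fun x => by simp⟩
  mul_mem' := by
    rintro γ₁ γ₂ ⟨f₁, hf₁, h₁⟩ ⟨f₂, hf₂, h₂⟩
    refine ⟨fun x => f₁ (γ₂ x) + f₂ x, (hf₁.comp γ₂.continuous).add hf₂, fun x => ?_⟩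
    rw [homeo_mul_apply, homeo_zpow_add_apply, ← h₂ x, ← h₁ (γ₂ x)]
  inv_mem' := by
    rintro γ ⟨f, hf, h⟩
    refine ⟨fun x => -(f (γ⁻¹ x)), (hf.comp (γ⁻¹ : X ≃ₜ X).continuous).neg, fun x => ?_⟩
    have h1 : γ (γ⁻¹ x) = (φ ^ f (γ⁻¹ x)) (γ⁻¹ x) := h (γ⁻¹ x)
    have h2 : γ (γ⁻¹ x) = x := γ.apply_symm_apply x
    have h3 := h1.symm.trans h2
    calc γ⁻¹ x = (φ ^ (-(f (γ⁻¹ x)) + f (γ⁻¹ x))) (γ⁻¹ x) := by simp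
    _ = (φ ^ (-(f (γ⁻¹ x)))) ((φ ^ (f (γ⁻¹ x))) (γ⁻¹ x)) := homeo_zpow_add_apply ..
    _ = (φ ^ (-(f (γ⁻¹ x)))) x := by rw [h3]

/-- The permutation action of `S_n` on `ℤ^n` by permuting coordinates, as multiplicative
automorphisms. -/
def permCongr (n : ℕ) (σ : Equiv.Perm (Fin n)) :
    (Fin n → Multiplicative ℤ) ≃* (Fin n → Multiplicative ℤ) :=
  { Equiv.piCongrLeft' (fun _ => Multiplicative ℤ) σ with
    map_mul' := fun _ _ => rfl }

def permOnZn (n : ℕ) : Equiv.Perm (Fin n) →* MulAut (Fin n → Multiplicative ℤ) :=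
  MonoidHom.mk' (fun σ => permCongr n σ) (by
    intro σ τ
    apply MulEquiv.ext
    intro f
    rfl)

/-! ### Auxiliary material -/

section Aux

variable {X : Type*} [TopologicalSpace X]

lemma homeo_zpow_comp {X : Type*} [TopologicalSpace X] (φ : X ≃ₜ X) (a b : ℤ) (x : X) :
    (φ ^ a) ((φ ^ b) x) = (φ ^ (a + b)) x := (homeo_zpow_add_apply φ a b x).symm

lemma cocycle_continuous (φ : X ≃ₜ X) {c : X → ℤ} (hc : Continuous c) :
    Continuous fun y => (φ ^ c y) y := by
  rw [continuous_iff_continuousAt]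
  intro y0
  have hopen : IsOpen (c ⁻¹' {c y0}) := hc.isOpen_preimage _ (isOpen_discrete _)
  have heq : (fun y => (φ ^ c y0) y) =ᶠ[nhds y0] fun y => (φ ^ c y) y := by
    filter_upwards [hopen.mem_nhds rfl] with y hy
    simp only [Set.mem_preimage, Set.mem_singleton_iff] at hy
    rw [hy]
  exact ((φ ^ c y0).continuous.continuousAt).congr heq

/-- Build an element of the topological full group from a continuous cocycle and a
continuous inverse cocycle. -/
def mkFull (φ : X ≃ₜ X) (c c' : X → ℤ) (hc : Continuous c) (hc' : Continuous c')
    (h1 : ∀ y, (φ ^ c' ((φ ^ c y) y)) ((φ ^ c y) y) = y)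
    (h2 : ∀ y, (φ ^ c ((φ ^ c' y) y)) ((φ ^ c' y) y) = y) : topFullGroup φ :=
  ⟨{ toFun := fun y => (φ ^ c y) y
     invFun := fun y => (φ ^ c' y) y
     left_inv := h1
     right_inv := h2
     continuous_toFun := cocycle_continuous φ hc
     continuous_invFun := cocycle_continuous φ hc' }, ⟨c, hc, fun _ => rfl⟩⟩

@[simp] lemma mkFull_apply (φ : X ≃ₜ X) (c c' : X → ℤ) (hc hc' h1 h2) (y : X) :
    ((mkFull φ c c' hc hc' h1 h2 : topFullGroup φ) : X ≃ₜ X) y = (φ ^ c y) y := rfl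

@[simp] lemma mkFull_inv_apply (φ : X ≃ₜ X) (c c' : X → ℤ) (hc hc' h1 h2) (y : X) :
    (((mkFull φ c c' hc hc' h1 h2 : topFullGroup φ) : X ≃ₜ X))⁻¹ y = (φ ^ c' y) y := rfl

/-- Homeomorphisms supported in `S` (fixing the complement pointwise and preserving `S`). -/
def suppIn (S : Set X) : Subgroup (X ≃ₜ X) where
  carrier := {g | (∀ y, y ∉ S → g y = y) ∧ ∀ y ∈ S, g y ∈ S}
  one_mem' := ⟨fun _ _ => rfl, fun _ hy => hy⟩
  mul_mem' := fun {a b} ha hb =>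
    ⟨fun y hy => by rw [homeo_mul_apply, hb.1 y hy, ha.1 y hy],
     fun y hy => by rw [homeo_mul_apply]; exact ha.2 _ (hb.2 y hy)⟩
  inv_mem' := by
    rintro g ⟨h1, h2⟩
    constructor
    · intro y hy
      have : g y = y := h1 y hy
      calc g⁻¹ y = g⁻¹ (g y) := by rw [this]
      _ = y := g.symm_apply_apply y
    · intro y hy
      by_contra hmem
      have h := h1 _ hmem
      have : g (g⁻¹ y) = y := g.apply_symm_apply y
      have heq : g⁻¹ y = y := h.symm.trans this
      rw [heq] at hmem
      exact hmem hy

lemma mem_suppIn {S : Set X} {g : X ≃ₜ X} :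
    g ∈ suppIn S ↔ (∀ y, y ∉ S → g y = y) ∧ ∀ y ∈ S, g y ∈ S := Iff.rfl

/-- No periodic points in an infinite minimal system. -/
lemma no_periodic [T1Space X] [Infinite X] {φ : X ≃ₜ X} (hmin : IsMinimalHomeo φ)
    {s : ℤ} (hs : s ≠ 0) (x : X) : (φ ^ s) x ≠ x := by
  -- reduce to positive s
  intro hfix
  have key : ∀ s : ℤ, 0 < s → (φ ^ s) x = x → False := by
    intro s hs hfix
    have hneg : (φ ^ (-s)) x = x := by
      calc (φ ^ (-s)) x = (φ ^ (-s)) ((φ ^ s) x) := by rw [hfix]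
      _ = (φ ^ (-s + s)) x := homeo_zpow_comp ..
      _ = x := by simp
    have hks : ∀ k : ℤ, (φ ^ (s * k)) x = x := by
      intro k
      induction k using Int.induction_on with
      | zero => simp
      | succ k ih =>
        have : s * ((k : ℤ) + 1) = s + s * k := by ring
        rw [this, homeo_zpow_add_apply, ih, hfix]
      | pred k ih =>
        have : s * (-(k : ℤ) - 1) = -s + s * (-k) := by ring
        rw [this, homeo_zpow_add_apply, ih, hneg]
    have horb : ∀ n : ℤ, (φ ^ n) x = (φ ^ (n % s)) x := by
      intro n
      conv_lhs => rw [← Int.emod_add_mul_ediv n s]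
      rw [homeo_zpow_add_apply, hks]
    have hsub : Set.range (fun n : ℤ => (φ ^ n) x) ⊆
        (fun j : ℤ => (φ ^ j) x) '' (Set.Icc 0 (s - 1)) := by
      rintro - ⟨n, rfl⟩
      refine ⟨n % s, ⟨Int.emod_nonneg n (by omega), by
        have := Int.emod_lt_of_pos n hs; omega⟩, (horb n).symm⟩
    have hfin : ((fun j : ℤ => (φ ^ j) x) '' (Set.Icc 0 (s - 1))).Finite :=
      (Set.finite_Icc _ _).image _
    have hdense := hmin x
    have huniv : (Set.univ : Set X) ⊆ (fun j : ℤ => (φ ^ j) x) '' (Set.Icc 0 (s - 1)) := by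
      have hcl : closure (Set.range fun n : ℤ => (φ ^ n) x) ⊆
          (fun j : ℤ => (φ ^ j) x) '' (Set.Icc 0 (s - 1)) :=
        closure_minimal hsub hfin.isClosed
      rw [hdense.closure_eq] at hcl
      exact hcl
    have : (Set.univ : Set X).Finite := hfin.subset huniv
    haveI := Set.finite_univ_iff.mp this
    exact not_finite X
  rcases lt_or_gt_of_ne hs with h | h
  · apply key (-s) (by omega)
    calc (φ ^ (-s)) x = (φ ^ (-s)) ((φ ^ s) x) := by rw [hfix]
    _ = (φ ^ (-s + s)) x := homeo_zpow_comp ..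
    _ = x := by simp
  · exact key s h hfix

end Aux
section ReturnMap
open scoped Classical

variable {X : Type*} [TopologicalSpace X] (φ : X ≃ₜ X) (A : Set X)

/-- First forward return time (minus one). -/
noncomputable def fret (hf : ∀ y : X, ∃ k : ℕ, (φ ^ ((k : ℤ) + 1)) y ∈ A) (y : X) : ℕ :=
  Nat.find (hf y)

/-- First backward return time (minus one). -/
noncomputable def bret (hb : ∀ y : X, ∃ k : ℕ, (φ ^ (-((k : ℤ) + 1))) y ∈ A) (y : X) : ℕ :=
  Nat.find (hb y)

variable {φ A}

lemma fret_spec (hf : ∀ y : X, ∃ k : ℕ, (φ ^ ((k : ℤ) + 1)) y ∈ A) (y : X) :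
    (φ ^ ((fret φ A hf y : ℤ) + 1)) y ∈ A := Nat.find_spec (hf y)

lemma fret_min (hf : ∀ y : X, ∃ k : ℕ, (φ ^ ((k : ℤ) + 1)) y ∈ A) (y : X) {j : ℕ}
    (hj : j < fret φ A hf y) : (φ ^ ((j : ℤ) + 1)) y ∉ A := Nat.find_min (hf y) hj

lemma bret_spec (hb : ∀ y : X, ∃ k : ℕ, (φ ^ (-((k : ℤ) + 1))) y ∈ A) (y : X) :
    (φ ^ (-((bret φ A hb y : ℤ) + 1))) y ∈ A := Nat.find_spec (hb y)

lemma bret_min (hb : ∀ y : X, ∃ k : ℕ, (φ ^ (-((k : ℤ) + 1))) y ∈ A) (y : X) {j : ℕ}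
    (hj : j < bret φ A hb y) : (φ ^ (-((j : ℤ) + 1))) y ∉ A := Nat.find_min (hb y) hj

lemma fret_continuous (hA : IsClopen A) (hf : ∀ y : X, ∃ k : ℕ, (φ ^ ((k : ℤ) + 1)) y ∈ A) :
    Continuous fun y => (fret φ A hf y : ℤ) := by
  rw [continuous_iff_continuousAt]
  intro y0
  set k := fret φ A hf y0 with hk
  set U : Set X := ((fun y => (φ ^ ((k : ℤ) + 1)) y) ⁻¹' A) ∩
      ⋂ j ∈ Finset.range k, ((fun y => (φ ^ ((j : ℤ) + 1)) y) ⁻¹' A)ᶜ with hU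
  have hUopen : IsOpen U := by
    apply IsOpen.inter (hA.isOpen.preimage (φ ^ ((k : ℤ) + 1)).continuous)
    exact isOpen_biInter_finset fun j _ =>
      (hA.compl.isOpen.preimage (φ ^ ((j : ℤ) + 1)).continuous)
  have hy0U : y0 ∈ U := by
    refine ⟨fret_spec hf y0, ?_⟩
    simp only [Set.mem_iInter, Set.mem_compl_iff, Set.mem_preimage, Finset.mem_range]
    intro j hj
    exact fret_min hf y0 hj
  have hconst : ∀ y ∈ U, fret φ A hf y = k := by
    intro y hy
    unfold fret
    rw [Nat.find_eq_iff]
    refine ⟨hy.1, fun j hj => ?_⟩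
    have := hy.2
    simp only [Set.mem_iInter, Set.mem_compl_iff, Set.mem_preimage, Finset.mem_range] at this
    exact this j hj
  have heq : (fun _ : X => (k : ℤ)) =ᶠ[nhds y0] fun y => (fret φ A hf y : ℤ) := by
    filter_upwards [hUopen.mem_nhds hy0U] with y hy
    rw [hconst y hy]
  exact continuousAt_const.congr heq

lemma bret_continuous (hA : IsClopen A) (hb : ∀ y : X, ∃ k : ℕ, (φ ^ (-((k : ℤ) + 1))) y ∈ A) :
    Continuous fun y => (bret φ A hb y : ℤ) := by
  rw [continuous_iff_continuousAt]
  intro y0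
  set k := bret φ A hb y0 with hk
  set U : Set X := ((fun y => (φ ^ (-((k : ℤ) + 1))) y) ⁻¹' A) ∩
      ⋂ j ∈ Finset.range k, ((fun y => (φ ^ (-((j : ℤ) + 1))) y) ⁻¹' A)ᶜ with hU
  have hUopen : IsOpen U := by
    apply IsOpen.inter (hA.isOpen.preimage (φ ^ (-((k : ℤ) + 1))).continuous)
    exact isOpen_biInter_finset fun j _ =>
      (hA.compl.isOpen.preimage (φ ^ (-((j : ℤ) + 1))).continuous)
  have hy0U : y0 ∈ U := by
    refine ⟨bret_spec hb y0, ?_⟩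
    simp only [Set.mem_iInter, Set.mem_compl_iff, Set.mem_preimage, Finset.mem_range]
    intro j hj
    exact bret_min hb y0 hj
  have hconst : ∀ y ∈ U, bret φ A hb y = k := by
    intro y hy
    unfold bret
    rw [Nat.find_eq_iff]
    refine ⟨hy.1, fun j hj => ?_⟩
    have := hy.2
    simp only [Set.mem_iInter, Set.mem_compl_iff, Set.mem_preimage, Finset.mem_range] at this
    exact this j hj
  have heq : (fun _ : X => (k : ℤ)) =ᶠ[nhds y0] fun y => (bret φ A hb y : ℤ) := by
    filter_upwards [hUopen.mem_nhds hy0U] with y hy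
    rw [hconst y hy]
  exact continuousAt_const.congr heq

variable (φ A) in
/-- Forward cocycle of the first-return map, extended by `0` off `A`. -/
noncomputable def cF (hf : ∀ y : X, ∃ k : ℕ, (φ ^ ((k : ℤ) + 1)) y ∈ A) : X → ℤ :=
  fun y => if y ∈ A then (fret φ A hf y : ℤ) + 1 else 0

variable (φ A) in
/-- Backward cocycle of the first-return map, extended by `0` off `A`. -/
noncomputable def cB (hb : ∀ y : X, ∃ k : ℕ, (φ ^ (-((k : ℤ) + 1))) y ∈ A) : X → ℤ :=
  fun y => if y ∈ A then -((bret φ A hb y : ℤ) + 1) else 0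

lemma cF_continuous (hA : IsClopen A) (hf) : Continuous (cF φ A hf) := by
  unfold cF
  apply Continuous.if
  · intro a ha
    rw [Set.setOf_mem_eq, hA.frontier_eq] at ha
    exact absurd ha (Set.notMem_empty a)
  · exact (fret_continuous hA hf).add continuous_const
  · exact continuous_const

lemma cB_continuous (hA : IsClopen A) (hb) : Continuous (cB φ A hb) := by
  unfold cB
  apply Continuous.if
  · intro a ha
    rw [Set.setOf_mem_eq, hA.frontier_eq] at ha
    exact absurd ha (Set.notMem_empty a)
  · exact ((bret_continuous hA hb).add continuous_const).neg
  · exact continuous_const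

lemma cFB_inv (hf : ∀ y : X, ∃ k : ℕ, (φ ^ ((k : ℤ) + 1)) y ∈ A)
    (hb : ∀ y : X, ∃ k : ℕ, (φ ^ (-((k : ℤ) + 1))) y ∈ A) (y : X) :
    (φ ^ cB φ A hb ((φ ^ cF φ A hf y) y)) ((φ ^ cF φ A hf y) y) = y := by
  by_cases hy : y ∈ A
  · set k := fret φ A hf y with hk
    have hcF : cF φ A hf y = (k : ℤ) + 1 := by unfold cF; rw [if_pos hy]
    set z := (φ ^ ((k : ℤ) + 1)) y with hz
    have hzA : z ∈ A := fret_spec hf y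
    have hback : (φ ^ (-((k : ℤ) + 1))) z = y := by
      rw [hz, homeo_zpow_comp, show -((k : ℤ) + 1) + ((k : ℤ) + 1) = 0 by ring]; simp
    have hbz : bret φ A hb z = k := by
      unfold bret
      rw [Nat.find_eq_iff]
      refine ⟨by rw [hback]; exact hy, fun j hj hmem => ?_⟩
      have hstep : (φ ^ (-((j : ℤ) + 1))) z = (φ ^ ((((k - j - 1 : ℕ) : ℤ)) + 1)) y := by
        rw [hz, homeo_zpow_comp,
          show -((j : ℤ) + 1) + ((k : ℤ) + 1) = (((k - j - 1 : ℕ) : ℤ)) + 1 by omega]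
      rw [hstep] at hmem
      exact fret_min hf y (by rw [← hk]; omega) hmem
    have hcB : cB φ A hb z = -((k : ℤ) + 1) := by
      unfold cB; rw [if_pos hzA, hbz]
    rw [hcF, ← hz, hcB, hback]
  · have hcF : cF φ A hf y = 0 := by unfold cF; rw [if_neg hy]
    rw [hcF]
    simp only [zpow_zero, homeo_one_apply]
    unfold cB; rw [if_neg hy]
    simp

lemma cBF_inv (hf : ∀ y : X, ∃ k : ℕ, (φ ^ ((k : ℤ) + 1)) y ∈ A)
    (hb : ∀ y : X, ∃ k : ℕ, (φ ^ (-((k : ℤ) + 1))) y ∈ A) (y : X) :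
    (φ ^ cF φ A hf ((φ ^ cB φ A hb y) y)) ((φ ^ cB φ A hb y) y) = y := by
  by_cases hy : y ∈ A
  · set k := bret φ A hb y with hk
    have hcB : cB φ A hb y = -((k : ℤ) + 1) := by unfold cB; rw [if_pos hy]
    set z := (φ ^ (-((k : ℤ) + 1))) y with hz
    have hzA : z ∈ A := bret_spec hb y
    have hback : (φ ^ ((k : ℤ) + 1)) z = y := by
      rw [hz, homeo_zpow_comp, show ((k : ℤ) + 1) + -((k : ℤ) + 1) = 0 by ring]; simp
    have hfz : fret φ A hf z = k := by
      unfold fret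
      rw [Nat.find_eq_iff]
      refine ⟨by rw [hback]; exact hy, fun j hj hmem => ?_⟩
      have hstep : (φ ^ ((j : ℤ) + 1)) z = (φ ^ (-((((k - j - 1 : ℕ) : ℤ)) + 1))) y := by
        rw [hz, homeo_zpow_comp,
          show ((j : ℤ) + 1) + -((k : ℤ) + 1) = -((((k - j - 1 : ℕ) : ℤ)) + 1) by omega]
      rw [hstep] at hmem
      exact bret_min hb y (by rw [← hk]; omega) hmem
    have hcF : cF φ A hf z = (k : ℤ) + 1 := by
      unfold cF; rw [if_pos hzA, hfz]
    rw [hcB, ← hz, hcF, hback]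
  · have hcB : cB φ A hb y = 0 := by unfold cB; rw [if_neg hy]
    rw [hcB]
    simp only [zpow_zero, homeo_one_apply]
    unfold cF; rw [if_neg hy]
    simp

variable (φ A) in
/-- The first-return map of `φ` on `A`, extended by the identity, as an element of the
topological full group. -/
noncomputable def retMap (hA : IsClopen A)
    (hf : ∀ y : X, ∃ k : ℕ, (φ ^ ((k : ℤ) + 1)) y ∈ A)
    (hb : ∀ y : X, ∃ k : ℕ, (φ ^ (-((k : ℤ) + 1))) y ∈ A) : topFullGroup φ :=
  mkFull φ (cF φ A hf) (cB φ A hb) (cF_continuous hA hf) (cB_continuous hA hb)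
    (cFB_inv hf hb) (cBF_inv hf hb)

lemma retMap_mem_suppIn (hA : IsClopen A) (hf) (hb) :
    ((retMap φ A hA hf hb : topFullGroup φ) : X ≃ₜ X) ∈ suppIn A := by
  constructor
  · intro y hy
    show (φ ^ cF φ A hf y) y = y
    unfold cF; rw [if_neg hy]; simp
  · intro y hy
    show (φ ^ cF φ A hf y) y ∈ A
    unfold cF; rw [if_pos hy]
    exact fret_spec hf y

lemma retMap_zpow_mem_suppIn (hA : IsClopen A) (hf) (hb) (m : ℤ) :
    (((retMap φ A hA hf hb : topFullGroup φ) : X ≃ₜ X) ^ m) ∈ suppIn A :=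
  Subgroup.zpow_mem _ (retMap_mem_suppIn hA hf hb) m

/-- Positive powers of the return map move points forward along the orbit. -/
lemma retMap_pow_pos (hA : IsClopen A) (hf) (hb) (k : ℕ) (a : X) (ha : a ∈ A) :
    ∃ s : ℤ, (k : ℤ) ≤ s ∧
      (((retMap φ A hA hf hb : topFullGroup φ) : X ≃ₜ X) ^ (k : ℤ)) a = (φ ^ s) a := by
  induction k with
  | zero => exact ⟨0, le_refl _, by simp⟩
  | succ k ih =>
    obtain ⟨s, hs, heq⟩ := ih
    set T : X ≃ₜ X := ((retMap φ A hA hf hb : topFullGroup φ) : X ≃ₜ X) with hT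
    have hmemA : (T ^ (k : ℤ)) a ∈ A := (retMap_zpow_mem_suppIn hA hf hb (k : ℤ)).2 a ha
    have hstep : (T ^ ((k : ℤ) + 1)) a = T ((T ^ (k : ℤ)) a) := by
      rw [show (k : ℤ) + 1 = 1 + (k : ℤ) by ring, homeo_zpow_add_apply, zpow_one]
    set z := (T ^ (k : ℤ)) a with hz
    have hTz : T z = (φ ^ ((fret φ A hf z : ℤ) + 1)) z := by
      show (φ ^ cF φ A hf z) z = _
      unfold cF; rw [if_pos hmemA]
    refine ⟨(fret φ A hf z : ℤ) + 1 + s, by omega, ?_⟩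
    have hcast : ((k + 1 : ℕ) : ℤ) = (k : ℤ) + 1 := by push_cast; ring
    rw [hcast, hstep, hTz, heq, homeo_zpow_comp]

/-- The return map has infinite order pointwise on `A`. -/
lemma retMap_zpow_ne [T1Space X] [Infinite X] (hmin : IsMinimalHomeo φ)
    (hA : IsClopen A) (hf) (hb) (m : ℤ) (hm : m ≠ 0) (a : X) (ha : a ∈ A) :
    (((retMap φ A hA hf hb : topFullGroup φ) : X ≃ₜ X) ^ m) a ≠ a := by
  set T : X ≃ₜ X := ((retMap φ A hA hf hb : topFullGroup φ) : X ≃ₜ X) with hT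
  have key : ∀ m : ℤ, 0 < m → (T ^ m) a ≠ a := by
    intro m hm hfix
    obtain ⟨s, hs, heq⟩ := retMap_pow_pos hA hf hb m.toNat a ha
    rw [Int.toNat_of_nonneg (by omega)] at heq
    rw [heq] at hfix
    exact no_periodic hmin (by omega : s ≠ 0) a hfix
  intro hfix
  rcases lt_or_gt_of_ne hm with h | h
  · refine key (-m) (by omega) ?_
    calc (T ^ (-m)) a = (T ^ (-m)) ((T ^ m) a) := by rw [hfix]
    _ = (T ^ (-m + m)) a := homeo_zpow_comp ..
    _ = a := by simp
  · exact key m h hfix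

end ReturnMap
section Levels

open scoped Classical

variable {X : Type*} [TopologicalSpace X]

variable (φ : X ≃ₜ X) (n : ℕ) (A : Set X)

/-- The `i`-th level `φ^i(A)` of the tower over `A`. -/
def lev (i : Fin n) : Set X := {y | (φ ^ (-(i : ℤ))) y ∈ A}

variable {φ n A}

lemma lev_clopen (hA : IsClopen A) (i : Fin n) : IsClopen (lev φ n A i) :=
  hA.preimage (φ ^ (-(i : ℤ))).continuous

lemma lev_map {i : Fin n} {y : X} (hy : y ∈ lev φ n A i) (j : Fin n) :
    (φ ^ ((j : ℤ) - (i : ℤ))) y ∈ lev φ n A j := by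
  show (φ ^ (-(j : ℤ))) ((φ ^ ((j : ℤ) - (i : ℤ))) y) ∈ A
  rw [homeo_zpow_comp, show -(j : ℤ) + ((j : ℤ) - (i : ℤ)) = -(i : ℤ) by ring]
  exact hy

variable (φ n A) in
/-- Cocycle of the level permutation induced by `σ`. -/
noncomputable def dcoc (σ : Equiv.Perm (Fin n)) : X → ℤ :=
  fun y => ∑ i : Fin n, Set.indicator (lev φ n A i) (fun _ => ((σ i : ℤ) - (i : ℤ))) y

lemma dcoc_continuous (hA : IsClopen A) (σ : Equiv.Perm (Fin n)) :
    Continuous (dcoc φ n A σ) := by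
  apply continuous_finset_sum
  intro i _
  have : (Set.indicator (lev φ n A i) (fun _ => ((σ i : ℤ) - (i : ℤ)))) =
      fun y => if y ∈ lev φ n A i then ((σ i : ℤ) - (i : ℤ)) else 0 := by
    funext y; simp [Set.indicator_apply]
  rw [this]
  apply Continuous.if
  · intro a ha
    rw [Set.setOf_mem_eq, (lev_clopen hA i).frontier_eq] at ha
    exact absurd ha (Set.notMem_empty a)
  · exact continuous_const
  · exact continuous_const

lemma dcoc_on (hdis : ∀ i j : Fin n, ∀ y : X, y ∈ lev φ n A i → y ∈ lev φ n A j → i = j)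
    (σ : Equiv.Perm (Fin n)) {i : Fin n} {y : X} (hy : y ∈ lev φ n A i) :
    dcoc φ n A σ y = (σ i : ℤ) - (i : ℤ) := by
  unfold dcoc
  rw [Finset.sum_eq_single i]
  · exact Set.indicator_of_mem hy _
  · intro j _ hj
    exact Set.indicator_of_notMem (fun hmem => hj (hdis j i y hmem hy)) _
  · intro h
    exact absurd (Finset.mem_univ i) h

lemma dcoc_off (σ : Equiv.Perm (Fin n)) {y : X} (hy : ∀ i : Fin n, y ∉ lev φ n A i) :
    dcoc φ n A σ y = 0 := by
  unfold dcoc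
  exact Finset.sum_eq_zero fun i _ => Set.indicator_of_notMem (hy i) _

lemma dcoc_inv (hdis : ∀ i j : Fin n, ∀ y : X, y ∈ lev φ n A i → y ∈ lev φ n A j → i = j)
    (σ : Equiv.Perm (Fin n)) (y : X) :
    (φ ^ dcoc φ n A σ⁻¹ ((φ ^ dcoc φ n A σ y) y)) ((φ ^ dcoc φ n A σ y) y) = y := by
  by_cases hy : ∃ i : Fin n, y ∈ lev φ n A i
  · obtain ⟨i, hi⟩ := hy
    rw [dcoc_on hdis σ hi]
    have hz : (φ ^ ((σ i : ℤ) - (i : ℤ))) y ∈ lev φ n A (σ i) := lev_map hi (σ i)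
    rw [dcoc_on hdis σ⁻¹ hz, (show σ⁻¹ (σ i) = i from σ.symm_apply_apply i), homeo_zpow_comp,
      show ((i : ℤ) - (σ i : ℤ)) + ((σ i : ℤ) - (i : ℤ)) = 0 by ring]
    simp
  · push_neg at hy
    rw [dcoc_off σ hy]
    simp only [zpow_zero, homeo_one_apply]
    rw [dcoc_off σ⁻¹ hy]
    simp

variable (φ n A) in
/-- The level permutation homeomorphism induced by `σ`, as an element of the full group. -/
noncomputable def levPerm (hA : IsClopen A)
    (hdis : ∀ i j : Fin n, ∀ y : X, y ∈ lev φ n A i → y ∈ lev φ n A j → i = j)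
    (σ : Equiv.Perm (Fin n)) : topFullGroup φ :=
  mkFull φ (dcoc φ n A σ) (dcoc φ n A σ⁻¹) (dcoc_continuous hA σ) (dcoc_continuous hA σ⁻¹)
    (dcoc_inv hdis σ)
    (by
      have h := dcoc_inv hdis σ⁻¹
      rw [inv_inv] at h
      exact h)

lemma levPerm_apply (hA) (hdis) (σ : Equiv.Perm (Fin n)) (y : X) :
    ((levPerm φ n A hA hdis σ : topFullGroup φ) : X ≃ₜ X) y = (φ ^ dcoc φ n A σ y) y := rfl

lemma levPerm_mul (hA) (hdis) (σ τ : Equiv.Perm (Fin n)) :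
    levPerm φ n A hA hdis (σ * τ) = levPerm φ n A hA hdis σ * levPerm φ n A hA hdis τ := by
  apply Subtype.ext
  apply Homeomorph.ext
  intro y
  rw [Subgroup.coe_mul, homeo_mul_apply]
  rw [levPerm_apply, levPerm_apply, levPerm_apply]
  by_cases hy : ∃ i : Fin n, y ∈ lev φ n A i
  · obtain ⟨i, hi⟩ := hy
    have hz : (φ ^ ((τ i : ℤ) - (i : ℤ))) y ∈ lev φ n A (τ i) := lev_map hi (τ i)
    rw [dcoc_on hdis τ hi, dcoc_on hdis σ hz, dcoc_on hdis (σ * τ) hi, homeo_zpow_comp,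
      Equiv.Perm.mul_apply,
      show ((σ (τ i) : ℤ) - (τ i : ℤ)) + ((τ i : ℤ) - (i : ℤ)) = (σ (τ i) : ℤ) - (i : ℤ) by ring]
  · push_neg at hy
    rw [dcoc_off τ hy, dcoc_off (σ * τ) hy]
    simp only [zpow_zero, homeo_one_apply]
    rw [dcoc_off σ hy]
    simp

variable (φ n A) in
/-- `S_n` acting by level permutations, as a homomorphism into the full group. -/
noncomputable def levPermHom (hA : IsClopen A)
    (hdis : ∀ i j : Fin n, ∀ y : X, y ∈ lev φ n A i → y ∈ lev φ n A j → i = j) :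
    Equiv.Perm (Fin n) →* topFullGroup φ :=
  MonoidHom.mk' (levPerm φ n A hA hdis) (levPerm_mul hA hdis)

end Levels
section Tower

variable {X : Type*} [TopologicalSpace X]

variable (φ : X ≃ₜ X) in
/-- `φ` itself as an element of its topological full group. -/
def phiFull : topFullGroup φ :=
  ⟨φ, fun _ => (1 : ℤ), continuous_const, fun x => by simp⟩

lemma phiFull_zpow_coe (φ : X ≃ₜ X) (m : ℤ) :
    ((phiFull φ ^ m : topFullGroup φ) : X ≃ₜ X) = φ ^ m := by
  rw [SubgroupClass.coe_zpow]; rfl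

variable (φ : X ≃ₜ X) (n : ℕ) (A : Set X)
variable (hA : IsClopen A)
variable (hf : ∀ y : X, ∃ k : ℕ, (φ ^ ((k : ℤ) + 1)) y ∈ A)
variable (hb : ∀ y : X, ∃ k : ℕ, (φ ^ (-((k : ℤ) + 1))) y ∈ A)

/-- The copy of the return map supported on the `i`-th level. -/
noncomputable def twr (i : Fin n) : topFullGroup φ :=
  MulAut.conj (phiFull φ ^ (i : ℤ)) (retMap φ A hA hf hb)

variable {φ n A}

lemma twr_zpow_coe_apply (i : Fin n) (m : ℤ) (y : X) :
    (((twr φ n A hA hf hb i ^ m : topFullGroup φ) : X ≃ₜ X)) y =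
      (φ ^ (i : ℤ)) ((((retMap φ A hA hf hb : topFullGroup φ) : X ≃ₜ X) ^ m)
        ((φ ^ (-(i : ℤ))) y)) := by
  unfold twr
  rw [← map_zpow, MulAut.conj_apply,
    show (phiFull φ ^ (i : ℤ))⁻¹ = phiFull φ ^ (-(i : ℤ)) by rw [zpow_neg],
    Subgroup.coe_mul, Subgroup.coe_mul, homeo_mul_apply, homeo_mul_apply,
    phiFull_zpow_coe, phiFull_zpow_coe, SubgroupClass.coe_zpow]

lemma twr_zpow_fix (i : Fin n) (m : ℤ) {y : X} (hy : y ∉ lev φ n A i) :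
    (((twr φ n A hA hf hb i ^ m : topFullGroup φ) : X ≃ₜ X)) y = y := by
  rw [twr_zpow_coe_apply]
  have hyA : (φ ^ (-(i : ℤ))) y ∉ A := hy
  rw [(retMap_zpow_mem_suppIn hA hf hb m).1 _ hyA, homeo_zpow_comp,
    show (i : ℤ) + -(i : ℤ) = 0 by ring]
  simp

lemma twr_zpow_mem (i : Fin n) (m : ℤ) {y : X} (hy : y ∈ lev φ n A i) :
    (((twr φ n A hA hf hb i ^ m : topFullGroup φ) : X ≃ₜ X)) y ∈ lev φ n A i := by
  rw [twr_zpow_coe_apply]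
  show (φ ^ (-(i : ℤ)))
      ((φ ^ (i : ℤ)) ((((retMap φ A hA hf hb : topFullGroup φ) : X ≃ₜ X) ^ m)
        ((φ ^ (-(i : ℤ))) y))) ∈ A
  rw [homeo_zpow_comp, show (-(i : ℤ)) + (i : ℤ) = 0 by ring]
  simp only [zpow_zero, homeo_one_apply]
  exact (retMap_zpow_mem_suppIn hA hf hb m).2 _ hy

/-- Two homeomorphisms with disjoint supports commute. -/
lemma commute_of_disjoint_supp {g h : X ≃ₜ X} {S T : Set X}
    (hg : g ∈ suppIn S) (hh : h ∈ suppIn T)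
    (hdisj : ∀ y, y ∈ S → y ∈ T → False) : Commute g h := by
  show g * h = h * g
  apply Homeomorph.ext
  intro y
  rw [homeo_mul_apply, homeo_mul_apply]
  by_cases hyS : y ∈ S
  · have hyT : y ∉ T := fun hyT => hdisj y hyS hyT
    have h1 : h y = y := hh.1 y hyT
    have h2 : g y ∈ S := hg.2 y hyS
    rw [h1, hh.1 (g y) (fun hmem => hdisj _ h2 hmem)]
  · by_cases hyT : y ∈ T
    · have h1 : g y = y := hg.1 y hyS
      have h2 : h y ∈ T := hh.2 y hyT
      rw [h1, hg.1 (h y) (fun hmem => hdisj _ hmem h2)]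
    · rw [hg.1 y hyS, hh.1 y hyT, hg.1 y hyS]

lemma twr_zpow_suppIn (i : Fin n) (m : ℤ) :
    (((twr φ n A hA hf hb i ^ m : topFullGroup φ) : X ≃ₜ X)) ∈ suppIn (lev φ n A i) :=
  ⟨fun _ hy => twr_zpow_fix hA hf hb i m hy, fun _ hy => twr_zpow_mem hA hf hb i m hy⟩

lemma twr_hcomm
    (hdis : ∀ i j : Fin n, ∀ y : X, y ∈ lev φ n A i → y ∈ lev φ n A j → i = j) :
    Pairwise fun i j : Fin n => ∀ x y : Multiplicative ℤ,
      Commute ((zpowersHom (topFullGroup φ) (twr φ n A hA hf hb i)) x)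
        ((zpowersHom (topFullGroup φ) (twr φ n A hA hf hb j)) y) := by
  intro i j hij x y
  rw [zpowersHom_apply, zpowersHom_apply]
  have key : Commute
      (((twr φ n A hA hf hb i ^ Multiplicative.toAdd x : topFullGroup φ) : X ≃ₜ X))
      (((twr φ n A hA hf hb j ^ Multiplicative.toAdd y : topFullGroup φ) : X ≃ₜ X)) :=
    commute_of_disjoint_supp (twr_zpow_suppIn hA hf hb i _) (twr_zpow_suppIn hA hf hb j _)
      (fun z hzi hzj => hij (hdis i j z hzi hzj))
  exact Subtype.ext key

variable (φ n A) in
/-- The copy of `ℤ^n` inside the topological full group. -/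
noncomputable def znHom
    (hdis : ∀ i j : Fin n, ∀ y : X, y ∈ lev φ n A i → y ∈ lev φ n A j → i = j) :
    (Fin n → Multiplicative ℤ) →* topFullGroup φ :=
  MonoidHom.noncommPiCoprod (fun i => zpowersHom (topFullGroup φ) (twr φ n A hA hf hb i))
    (twr_hcomm hA hf hb hdis)

/-- Products of homeomorphisms fixing a point fix the point. -/
lemma noncommProd_apply_eq_of_fix {ι : Type*} (F : ι → X ≃ₜ X) (y : X) :
    ∀ (s : Finset ι) (comm : (↑s : Set ι).Pairwise (Function.onFun Commute F)),
      (∀ i ∈ s, F i y = y) → (s.noncommProd F comm) y = y := by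
  classical
  intro s
  induction s using Finset.induction_on with
  | empty => intro comm h; rw [Finset.noncommProd_empty]; rfl
  | @insert a s ha ih =>
    intro comm h
    rw [Finset.noncommProd_insert_of_notMem _ _ _ _ ha, homeo_mul_apply,
      ih _ (fun i hi => h i (Finset.mem_insert_of_mem hi)), h a (Finset.mem_insert_self a s)]

lemma noncommProd_apply_eq_single {ι : Type*} (F : ι → X ≃ₜ X) (y : X) (i : ι)
    (hfix : ∀ j, j ≠ i → F j y = y) (hfix2 : ∀ j, j ≠ i → F j (F i y) = F i y) :
    ∀ (s : Finset ι) (comm : (↑s : Set ι).Pairwise (Function.onFun Commute F)),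
      i ∈ s → (s.noncommProd F comm) y = F i y := by
  classical
  intro s
  induction s using Finset.induction_on with
  | empty => intro comm h; exact absurd h (Finset.notMem_empty i)
  | @insert a s ha ih =>
    intro comm h
    rw [Finset.noncommProd_insert_of_notMem _ _ _ _ ha, homeo_mul_apply]
    rcases Finset.mem_insert.mp h with rfl | hi
    · rw [noncommProd_apply_eq_of_fix F y s _
        (fun j hj => hfix j (fun hji => ha (hji ▸ hj)))]
    · rw [ih _ hi, hfix2 a (fun haa => ha (haa ▸ hi))]

lemma znHom_apply_off
    (hdis : ∀ i j : Fin n, ∀ y : X, y ∈ lev φ n A i → y ∈ lev φ n A j → i = j)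
    (v : Fin n → Multiplicative ℤ) (y : X)
    (hy : ∀ i : Fin n, y ∉ lev φ n A i) :
    ((znHom φ n A hA hf hb hdis v : topFullGroup φ) : X ≃ₜ X) y = y := by
  show ((topFullGroup φ).subtype (Finset.univ.noncommProd
    (fun i => zpowersHom (topFullGroup φ) (twr φ n A hA hf hb i) (v i)) _)) y = y
  refine (congrArg (fun g : X ≃ₜ X => g y) (Finset.map_noncommProd _ _ _ _)).trans ?_
  apply noncommProd_apply_eq_of_fix
  intro i _
  show ((twr φ n A hA hf hb i ^ Multiplicative.toAdd (v i) : topFullGroup φ) : X ≃ₜ X) y = y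
  exact twr_zpow_fix hA hf hb i _ (hy i)

lemma znHom_apply_on
    (hdis : ∀ i j : Fin n, ∀ y : X, y ∈ lev φ n A i → y ∈ lev φ n A j → i = j)
    (v : Fin n → Multiplicative ℤ) (y : X) (i : Fin n)
    (hi : y ∈ lev φ n A i) :
    ((znHom φ n A hA hf hb hdis v : topFullGroup φ) : X ≃ₜ X) y =
      ((twr φ n A hA hf hb i ^ Multiplicative.toAdd (v i) : topFullGroup φ) : X ≃ₜ X) y := by
  show ((topFullGroup φ).subtype (Finset.univ.noncommProd
    (fun j => zpowersHom (topFullGroup φ) (twr φ n A hA hf hb j) (v j)) _)) y = _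
  refine (congrArg (fun g : X ≃ₜ X => g y) (Finset.map_noncommProd _ _ _ _)).trans ?_
  have hF : ∀ j : Fin n, ((topFullGroup φ).subtype
      (zpowersHom (topFullGroup φ) (twr φ n A hA hf hb j) (v j))) =
      ((twr φ n A hA hf hb j ^ Multiplicative.toAdd (v j) : topFullGroup φ) : X ≃ₜ X) :=
    fun j => rfl
  refine noncommProd_apply_eq_single _ y i ?_ ?_ Finset.univ _ (Finset.mem_univ i)
  · intro j hj
    rw [hF j]
    refine twr_zpow_fix hA hf hb j _ (fun hmem => hj (hdis j i y hmem hi))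
  · intro j hj
    rw [hF j, hF i]
    have hmem : ((twr φ n A hA hf hb i ^ Multiplicative.toAdd (v i) : topFullGroup φ) :
        X ≃ₜ X) y ∈ lev φ n A i := twr_zpow_mem hA hf hb i _ hi
    exact twr_zpow_fix hA hf hb j _ (fun hm => hj (hdis j i _ hm hmem))

end Tower
section Master

variable {X : Type*} [TopologicalSpace X]

lemma compat_lemma (φ : X ≃ₜ X) (n : ℕ) (A : Set X) (hA : IsClopen A)
    (hf : ∀ y : X, ∃ k : ℕ, (φ ^ ((k : ℤ) + 1)) y ∈ A)
    (hb : ∀ y : X, ∃ k : ℕ, (φ ^ (-((k : ℤ) + 1))) y ∈ A)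
    (hdis : ∀ i j : Fin n, ∀ y : X, y ∈ lev φ n A i → y ∈ lev φ n A j → i = j)
    (σ : Equiv.Perm (Fin n)) :
    (znHom φ n A hA hf hb hdis).comp (MulEquiv.toMonoidHom (permOnZn n σ)) =
      (MulEquiv.toMonoidHom (MulAut.conj (levPermHom φ n A hA hdis σ))).comp
        (znHom φ n A hA hf hb hdis) := by
  refine MonoidHom.ext fun v => Subtype.ext (Homeomorph.ext fun y => ?_)
  simp only [MonoidHom.comp_apply, MulEquiv.coe_toMonoidHom, MulAut.conj_apply]
  rw [Subgroup.coe_mul, Subgroup.coe_mul, homeo_mul_apply, homeo_mul_apply]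
  have hPinv : ∀ w : X, ((((levPermHom φ n A hA hdis σ)⁻¹ : topFullGroup φ)) : X ≃ₜ X) w =
      (φ ^ dcoc φ n A σ⁻¹ w) w := fun w => rfl
  by_cases hy : ∃ i : Fin n, y ∈ lev φ n A i
  · obtain ⟨j, hj⟩ := hy
    -- left-hand side
    have hperm : (permOnZn n σ) v = fun i => v (σ⁻¹ i) := rfl
    rw [znHom_apply_on hA hf hb hdis _ y j hj, twr_zpow_coe_apply, hperm]
    -- right-hand side
    rw [hPinv y, dcoc_on hdis σ⁻¹ hj]
    have hz : (φ ^ ((σ⁻¹ j : ℤ) - (j : ℤ))) y ∈ lev φ n A (σ⁻¹ j) := lev_map hj (σ⁻¹ j)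
    rw [znHom_apply_on hA hf hb hdis v _ (σ⁻¹ j) hz, twr_zpow_coe_apply]
    rw [homeo_zpow_comp (φ := φ) (-(σ⁻¹ j : ℤ)) ((σ⁻¹ j : ℤ) - (j : ℤ)),
      show -(σ⁻¹ j : ℤ) + ((σ⁻¹ j : ℤ) - (j : ℤ)) = -(j : ℤ) by ring]
    set w := (((retMap φ A hA hf hb : topFullGroup φ) : X ≃ₜ X) ^
      Multiplicative.toAdd (v (σ⁻¹ j))) ((φ ^ (-(j : ℤ))) y) with hw
    have hwA : w ∈ A := by
      rw [hw]
      exact (retMap_zpow_mem_suppIn hA hf hb _).2 _ hj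
    have hlev : (φ ^ ((σ⁻¹ j : ℤ))) w ∈ lev φ n A (σ⁻¹ j) := by
      show (φ ^ (-(σ⁻¹ j : ℤ))) ((φ ^ ((σ⁻¹ j : ℤ))) w) ∈ A
      rw [homeo_zpow_comp, show -(σ⁻¹ j : ℤ) + (σ⁻¹ j : ℤ) = 0 by ring]
      simpa using hwA
    show (φ ^ ((j : ℤ))) _ = ((levPermHom φ n A hA hdis σ : topFullGroup φ) : X ≃ₜ X) _
    rw [show levPermHom φ n A hA hdis σ = levPerm φ n A hA hdis σ from rfl,
      levPerm_apply, dcoc_on hdis σ hlev, (show σ (σ⁻¹ j) = j from σ.apply_symm_apply j),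
      homeo_zpow_comp, show ((j : ℤ) - (σ⁻¹ j : ℤ)) + (σ⁻¹ j : ℤ) = (j : ℤ) by ring]
  · push_neg at hy
    rw [znHom_apply_off hA hf hb hdis _ y hy]
    rw [hPinv y, dcoc_off σ⁻¹ hy]
    simp only [zpow_zero, homeo_one_apply]
    rw [znHom_apply_off hA hf hb hdis v y hy]
    rw [show levPermHom φ n A hA hdis σ = levPerm φ n A hA hdis σ from rfl,
      levPerm_apply, dcoc_off σ hy]
    simp

theorem master_embed [T1Space X] [Infinite X] (φ : X ≃ₜ X) (hmin : IsMinimalHomeo φ)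
    (n : ℕ) (A : Set X) (hA : IsClopen A)
    (hf : ∀ y : X, ∃ k : ℕ, (φ ^ ((k : ℤ) + 1)) y ∈ A)
    (hb : ∀ y : X, ∃ k : ℕ, (φ ^ (-((k : ℤ) + 1))) y ∈ A)
    (hdis : ∀ i j : Fin n, ∀ y : X, y ∈ lev φ n A i → y ∈ lev φ n A j → i = j)
    (x0 : X) (hx0 : x0 ∈ A) :
    ∃ ψ : (Fin n → Multiplicative ℤ) ⋊[permOnZn n] Equiv.Perm (Fin n) →*
        ↥(topFullGroup φ), Function.Injective ψ := by
  refine ⟨SemidirectProduct.lift (znHom φ n A hA hf hb hdis) (levPermHom φ n A hA hdis)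
    (compat_lemma φ n A hA hf hb hdis), ?_⟩
  rw [injective_iff_map_eq_one]
  rintro ⟨v, σ⟩ hg
  have hval : znHom φ n A hA hf hb hdis v * levPermHom φ n A hA hdis σ = 1 := hg
  have key : ∀ i : Fin n, σ i = i ∧ Multiplicative.toAdd (v i) = 0 := by
    intro i
    have hyi : (φ ^ ((i : ℤ))) x0 ∈ lev φ n A i := by
      show (φ ^ (-(i : ℤ))) ((φ ^ ((i : ℤ))) x0) ∈ A
      rw [homeo_zpow_comp, show -(i : ℤ) + (i : ℤ) = 0 by ring]
      simpa using hx0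
    have happ : ((znHom φ n A hA hf hb hdis v * levPermHom φ n A hA hdis σ :
        topFullGroup φ) : X ≃ₜ X) ((φ ^ ((i : ℤ))) x0) = (φ ^ ((i : ℤ))) x0 := by
      rw [hval, OneMemClass.coe_one, homeo_one_apply]
    rw [Subgroup.coe_mul, homeo_mul_apply] at happ
    have hP : ((levPermHom φ n A hA hdis σ : topFullGroup φ) : X ≃ₜ X)
        ((φ ^ ((i : ℤ))) x0) = (φ ^ ((σ i : ℤ) - (i : ℤ))) ((φ ^ ((i : ℤ))) x0) := by
      rw [show levPermHom φ n A hA hdis σ = levPerm φ n A hA hdis σ from rfl,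
        levPerm_apply, dcoc_on hdis σ hyi]
    rw [hP] at happ
    have hz : (φ ^ ((σ i : ℤ) - (i : ℤ))) ((φ ^ ((i : ℤ))) x0) ∈ lev φ n A (σ i) :=
      lev_map hyi (σ i)
    rw [znHom_apply_on hA hf hb hdis v _ (σ i) hz, twr_zpow_coe_apply] at happ
    rw [homeo_zpow_comp (φ := φ) (-(σ i : ℤ)) ((σ i : ℤ) - (i : ℤ)),
      show -(σ i : ℤ) + ((σ i : ℤ) - (i : ℤ)) = -(i : ℤ) by ring,
      homeo_zpow_comp (φ := φ) (-(i : ℤ)) ((i : ℤ)),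
      show -(i : ℤ) + (i : ℤ) = 0 by ring, zpow_zero, homeo_one_apply] at happ
    set m := Multiplicative.toAdd (v (σ i)) with hm
    set w := (((retMap φ A hA hf hb : topFullGroup φ) : X ≃ₜ X) ^ m) x0 with hwdef
    have hwA : w ∈ A := (retMap_zpow_mem_suppIn hA hf hb m).2 x0 hx0
    have hlev : (φ ^ ((σ i : ℤ))) w ∈ lev φ n A (σ i) := by
      show (φ ^ (-(σ i : ℤ))) ((φ ^ ((σ i : ℤ))) w) ∈ A
      rw [homeo_zpow_comp, show -(σ i : ℤ) + (σ i : ℤ) = 0 by ring]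
      simpa using hwA
    rw [happ] at hlev
    have hsi : σ i = i := hdis _ _ _ hlev hyi
    rw [hsi] at happ
    have hfix : w = x0 := (φ ^ ((i : ℤ))).injective happ
    have hmi : m = Multiplicative.toAdd (v i) := by rw [hm, hsi]
    refine ⟨hsi, ?_⟩
    rw [← hmi]
    by_contra hne
    rw [hwdef] at hfix
    exact retMap_zpow_ne hmin hA hf hb m hne x0 hx0 hfix
  have hσ : σ = 1 := Equiv.ext fun i => (key i).1
  have hv : v = 1 := by
    funext i
    have h0 := (key i).2
    rw [← ofAdd_toAdd (v i), h0, ofAdd_zero]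
    rfl
  rw [show (⟨v, σ⟩ : (Fin n → Multiplicative ℤ) ⋊[permOnZn n] Equiv.Perm (Fin n)) =
    ⟨1, 1⟩ by rw [hv, hσ]]
  rfl

end Master
/-- For a minimal Cantor system `(X,φ)`, each permutational wreath product
`ℤ ≀_n S_n = ℤ^n ⋊ S_n` embeds into the topological full group `𝔗(φ)`. -/
theorem wreath_product_embeds_into_topFullGroup {X : Type*} [TopologicalSpace X]
    (hX : IsCantorSpace X) (φ : X ≃ₜ X) (hmin : IsMinimalHomeo φ) :
    ∀ n : ℕ, 1 ≤ n →
      ∃ ψ : (Fin n → Multiplicative ℤ) ⋊[permOnZn n] Equiv.Perm (Fin n) →*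
          ↥(topFullGroup φ), Function.Injective ψ := by
  intro n _
  obtain ⟨E⟩ := hX
  haveI : CompactSpace X := E.symm.compactSpace
  haveI : T2Space X := E.symm.t2Space
  haveI : Infinite X := Infinite.of_injective
    (fun k : ℕ => E.symm fun m => decide (m = k))
    (by
      intro a b hab
      have h2 := congrFun (E.symm.injective hab) a
      simp at h2
      exact h2)
  set x0 : X := E.symm fun _ => false with hx0def
  have hper : ∀ s : ℤ, s ≠ 0 → ∀ x : X, (φ ^ s) x ≠ x := fun s hs x => no_periodic hmin hs x
  have hdist : ∀ i j : Fin n, i ≠ j → (φ ^ ((i : ℤ))) x0 ≠ (φ ^ ((j : ℤ))) x0 := by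
    intro i j hij heq
    have hvne : ((i : ℕ) : ℤ) ≠ ((j : ℕ) : ℤ) := by
      have : (i : ℕ) ≠ (j : ℕ) := fun h => hij (Fin.val_injective h)
      exact_mod_cast this
    refine hper ((i : ℤ) - (j : ℤ)) (by omega) ((φ ^ ((j : ℤ))) x0) ?_
    rw [homeo_zpow_comp, show ((i : ℤ) - (j : ℤ)) + (j : ℤ) = (i : ℤ) by ring]
    exact heq
  have hsep : ∀ u w : X, u ≠ w → ∃ C : Set X, IsClopen C ∧ u ∈ C ∧ w ∉ C := by
    intro u w huw
    have h1 : E u ≠ E w := fun h => huw (E.injective h)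
    obtain ⟨m, hm⟩ := Function.ne_iff.mp h1
    refine ⟨E ⁻¹' {f | f m = E u m}, ?_, ?_, ?_⟩
    · have hcl : IsClopen {f : ℕ → Bool | f m = E u m} :=
        (isClopen_discrete {E u m}).preimage (continuous_apply m)
      exact hcl.preimage E.continuous
    · simp
    · intro h
      exact hm (Set.mem_preimage.mp h).symm
  have hC : ∀ i j : Fin n, ∃ C : Set X, IsClopen C ∧
      (i ≠ j → (φ ^ ((i : ℤ))) x0 ∈ C ∧ (φ ^ ((j : ℤ))) x0 ∉ C) := by
    intro i j
    by_cases hij : i = j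
    · exact ⟨∅, isClopen_empty, fun h => absurd hij h⟩
    · obtain ⟨Cs, h1, h2, h3⟩ := hsep _ _ (hdist i j hij)
      exact ⟨Cs, h1, fun _ => ⟨h2, h3⟩⟩
  choose C hCcl hCspec using hC
  set W : Fin n → Set X := fun i => ⋂ j ∈ Finset.univ.erase i, (C i j ∩ (C j i)ᶜ) with hW
  have hWcl : ∀ i, IsClopen (W i) := fun i =>
    isClopen_biInter_finset fun j _ => (hCcl i j).inter (hCcl j i).compl
  have hWmem : ∀ i, (φ ^ ((i : ℤ))) x0 ∈ W i := by
    intro i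
    refine Set.mem_iInter₂.mpr fun j hj => ?_
    have hji : j ≠ i := (Finset.mem_erase.mp hj).1
    exact ⟨(hCspec i j (Ne.symm hji)).1, (hCspec j i hji).2⟩
  have hWdis : ∀ i j : Fin n, ∀ y : X, y ∈ W i → y ∈ W j → i = j := by
    intro i j y hyi hyj
    by_contra hij
    have h1 : y ∈ C i j ∩ (C j i)ᶜ :=
      Set.mem_iInter₂.mp hyi j (Finset.mem_erase.mpr ⟨Ne.symm hij, Finset.mem_univ j⟩)
    have h2 : y ∈ C j i ∩ (C i j)ᶜ :=
      Set.mem_iInter₂.mp hyj i (Finset.mem_erase.mpr ⟨hij, Finset.mem_univ i⟩)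
    exact h1.2 h2.1
  set A : Set X := ⋂ j ∈ Finset.univ (α := Fin n), {y | (φ ^ ((j : ℤ))) y ∈ W j} with hAdef
  have hA : IsClopen A :=
    isClopen_biInter_finset fun j _ => (hWcl j).preimage (φ ^ ((j : ℤ))).continuous
  have hx0A : x0 ∈ A := Set.mem_iInter₂.mpr fun j _ => hWmem j
  have hWofA : ∀ (j : Fin n) (y : X), y ∈ lev φ n A j → y ∈ W j := by
    intro j y hyj
    have hyA : (φ ^ (-(j : ℤ))) y ∈ A := hyj
    have h := Set.mem_iInter₂.mp hyA j (Finset.mem_univ j)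
    have h2 : (φ ^ ((j : ℤ))) ((φ ^ (-(j : ℤ))) y) ∈ W j := h
    rwa [homeo_zpow_comp, show (j : ℤ) + -(j : ℤ) = 0 by ring, zpow_zero,
      homeo_one_apply] at h2
  have hdis : ∀ i j : Fin n, ∀ y : X, y ∈ lev φ n A i → y ∈ lev φ n A j → i = j :=
    fun i j y hyi hyj => hWdis i j y (hWofA i y hyi) (hWofA j y hyj)
  have hAopen : IsOpen A := hA.isOpen
  have hAne : A.Nonempty := ⟨x0, hx0A⟩
  have hcov : (Set.univ : Set X) ⊆ ⋃ m : ℤ, (fun y => (φ ^ m) y) ⁻¹' A := by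
    intro y _
    obtain ⟨z, ⟨m, rfl⟩, hzA⟩ := (hmin y).exists_mem_open hAopen hAne
    exact Set.mem_iUnion.mpr ⟨m, hzA⟩
  obtain ⟨t, ht⟩ := isCompact_univ.elim_finite_subcover
    (fun m : ℤ => (fun y => (φ ^ m) y) ⁻¹' A)
    (fun m => hAopen.preimage (φ ^ m).continuous) hcov
  set M : ℕ := t.sup fun m => m.natAbs with hM
  have hMbound : ∀ m ∈ t, m.natAbs ≤ M := fun m hm => Finset.le_sup hm
  have hfwd : ∀ y : X, ∃ k : ℕ, (φ ^ ((k : ℤ) + 1)) y ∈ A := by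
    intro y
    have hz := ht (Set.mem_univ ((φ ^ ((M : ℤ) + 1)) y))
    rw [Set.mem_iUnion₂] at hz
    obtain ⟨m, hmt, hmem⟩ := hz
    have hbnd : m.natAbs ≤ M := hMbound m hmt
    refine ⟨(m + M).toNat, ?_⟩
    have hcst : ((m + M).toNat : ℤ) + 1 = m + ((M : ℤ) + 1) := by
      rw [Int.toNat_of_nonneg (by omega)]; ring
    rw [hcst, homeo_zpow_add_apply]
    exact hmem
  have hbwd : ∀ y : X, ∃ k : ℕ, (φ ^ (-((k : ℤ) + 1))) y ∈ A := by
    intro y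
    have hz := ht (Set.mem_univ ((φ ^ (-(M : ℤ) - 1)) y))
    rw [Set.mem_iUnion₂] at hz
    obtain ⟨m, hmt, hmem⟩ := hz
    have hbnd : m.natAbs ≤ M := hMbound m hmt
    refine ⟨(M - m).toNat, ?_⟩
    have hcst : -(((M - m).toNat : ℤ) + 1) = m + (-(M : ℤ) - 1) := by
      rw [Int.toNat_of_nonneg (by omega)]; ring
    rw [hcst, homeo_zpow_add_apply]
    exact hmem
  exact master_embed φ hmin n A hA hfwd hbwd hdis x0 hx0A
end

section
/- Let (X,φ) be a minimal Cantor system and let A, B be clopen subsets of X such that μ(B) < μ(A) for every φ-invariant Borel probability measure μ on X. Then there exists γ ∈ 𝔗(φ) such that γ(B) ⊆ A, γ² = id, and γ(x) = x for all x ∈ X \ (B ∪ γ(B)). -/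
open Set Filter Topology

namespace GW

variable {X : Type*} [TopologicalSpace X]

open Classical in
/-- Number of times the orbit segment `y, φ y, …, φ^(N-1) y` visits `U`. -/
noncomputable def cnt (φ : X ≃ₜ X) (U : Set X) (y : X) (N : ℕ) : ℕ :=
  ∑ j ∈ Finset.range N, if (φ ^ j) y ∈ U then 1 else 0

open Classical in
lemma cnt_succ (φ : X ≃ₜ X) (U : Set X) (y : X) (N : ℕ) :
    cnt φ U y (N + 1) = cnt φ U y N + if (φ ^ N) y ∈ U then 1 else 0 :=
  Finset.sum_range_succ _ _

lemma cnt_univ (φ : X ≃ₜ X) (y : X) (N : ℕ) : cnt φ Set.univ y N = N := by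
  simp [cnt]

lemma cnt_le (φ : X ≃ₜ X) (U : Set X) (y : X) (N : ℕ) : cnt φ U y N ≤ N := by
  classical
  calc cnt φ U y N ≤ ∑ j ∈ Finset.range N, 1 := Finset.sum_le_sum (by intro i _; split <;> omega)
  _ = N := by simp

lemma cnt_empty (φ : X ≃ₜ X) (y : X) (N : ℕ) : cnt φ (∅ : Set X) y N = 0 := by
  simp [cnt]

lemma cnt_subcover (φ : X ≃ₜ X) {U : Set X} {ι : Type*} {t : Finset ι} {f : ι → Set X}
    (h : U ⊆ ⋃ i ∈ t, f i) (y : X) (N : ℕ) :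
    cnt φ U y N ≤ ∑ i ∈ t, cnt φ (f i) y N := by
  classical
  have step : ∀ j ∈ Finset.range N, (if (φ ^ j) y ∈ U then 1 else 0)
      ≤ ∑ i ∈ t, if (φ ^ j) y ∈ f i then 1 else 0 := by
    intro j _
    split_ifs with hU
    · obtain ⟨i, hi, hmem⟩ : ∃ i ∈ t, (φ ^ j) y ∈ f i := by simpa using h hU
      calc (1 : ℕ) = ∑ i ∈ ({i} : Finset ι), if (φ ^ j) y ∈ f i then 1 else 0 := by rw [Finset.sum_singleton]; simp [hmem]
      _ ≤ ∑ i ∈ t, if (φ ^ j) y ∈ f i then 1 else 0 :=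
          Finset.sum_le_sum_of_subset (Finset.singleton_subset_iff.2 hi)
    · exact Nat.zero_le _
  calc cnt φ U y N ≤ ∑ j ∈ Finset.range N, ∑ i ∈ t, if (φ ^ j) y ∈ f i then 1 else 0 :=
      Finset.sum_le_sum step
  _ = ∑ i ∈ t, cnt φ (f i) y N := by rw [Finset.sum_comm]; rfl

lemma cnt_inter_diff (φ : X ≃ₜ X) (T U : Set X) (y : X) (N : ℕ) :
    cnt φ (T ∩ U) y N + cnt φ (T \ U) y N = cnt φ T y N := by
  classical
  rw [cnt, cnt, cnt, ← Finset.sum_add_distrib]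
  refine Finset.sum_congr rfl fun j _ => ?_
  by_cases h1 : (φ ^ j) y ∈ T <;> by_cases h2 : (φ ^ j) y ∈ U <;>
    simp [Set.mem_inter_iff, Set.mem_diff, h1, h2]

/-- Shifting the counting window by one changes the count by at most 1. -/
lemma cnt_preimage_le (φ : X ≃ₜ X) (U : Set X) (y : X) (N : ℕ) :
    cnt φ (φ ⁻¹' U) y N ≤ cnt φ U y N + 1 ∧ cnt φ U y N ≤ cnt φ (φ ⁻¹' U) y N + 1 := by
  classical
  have hpre : ∀ j, (φ ^ j) y ∈ φ ⁻¹' U ↔ (φ ^ (j + 1)) y ∈ U := by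
    intro j
    have : (φ ^ (j + 1)) y = φ ((φ ^ j) y) := by rw [pow_succ']; rfl
    simp [Set.mem_preimage, this]
  have key : cnt φ (φ ⁻¹' U) y N + (if y ∈ U then 1 else 0)
      = cnt φ U y N + (if (φ ^ N) y ∈ U then 1 else 0) := by
    have h1 : (∑ j ∈ Finset.range (N + 1), if (φ ^ j) y ∈ U then 1 else 0)
        = cnt φ (φ ⁻¹' U) y N + (if y ∈ U then 1 else 0) := by
      rw [Finset.sum_range_succ']
      congr 1
      exact Finset.sum_congr rfl fun j _ => by rw [← hpre j]
    have h2 : (∑ j ∈ Finset.range (N + 1), if (φ ^ j) y ∈ U then 1 else 0)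
        = cnt φ U y N + (if (φ ^ N) y ∈ U then 1 else 0) := Finset.sum_range_succ _ _
    rw [← h1, h2]
  constructor <;> (revert key; split_ifs <;> omega)

end GW

namespace GW
open scoped ENNReal
open MeasureTheory in
lemma exists_invariant_measure_le {X : Type*} [TopologicalSpace X] [MeasurableSpace X]
    [BorelSpace X] (hX : IsCantorSpace X) (φ : X ≃ₜ X) {A B : Set X}
    (hA : IsClopen A) (hB : IsClopen B)
    (h : ∀ N : ℕ, ∃ y, cnt φ A y (N + 1) ≤ cnt φ B y (N + 1)) :
    ∃ μ : Measure X, IsProbabilityMeasure μ ∧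
      (∀ E : Set X, MeasurableSet E → μ (φ ⁻¹' E) = μ E) ∧ μ A ≤ μ B := by
  classical
  obtain ⟨h0⟩ := hX
  haveI : CompactSpace X := h0.symm.compactSpace
  haveI : T2Space X := h0.symm.t2Space
  haveI : SecondCountableTopology X := h0.secondCountableTopology
  haveI : TotallyDisconnectedSpace X := by
    rw [← h0.isEmbedding.isTotallyDisconnected_range, Homeomorph.range_coe]
    exact (totallyDisconnectedSpace_iff _).1 inferInstance
  choose y hy using h
  set ν : ℕ → Set X → ℝ := fun N U => (cnt φ U (y N) (N + 1) : ℝ) / (N + 1) with hν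
  have hνnn : ∀ N U, 0 ≤ ν N U := fun N U => div_nonneg (Nat.cast_nonneg _) (by positivity)
  have hνle : ∀ N U, ν N U ≤ 1 := by
    intro N U
    rw [hν, div_le_one (by positivity)]
    exact_mod_cast cnt_le φ U (y N) (N + 1)
  set 𝒰 : Ultrafilter ℕ := Ultrafilter.of Filter.atTop with h𝒰def
  have h𝒰 : (𝒰 : Filter ℕ) ≤ Filter.atTop := Ultrafilter.of_le _
  have hex : ∀ U : Set X, ∃ a, Filter.Tendsto (fun N => ν N U) 𝒰 (nhds a) := by
    intro U
    have hmem : (𝒰.map fun N => ν N U : Filter ℝ) ≤ Filter.principal (Set.Icc (0:ℝ) 1) := by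
      rw [Ultrafilter.coe_map, Filter.le_principal_iff]
      exact Filter.mem_map.2 (Filter.univ_mem' fun N => ⟨hνnn N U, hνle N U⟩)
    obtain ⟨a, -, ha⟩ := (isCompact_Icc (a := (0:ℝ)) (b := 1)).ultrafilter_le_nhds _ hmem
    exact ⟨a, by rw [Filter.Tendsto, ← Ultrafilter.coe_map]; exact ha⟩
  choose L hL using hex
  have hLnn : ∀ U, 0 ≤ L U :=
    fun U => ge_of_tendsto (hL U) (Filter.Eventually.of_forall fun N => hνnn N U)
  have hLuniv : L Set.univ = 1 := by
    refine tendsto_nhds_unique (hL _) ?_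
    have he : (fun N => ν N Set.univ) = fun _ => (1:ℝ) := funext fun N => by
      rw [hν]; simp only; rw [cnt_univ]; field_simp; norm_num
    rw [he]; exact tendsto_const_nhds
  have hLempty : L ∅ = 0 := by
    refine tendsto_nhds_unique (hL _) ?_
    have he : (fun N => ν N (∅ : Set X)) = fun _ => (0:ℝ) := funext fun N => by
      rw [hν]; simp only; rw [cnt_empty]; simp
    rw [he]; exact tendsto_const_nhds
  have hLadd : ∀ T U : Set X, L (T ∩ U) + L (T \ U) = L T := by
    intro T U
    have he : (fun N => ν N (T ∩ U) + ν N (T \ U)) = fun N => ν N T := funext fun N => by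
      rw [hν]; simp only; rw [← add_div, ← Nat.cast_add, cnt_inter_diff]
    exact tendsto_nhds_unique ((hL _).add (hL _)) (he ▸ hL T)
  have hLsub : ∀ {U : Set X} {ι : Type} {t : Finset ι} {f : ι → Set X},
      U ⊆ ⋃ i ∈ t, f i → L U ≤ ∑ i ∈ t, L (f i) := by
    intro U ι t f hcov
    have h1 : Filter.Tendsto (fun N => ∑ i ∈ t, ν N (f i)) 𝒰 (nhds (∑ i ∈ t, L (f i))) :=
      tendsto_finset_sum _ fun i _ => hL (f i)
    refine le_of_tendsto_of_tendsto' (hL U) h1 fun N => ?_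
    rw [hν]; simp only
    rw [← Finset.sum_div]
    gcongr
    exact_mod_cast cnt_subcover φ hcov (y N) (N + 1)
  have hLinv : ∀ U : Set X, L (φ ⁻¹' U) = L U := by
    intro U
    have hd : Filter.Tendsto (fun N => ν N (φ ⁻¹' U) - ν N U) Filter.atTop (nhds 0) := by
      apply squeeze_zero_norm ?_ tendsto_one_div_add_atTop_nhds_zero_nat
      intro N
      obtain ⟨hle1, hle2⟩ := cnt_preimage_le φ U (y N) (N + 1)
      rw [Real.norm_eq_abs, abs_sub_le_iff]
      constructor
      · rw [hν]; simp only; rw [div_sub_div_same]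
        have h' : (cnt φ (φ ⁻¹' U) (y N) (N + 1) : ℝ) - cnt φ U (y N) (N + 1) ≤ 1 := by
          have h'' : (cnt φ (φ ⁻¹' U) (y N) (N + 1) : ℝ)
              ≤ (cnt φ U (y N) (N + 1) : ℝ) + 1 := by exact_mod_cast hle1
          linarith
        gcongr
      · rw [hν]; simp only; rw [div_sub_div_same]
        have h' : (cnt φ U (y N) (N + 1) : ℝ) - cnt φ (φ ⁻¹' U) (y N) (N + 1) ≤ 1 := by
          have h'' : (cnt φ U (y N) (N + 1) : ℝ)
              ≤ (cnt φ (φ ⁻¹' U) (y N) (N + 1) : ℝ) + 1 := by exact_mod_cast hle2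
          linarith
        gcongr
    have h2 : Filter.Tendsto (fun N => ν N U + (ν N (φ ⁻¹' U) - ν N U)) 𝒰
        (nhds (L U + 0)) := (hL U).add (hd.mono_left h𝒰)
    have he : (fun N => ν N U + (ν N (φ ⁻¹' U) - ν N U)) = fun N => ν N (φ ⁻¹' U) :=
      funext fun N => by ring
    rw [he, add_zero] at h2
    exact tendsto_nhds_unique (hL _) h2
  have hLAB : L A ≤ L B := by
    refine le_of_tendsto_of_tendsto' (hL A) (hL B) fun N => ?_
    rw [hν]; simp only
    gcongr
    exact_mod_cast hy N
  -- build the measure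
  set mo : Set X → ℝ≥0∞ := fun U => if IsClopen U then ENNReal.ofReal (L U) else ⊤ with hmo
  have hmo0 : mo ∅ = 0 := by rw [hmo]; simp [isClopen_empty, hLempty]
  set om := OuterMeasure.ofFunction mo hmo0 with hom
  have hcar : ∀ {U : Set X}, IsClopen U → MeasurableSet[om.caratheodory] U := by
    intro U hU
    apply OuterMeasure.ofFunction_caratheodory
    intro t
    rcases Classical.em (IsClopen t) with ht | ht
    · have h1 : IsClopen (t ∩ U) := ht.inter hU
      have h2 : IsClopen (t \ U) := by rw [Set.diff_eq]; exact ht.inter hU.compl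
      rw [hmo]; simp only [h1, h2, ht, if_true]
      rw [← ENNReal.ofReal_add (hLnn _) (hLnn _), hLadd t U]
    · rw [hmo]; simp only [ht, if_false]; exact le_top
  have homval : ∀ {U : Set X}, IsClopen U → om U = ENNReal.ofReal (L U) := by
    intro U hU
    refine le_antisymm ?_ ?_
    · refine le_trans (OuterMeasure.ofFunction_le U) ?_
      rw [hmo]; simp [hU]
    · rw [hom, OuterMeasure.ofFunction_apply]
      refine le_iInf fun f => le_iInf fun hf => ?_
      rcases Classical.em (∀ i, IsClopen (f i)) with hcl | hcl
      · obtain ⟨t, ht⟩ := hU.isClosed.isCompact.elim_finite_subcover f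
          (fun i => (hcl i).isOpen) hf
        calc ENNReal.ofReal (L U) ≤ ENNReal.ofReal (∑ i ∈ t, L (f i)) :=
              ENNReal.ofReal_le_ofReal (hLsub ht)
        _ = ∑ i ∈ t, ENNReal.ofReal (L (f i)) :=
              ENNReal.ofReal_sum_of_nonneg fun i _ => hLnn _
        _ = ∑ i ∈ t, mo (f i) := by
              refine Finset.sum_congr rfl fun i _ => ?_; rw [hmo]; simp [hcl i]
        _ ≤ ∑' i, mo (f i) := ENNReal.sum_le_tsum t
      · push_neg at hcl; obtain ⟨i, hi⟩ := hcl
        refine le_trans le_top ?_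
        calc (⊤ : ℝ≥0∞) = mo (f i) := by rw [hmo]; simp [hi]
        _ ≤ ∑' i, mo (f i) := ENNReal.le_tsum i
  have hopen : ∀ (m : MeasurableSpace X), (∀ U : Set X, IsClopen U → MeasurableSet[m] U) →
      ∀ V : Set X, IsOpen V → MeasurableSet[m] V := by
    intro m hm V hV
    obtain ⟨T, hTc, hTsub, hTun⟩ := TopologicalSpace.isOpen_sUnion_countable
      {W : Set X | IsClopen W ∧ W ⊆ V} (fun W hW => hW.1.isOpen)
    have hVeq : V = ⋃₀ T := by
      rw [hTun]
      have h2 := isTopologicalBasis_isClopen (X := X) |>.open_eq_sUnion' hV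
      convert h2 using 2
      rfl
    rw [hVeq]
    exact MeasurableSet.sUnion hTc fun W hW => hm W (hTsub hW).1
  have hborel : (inferInstance : MeasurableSpace X) ≤ om.caratheodory := by
    rw [BorelSpace.measurable_eq (α := X), borel]
    exact MeasurableSpace.generateFrom_le fun V hV =>
      hopen om.caratheodory (fun U hU => hcar hU) V hV
  set μ := om.toMeasure hborel with hμ
  have hμval : ∀ {U : Set X}, IsClopen U → μ U = ENNReal.ofReal (L U) := by
    intro U hU
    rw [hμ, toMeasure_apply _ _ hU.isOpen.measurableSet]
    exact homval hU
  haveI hprob : IsProbabilityMeasure μ :=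
    ⟨by rw [hμval isClopen_univ, hLuniv, ENNReal.ofReal_one]⟩
  have hgen : (inferInstance : MeasurableSpace X)
      = MeasurableSpace.generateFrom {s : Set X | IsClopen s} := by
    refine le_antisymm ?_ (MeasurableSpace.generateFrom_le fun s hs => hs.isOpen.measurableSet)
    rw [BorelSpace.measurable_eq (α := X), borel]
    exact MeasurableSpace.generateFrom_le fun V hV =>
      hopen _ (fun U hU => MeasurableSpace.measurableSet_generateFrom hU) V hV
  haveI : IsProbabilityMeasure (μ.map φ) :=
    Measure.isProbabilityMeasure_map φ.continuous.measurable.aemeasurable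
  have hmap : μ.map φ = μ := by
    refine ext_of_generate_finite _ hgen (fun s hs t ht _ => hs.inter ht) ?_ ?_
    · intro s hs
      rw [Measure.map_apply φ.continuous.measurable hs.isOpen.measurableSet,
        hμval (hs.preimage φ.continuous), hμval hs, hLinv]
    · simp [measure_univ]
  refine ⟨μ, hprob, ?_, ?_⟩
  · intro E hE
    rw [← Measure.map_apply φ.continuous.measurable hE, hmap]
  · rw [hμval hA, hμval hB]; exact ENNReal.ofReal_le_ofReal hLAB

end GW


namespace GW

variable {X : Type*} [TopologicalSpace X]

lemma cnt_zero (φ : X ≃ₜ X) (U : Set X) (y : X) : cnt φ U y 0 = 0 := by simp [cnt]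

lemma cont_ite {S : Set X} [DecidablePred (· ∈ S)] (hS : IsClopen S) (a b : ℤ) :
    Continuous fun x => if x ∈ S then a else b := by
  rw [continuous_iff_continuousAt]
  intro x
  by_cases hx : x ∈ S
  · refine ContinuousAt.congr (f := fun _ => a) continuousAt_const ?_
    exact Filter.eventuallyEq_of_mem (hS.isOpen.mem_nhds hx) fun y hy => (if_pos hy).symm
  · refine ContinuousAt.congr (f := fun _ => b) continuousAt_const ?_
    exact Filter.eventuallyEq_of_mem (hS.compl.isOpen.mem_nhds hx) fun y hy => (if_neg hy).symm

open Classical in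
lemma cnt_cast_int (φ : X ≃ₜ X) (U : Set X) (y : X) (m : ℕ) :
    (cnt φ U y m : ℤ) = ∑ j ∈ Finset.range m, if (φ ^ j) y ∈ U then 1 else 0 := by
  rw [cnt]
  push_cast [apply_ite (fun n : ℕ => (n : ℤ))]
  rfl

lemma exists_involution (φ : X ≃ₜ X) {A B : Set X}
    (hA : IsClopen A) (hB : IsClopen B) (hdisj : A ∩ B = ∅) (N : ℕ)
    (hN : ∀ y, cnt φ B y (N + 1) < cnt φ A y (N + 1)) :
    ∃ γ ∈ topFullGroup φ, ⇑γ '' B ⊆ A ∧ γ * γ = 1 ∧ ∀ x ∉ B ∪ ⇑γ '' B, γ x = x := by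
  classical
  set F : X → ℕ → ℤ := fun x m => (cnt φ A (φ x) m : ℤ) - cnt φ B (φ x) m with hF
  have hstep : ∀ x m, F x (m + 1) = F x m +
      ((if (φ ^ (m + 1)) x ∈ A then 1 else 0) - (if (φ ^ (m + 1)) x ∈ B then 1 else 0)) := by
    intro x m
    have hpt : (φ ^ m) (φ x) = (φ ^ (m + 1)) x := by rw [pow_succ]; rfl
    simp only [hF]
    rw [cnt_succ, cnt_succ, hpt]
    push_cast [apply_ite (fun n : ℕ => (n : ℤ))]
    ring
  have hF0 : ∀ x, F x 0 = 0 := by intro x; simp only [hF, cnt_zero]; ring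
  have hFN : ∀ x : X, 1 ≤ F x (N + 1) := by
    intro x
    have := hN (φ x)
    simp only [hF]
    omega
  have hFstep_le : ∀ x m, F x (m + 1) ≤ F x m + 1 := by
    intro x m
    rw [hstep]
    split_ifs <;> omega
  have hFex : ∀ x, ∃ m, 1 ≤ F x (m + 1) := fun x => ⟨N, hFN x⟩
  set k : X → ℕ := fun x => Nat.find (hFex x) + 1 with hk
  have hkspec : ∀ x, 1 ≤ F x (k x) := fun x => Nat.find_spec (hFex x)
  have hkpos : ∀ x, 1 ≤ k x := fun x => by simp only [hk]; omega
  have hkmin : ∀ x m, m < k x → F x m ≤ 0 := by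
    intro x m hm
    match m with
    | 0 => exact le_of_eq (hF0 x)
    | (j + 1) =>
      have hj : j < Nat.find (hFex x) := by simp only [hk] at hm; omega
      have := Nat.find_min (hFex x) hj
      omega
  have hkN : ∀ x, k x ≤ N + 1 := by
    intro x
    have := Nat.find_min' (hFex x) (hFN x)
    simp only [hk]; omega
  have hkval : ∀ x, F x (k x) = 1 := by
    intro x
    have h1 := hkspec x
    have h2 : F x (Nat.find (hFex x)) ≤ 0 := hkmin x _ (by simp only [hk]; omega)
    have h3 := hFstep_le x (Nat.find (hFex x))
    have hkx : k x = Nat.find (hFex x) + 1 := by simp only [hk]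
    rw [hkx] at h1 ⊢
    omega
  have hkA : ∀ x, (φ ^ k x) x ∈ A := by
    intro x
    have hs := hstep x (Nat.find (hFex x))
    have hkx : k x = Nat.find (hFex x) + 1 := by simp only [hk]
    have h1 : F x (Nat.find (hFex x)) ≤ 0 := hkmin x _ (by omega)
    have h2 : F x (Nat.find (hFex x) + 1) = 1 := by rw [← hkx]; exact hkval x
    rw [hkx]
    by_contra hnA
    rw [if_neg hnA] at hs
    split_ifs at hs <;> omega
  -- continuity of the Birkhoff sums, hence local constancy of `k`
  have hFcont : ∀ m, Continuous fun x => F x m := by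
    intro m
    have h1 : ∀ (U : Set X), IsClopen U → Continuous fun x : X => (cnt φ U (φ x) m : ℤ) := by
      intro U hU
      have he : (fun x : X => (cnt φ U (φ x) m : ℤ))
          = fun x => ∑ j ∈ Finset.range m,
              if x ∈ (fun z => (φ ^ j) (φ z)) ⁻¹' U then 1 else 0 :=
        funext fun x => cnt_cast_int φ U (φ x) m
      rw [he]
      refine continuous_finset_sum _ fun j _ => ?_
      have hcl : IsClopen ((fun z => (φ ^ j) (φ z)) ⁻¹' U) :=
        hU.preimage ((φ ^ j).continuous.comp φ.continuous)
      exact cont_ite hcl 1 0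
    have he : (fun x => F x m)
        = fun x => (cnt φ A (φ x) m : ℤ) - (cnt φ B (φ x) m : ℤ) := by
      funext x; simp only [hF]
    rw [he]
    exact (h1 A hA).sub (h1 B hB)
  have hkloc : ∀ x : X, ∀ᶠ z in nhds x, k z = k x := by
    intro x
    have hev : ∀ᶠ z in nhds x, ∀ m ∈ Finset.range (N + 2), F z m = F x m := by
      rw [eventually_all_finset]
      intro m _
      have hop : IsOpen {z | F z m = F x m} :=
        (hFcont m).isOpen_preimage {F x m} (isOpen_discrete _)
      exact hop.mem_nhds rfl
    filter_upwards [hev] with z hz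
    have hfind : Nat.find (hFex z) = Nat.find (hFex x) := by
      rw [Nat.find_eq_iff]
      constructor
      · rw [hz _ (Finset.mem_range.2 (by have := hkN x; simp only [hk] at this; omega))]
        exact Nat.find_spec (hFex x)
      · intro n hn
        rw [hz _ (Finset.mem_range.2 (by have := hkN x; simp only [hk] at this; omega))]
        exact Nat.find_min (hFex x) hn
    simp only [hk, hfind]
  have hfibopen : ∀ m : ℕ, IsOpen {x | k x = m} := by
    intro m
    refine isOpen_iff_mem_nhds.2 fun x hx => ?_
    filter_upwards [hkloc x] with z hz
    show k z = m
    rw [hz]; exact hx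
  have hfib : ∀ m : ℕ, IsClopen {x | k x = m} := by
    intro m
    refine ⟨?_, hfibopen m⟩
    rw [← isOpen_compl_iff]
    have hce : {x | k x = m}ᶜ = ⋃ m' ∈ {m' : ℕ | m' ≠ m}, {x | k x = m'} := by
      ext x
      simp only [Set.mem_compl_iff, Set.mem_setOf_eq, Set.mem_iUnion]
      constructor
      · intro h; exact ⟨k x, h, rfl⟩
      · rintro ⟨m', h1, h2⟩; rw [h2]; exact h1
    rw [hce]
    exact isOpen_biUnion fun m' _ => hfibopen m'
  -- the pieces
  set Bm : ℕ → Set X := fun m => B ∩ {x | k x = m} with hBm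
  set Cm : ℕ → Set X := fun m => (φ ^ m) '' Bm m with hCm
  have hBmclopen : ∀ m, IsClopen (Bm m) := fun m => hB.inter (hfib m)
  have hCmclopen : ∀ m, IsClopen (Cm m) := by
    intro m
    have he : Cm m = ((φ ^ m).symm) ⁻¹' (Bm m) := (φ ^ m).image_eq_preimage_symm _
    rw [he]
    exact (hBmclopen m).preimage (φ ^ m).symm.continuous
  have hCmA : ∀ m x, x ∈ Cm m → x ∈ A := by
    rintro m x ⟨z, ⟨hzB, hzk⟩, rfl⟩
    have h := hkA z
    have hm : k z = m := hzk
    rwa [hm] at h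
  -- shifted Birkhoff sums
  have hshift : ∀ (z : X) (d m : ℕ), F ((φ ^ d) z) m = F z (d + m) - F z d := by
    intro z d m
    induction m with
    | zero => rw [Nat.add_zero, hF0, sub_self]
    | succ m ih =>
      have hpt : (φ ^ (m + 1)) ((φ ^ d) z) = (φ ^ (d + m + 1)) z := by
        rw [← homeo_mul_apply, ← pow_add]
        have he : m + 1 + d = d + m + 1 := by omega
        rw [he]
      have h2 := hstep z (d + m)
      have h3 := hstep ((φ ^ d) z) m
      rw [hpt] at h3
      have he : d + (m + 1) = d + m + 1 := by omega
      rw [h3, ih, he, h2]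
      ring
  -- injectivity of the matching
  have haux : ∀ z z', z ∈ B → z' ∈ B → k z' ≤ k z → (φ ^ k z) z = (φ ^ k z') z' → z = z' := by
    intro z z' hz hz' hle heq
    set d := k z - k z' with hd
    have hdk : k z = k z' + d := by omega
    have hz'eq : z' = (φ ^ d) z := by
      apply (φ ^ k z').injective
      rw [← homeo_mul_apply, ← pow_add, ← hdk, heq]
    rcases Nat.eq_zero_or_pos d with h0 | h0
    · rw [hz'eq, h0, pow_zero]
      simp
    · exfalso
      have hdlt : d < k z := by have := hkpos z'; omega
      have h1 : F z (d - 1) ≤ 0 := hkmin z _ (by omega)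
      have h2 : F z d ≤ -1 := by
        have hs := hstep z (d - 1)
        have hd1 : d - 1 + 1 = d := by omega
        rw [hd1] at hs
        have hmem : (φ ^ d) z ∈ B := by rw [← hz'eq]; exact hz'
        have hnA : (φ ^ d) z ∉ A := by
          intro hga
          have hin : (φ ^ d) z ∈ A ∩ B := ⟨hga, hmem⟩
          rw [hdisj] at hin
          exact hin
        rw [if_neg hnA, if_pos hmem] at hs
        omega
      have hdk2 : d + k z' = k z := by omega
      have h3 : F z' (k z') = F z (k z) - F z d := by
        have hsh := hshift z d (k z')
        rw [← hz'eq] at hsh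
        rw [hsh, hdk2]
      have h4 := hkval z'
      have h5 := hkval z
      have h6 := hkmin z d (by omega)
      omega
  have hinj : ∀ z z', z ∈ B → z' ∈ B → (φ ^ k z) z = (φ ^ k z') z' → z = z' := by
    intro z z' hz hz' heq
    rcases le_total (k z') (k z) with hle | hle
    · exact haux z z' hz hz' hle heq
    · exact (haux z' z hz' hz hle heq.symm).symm
  -- the cocycle
  set f : X → ℤ := fun x => ∑ m ∈ Finset.range (N + 2),
      ((if x ∈ Bm m then (m : ℤ) else 0) - (if x ∈ Cm m then (m : ℤ) else 0)) with hf
  have hxnB : ∀ m x, x ∈ Cm m → x ∉ B := by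
    intro m x hxC hxB
    have hin : x ∈ A ∩ B := ⟨hCmA m x hxC, hxB⟩
    rw [hdisj] at hin
    exact hin
  have hfB : ∀ x, x ∈ B → f x = k x := by
    intro x hx
    simp only [hf]
    rw [Finset.sum_sub_distrib]
    have hC0 : ∀ m ∈ Finset.range (N + 2), (if x ∈ Cm m then (m : ℤ) else 0) = 0 :=
      fun m _ => if_neg (fun hmem => hxnB m x hmem hx)
    rw [Finset.sum_congr rfl hC0, Finset.sum_const_zero, sub_zero]
    rw [Finset.sum_eq_single (k x)]
    · rw [if_pos ⟨hx, rfl⟩]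
    · intro m _ hm
      exact if_neg fun hmem => hm (hmem.2 : k x = m).symm
    · intro hnot
      exact absurd (Finset.mem_range.2 (by have := hkN x; omega)) hnot
  have hfC : ∀ m x, x ∈ Cm m → f x = -(m : ℤ) := by
    intro m x hx
    obtain ⟨z, hzBm, rfl⟩ := hx
    have hzB : z ∈ B := hzBm.1
    have hzk : k z = m := hzBm.2
    simp only [hf]
    rw [Finset.sum_sub_distrib]
    have hB0 : ∀ m' ∈ Finset.range (N + 2), (if (φ ^ m) z ∈ Bm m' then (m' : ℤ) else 0) = 0 :=
      fun m' _ => if_neg fun hmem => hxnB m ((φ ^ m) z) ⟨z, hzBm, rfl⟩ hmem.1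
    rw [Finset.sum_congr rfl hB0, Finset.sum_const_zero, zero_sub, neg_inj]
    rw [Finset.sum_eq_single m]
    · rw [if_pos ⟨z, hzBm, rfl⟩]
    · intro m' _ hm'
      refine if_neg ?_
      rintro ⟨z', hz'Bm, heq⟩
      have hz'k : k z' = m' := hz'Bm.2
      have heq2 : (φ ^ k z') z' = (φ ^ k z) z := by rw [hz'k, hzk]; exact heq
      have hzz : z' = z := hinj z' z hz'Bm.1 hzB heq2
      exact hm' (by rw [← hz'k, hzz, hzk])
    · intro hnot
      exact absurd (Finset.mem_range.2 (by have := hkN z; omega)) hnot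
  have hf0 : ∀ x, x ∉ B → (∀ m, x ∉ Cm m) → f x = 0 := by
    intro x hxB hxC
    simp only [hf]
    refine Finset.sum_eq_zero fun m _ => ?_
    rw [if_neg (fun hc => hxB hc.1), if_neg (hxC m), sub_zero]
  have hfcont : Continuous f := by
    rw [hf]
    refine continuous_finset_sum _ fun m _ => ?_
    exact (cont_ite (hBmclopen m) _ _).sub (cont_ite (hCmclopen m) _ _)
  -- the involution
  set g : X → X := fun x => (φ ^ f x) x with hg
  have hzpowcancel : ∀ (m : ℕ) (z : X), (φ ^ (-(m : ℤ))) ((φ ^ m) z) = z := by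
    intro m z
    have h1 : (φ ^ m) z = (φ ^ (m : ℤ)) z := by rw [zpow_natCast]
    rw [h1, ← homeo_zpow_add_apply]
    simp
  have hgB : ∀ x, x ∈ B → g x = (φ ^ k x) x := by
    intro x hx
    simp only [hg]
    rw [hfB x hx, zpow_natCast]
  have hgC : ∀ m x, x ∈ Cm m → ∀ z, z ∈ B → k z = m → x = (φ ^ m) z → g x = z := by
    intro m x hx z hzB hzk hxz
    simp only [hg]
    rw [hfC m x hx, hxz, hzpowcancel]
  have hginv : ∀ x, g (g x) = x := by
    intro x
    by_cases hxB : x ∈ B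
    · rw [hgB x hxB]
      have hmem : (φ ^ k x) x ∈ Cm (k x) := ⟨x, ⟨hxB, rfl⟩, rfl⟩
      exact hgC (k x) _ hmem x hxB rfl rfl
    · by_cases hxC : ∃ m, x ∈ Cm m
      · obtain ⟨m, hm⟩ := hxC
        obtain ⟨z, hzBm, hxz⟩ := hm
        have h1 : g x = z := hgC m x ⟨z, hzBm, hxz⟩ z hzBm.1 hzBm.2 hxz.symm
        rw [h1, hgB z hzBm.1, hzBm.2, hxz]
      · push_neg at hxC
        have h1 : g x = x := by
          simp only [hg]
          rw [hf0 x hxB hxC]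
          simp
        rw [h1, h1]
  have hgcont : Continuous g := by
    rw [continuous_iff_continuousAt]
    intro x
    have hev : ∀ᶠ z in nhds x, f z = f x := by
      have hop : IsOpen {z | f z = f x} :=
        hfcont.isOpen_preimage {f x} (isOpen_discrete _)
      exact hop.mem_nhds rfl
    refine ContinuousAt.congr (f := fun z => (φ ^ f x) z) (φ ^ f x).continuous.continuousAt ?_
    filter_upwards [hev] with z hz
    simp only [hg]
    rw [hz]
  set γ : X ≃ₜ X :=
    { toEquiv := (Function.Involutive.toPerm g hginv)
      continuous_toFun := hgcont
      continuous_invFun := hgcont } with hγ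
  have hγcoe : ⇑γ = g := rfl
  refine ⟨γ, ⟨f, hfcont, fun x => rfl⟩, ?_, ?_, ?_⟩
  · rintro _ ⟨x, hx, rfl⟩
    show g x ∈ A
    rw [hgB x hx]
    exact hkA x
  · refine Homeomorph.ext fun x => ?_
    show γ (γ x) = x
    exact hginv x
  · intro x hx
    show g x = x
    have hxB : x ∉ B := fun h => hx (Or.inl h)
    have hxC : ∀ m, x ∉ Cm m := by
      intro m hm
      obtain ⟨z, hzBm, hxz⟩ := hm
      refine hx (Or.inr ⟨z, hzBm.1, ?_⟩)
      show g z = x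
      rw [hgB z hzBm.1, hzBm.2, hxz]
    simp only [hg]
    rw [hf0 x hxB hxC]
    simp

end GW


open MeasureTheory in
/-- Glasner–Weiss. If `A`, `B` are clopen sets with `μ B < μ A` for every
`φ`-invariant Borel probability measure `μ`, there is an involution `γ` in the topological
full group with `γ(B) ⊆ A`, supported on `B ∪ γ(B)`. -/
theorem glasner_weiss {X : Type*} [TopologicalSpace X] [MeasurableSpace X] [BorelSpace X]
    (hX : IsCantorSpace X) (φ : X ≃ₜ X) (hmin : IsMinimalHomeo φ)
    (A B : Set X) (hA : IsClopen A) (hB : IsClopen B)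
    (hAB : ∀ μ : Measure X, IsProbabilityMeasure μ →
      (∀ E : Set X, MeasurableSet E → μ (φ ⁻¹' E) = μ E) → μ B < μ A) :
    ∃ γ ∈ topFullGroup φ, ⇑γ '' B ⊆ A ∧ γ * γ = 1 ∧ ∀ x ∉ B ∪ ⇑γ '' B, γ x = x := by
    classical
  set A' : Set X := A \ B with hA'
  set B' : Set X := B \ A with hB'
  have hA'c : IsClopen A' := by rw [hA', Set.diff_eq]; exact hA.inter hB.compl
  have hB'c : IsClopen B' := by rw [hB', Set.diff_eq]; exact hB.inter hA.compl
  have hdisj : A' ∩ B' = ∅ := by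
    rw [hA', hB']; ext x
    simp only [Set.mem_inter_iff, Set.mem_diff, Set.mem_empty_iff_false, iff_false]
    tauto
  have huni : ∃ N : ℕ, ∀ y, GW.cnt φ B' y (N + 1) < GW.cnt φ A' y (N + 1) := by
    by_contra hcon
    push_neg at hcon
    have hcon' : ∀ N : ℕ, ∃ y, GW.cnt φ A' y (N + 1) ≤ GW.cnt φ B' y (N + 1) := by
      intro N
      obtain ⟨y, hy⟩ := hcon N
      exact ⟨y, hy⟩
    obtain ⟨μ, hprob, hinv, hle⟩ := GW.exists_invariant_measure_le hX φ hA'c hB'c hcon'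
    have hlt := hAB μ hprob hinv
    have hAsplit : μ A' + μ (A ∩ B) = μ A := by
      rw [hA', ← measure_union (Set.disjoint_left.2 fun x hx1 hx2 => hx1.2 hx2.2)
        ((hA.inter hB).isOpen.measurableSet), Set.diff_union_inter]
    have hBsplit : μ B' + μ (A ∩ B) = μ B := by
      rw [hB', Set.inter_comm, ← measure_union (Set.disjoint_left.2 fun x hx1 hx2 => hx1.2 hx2.2)
        ((hB.inter hA).isOpen.measurableSet), Set.diff_union_inter]
    rw [← hAsplit, ← hBsplit] at hlt
    have hfin : μ (A ∩ B) ≠ ⊤ := measure_ne_top μ _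
    have hlt2 : μ B' < μ A' := (ENNReal.add_lt_add_iff_right hfin).1 hlt
    exact absurd hlt2 (not_lt.2 hle)
  obtain ⟨N, hN⟩ := huni
  obtain ⟨γ, hγmem, hγB, hγinv, hγsupp⟩ := GW.exists_involution φ hA'c hB'c hdisj N hN
  refine ⟨γ, hγmem, ?_, hγinv, ?_⟩
  · rintro _ ⟨x, hx, rfl⟩
    by_cases hxA : x ∈ A
    · have hfix : γ x = x := by
        refine hγsupp x ?_
        rintro (h | ⟨z, hz, hzeq⟩)
        · exact h.2 hxA
        · have hmem : γ z ∈ A' := hγB ⟨z, hz, rfl⟩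
          rw [hzeq] at hmem
          exact hmem.2 hx
      rw [hfix]; exact hxA
    · exact (hγB ⟨x, ⟨hx, hxA⟩, rfl⟩).1
  · intro x hx
    refine hγsupp x ?_
    rintro (h | ⟨z, hz, hzeq⟩)
    · exact hx (Or.inl h.1)
    · exact hx (Or.inr ⟨z, hz.1, hzeq⟩)
end

section
/- Let (X,φ) be a minimal Cantor system and let x ∈ X. Then every clopen neighborhood U of x contains a clopen neighborhood V of x such that the class [1_V] of the indicator function of V is 2-divisible in K⁰(X,φ); that is, there exist continuous functions h, f : X → ℤ with 1_V = 2h + (f − f∘φ⁻¹). -/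
/-- Indicator functions of clopen sets are continuous. -/
lemma clopen_indicator_continuous {X : Type*} [TopologicalSpace X] {V : Set X}
    (hV : IsClopen V) : Continuous (V.indicator (fun _ => (1:ℤ))) := by
  classical
  have h2 : V.indicator (fun _ => (1:ℤ)) = fun y => if y ∈ V then (1:ℤ) else 0 := by
    ext y; by_cases h : y ∈ V <;> simp [h]
  rw [h2]
  refine continuous_if ?_ continuous_const.continuousOn continuous_const.continuousOn
  intro a ha
  rw [show {x | x ∈ V} = V from rfl, isClopen_iff_frontier_eq_empty.mp hV] at ha
  exact absurd ha (Set.notMem_empty a)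

lemma homeo_zpow_neg_one_apply {X : Type*} [TopologicalSpace X] (φ : X ≃ₜ X) (y : X) :
    (φ ^ (-1 : ℤ)) y = φ.symm y := by
  rw [zpow_neg_one]; rfl

/-- `g ∘ φ^m - g` is a coboundary for every `m : ℤ`. -/
lemma coboundary_exists {X : Type*} [TopologicalSpace X] (φ : X ≃ₜ X)
    (g : X → ℤ) (hg : Continuous g) (m : ℤ) :
    ∃ f : X → ℤ, Continuous f ∧ ∀ y, g ((φ ^ m) y) - g y = f y - f (φ.symm y) := by
  induction m using Int.induction_on with
  | zero => exact ⟨0, continuous_const, fun y => by simp⟩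
  | succ i ih =>
    obtain ⟨f, hf, hfy⟩ := ih
    have key : ∀ y : X, (φ ^ ((i:ℤ)+1)) (φ.symm y) = (φ ^ (i:ℤ)) y := by
      intro y
      calc (φ ^ ((i:ℤ)+1)) (φ.symm y) = (φ ^ ((i:ℤ)+1)) ((φ ^ (-1:ℤ)) y) := by
            rw [homeo_zpow_neg_one_apply]
        _ = (φ ^ ((i:ℤ)+1+(-1))) y := (homeo_zpow_add_apply φ _ _ y).symm
        _ = (φ ^ (i:ℤ)) y := by norm_num
    refine ⟨fun y => f y + g ((φ ^ ((i:ℤ)+1)) y),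
      hf.add (hg.comp (φ ^ ((i:ℤ)+1)).continuous), fun y => ?_⟩
    have h1 := hfy y
    have h2 := key y
    simp only [h2]
    linarith
  | pred i ih =>
    obtain ⟨f, hf, hfy⟩ := ih
    have key : ∀ y : X, (φ ^ (-(i:ℤ))) (φ.symm y) = (φ ^ (-(i:ℤ)-1)) y := by
      intro y
      calc (φ ^ (-(i:ℤ))) (φ.symm y) = (φ ^ (-(i:ℤ))) ((φ ^ (-1:ℤ)) y) := by
            rw [homeo_zpow_neg_one_apply]
        _ = (φ ^ (-(i:ℤ)+(-1))) y := (homeo_zpow_add_apply φ _ _ y).symm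
        _ = (φ ^ (-(i:ℤ)-1)) y := by ring_nf
    refine ⟨fun y => f y - g ((φ ^ (-(i:ℤ))) y),
      hf.sub (hg.comp (φ ^ (-(i:ℤ))).continuous), fun y => ?_⟩
    have h1 := hfy y
    have h2 := key y
    simp only [h2]
    linarith

/-- In a minimal Cantor system, every clopen neighbourhood `U` of `x`
contains a clopen neighbourhood `V` of `x` whose indicator class is 2-divisible in
`K⁰(X,φ) = C(X,ℤ)/{f - f∘φ⁻¹}`. -/
theorem exists_two_divisible_clopen_neighbourhood {X : Type*} [TopologicalSpace X]
    (hX : IsCantorSpace X) (φ : X ≃ₜ X) (hmin : IsMinimalHomeo φ)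
    (x : X) (U : Set X) (hU : IsClopen U) (hxU : x ∈ U) :
    ∃ V : Set X, IsClopen V ∧ x ∈ V ∧ V ⊆ U ∧
      ∃ h f : X → ℤ, Continuous h ∧ Continuous f ∧
        ∀ y : X, V.indicator (fun _ => (1 : ℤ)) y = 2 * h y + (f y - f (φ.symm y)) := by
  classical
  obtain ⟨e⟩ := hX
  -- {x} is closed
  have hclosed : IsClosed ({x} : Set X) := by
    have hset : ({x} : Set X) = e ⁻¹' {e x} := by
      ext z; simp [e.injective.eq_iff]
    rw [hset]
    exact isClosed_singleton.preimage e.continuous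
  have hopen : IsOpen (U \ {x}) := hU.isOpen.sdiff hclosed
  -- U \ {x} is nonempty (no isolated points in a Cantor space)
  have hne : (U \ {x}).Nonempty := by
    by_contra hne
    rw [Set.not_nonempty_iff_eq_empty, Set.diff_eq_empty] at hne
    have hUx : U = {x} := Set.Subset.antisymm hne (Set.singleton_subset_iff.mpr hxU)
    have hopen' : IsOpen ({e x} : Set (ℕ → Bool)) := by
      have h1 := e.isOpenMap U hU.isOpen
      rw [hUx, Set.image_singleton] at h1
      exact h1
    rw [isOpen_pi_iff] at hopen'
    obtain ⟨I, t, h1, h2⟩ := hopen' (e x) rfl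
    obtain ⟨n, hn⟩ := I.exists_notMem
    set w := Function.update (e x) n (!(e x n)) with hw
    have hwmem : w ∈ (I : Set ℕ).pi t := by
      intro i hi
      have hwi : w i = e x i := Function.update_of_ne (by rintro rfl; exact hn hi) _ _
      rw [hwi]; exact (h1 i hi).2
    have hweq : w = e x := h2 hwmem
    have : w n = e x n := by rw [hweq]
    simp [hw, Function.update_self] at this
  -- find a return of the orbit to U, distinct from x
  obtain ⟨z, hz, hzo⟩ := (hmin x).exists_mem_open hopen hne
  obtain ⟨n, rfl⟩ := hz
  have hz1 : (φ ^ n) x ∈ U := hzo.1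
  have hz2 : (φ ^ n) x ≠ x := by simpa using hzo.2
  -- a clopen set separating x from φ^n x
  have hexz : e ((φ ^ n) x) ≠ e x := fun h => hz2 (e.injective h)
  obtain ⟨i, hi⟩ := Function.ne_iff.mp hexz
  set A : Set X := (fun y => e y i) ⁻¹' {e x i} with hA_def
  have hA : IsClopen A :=
    (isClopen_discrete _).preimage ((continuous_apply i).comp e.continuous)
  have hxA : x ∈ A := rfl
  have hzA : (φ ^ n) x ∉ A := hi
  -- the small clopen set V
  set ψ : X ≃ₜ X := φ ^ n with hψ
  set V : Set X := (U ∩ A) ∩ (fun y => ψ y) ⁻¹' (U \ A) with hV_def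
  have hV : IsClopen V :=
    (hU.inter hA).inter ((hU.diff hA).preimage ψ.continuous)
  have hxV : x ∈ V := ⟨⟨hxU, hxA⟩, ⟨hz1, hzA⟩⟩
  -- the target set W = V ∪ ψ(V)
  set W : Set X := V ∪ (fun y => ψ.symm y) ⁻¹' V with hW_def
  have hW : IsClopen W := hV.union (hV.preimage ψ.symm.continuous)
  have hxW : x ∈ W := Or.inl hxV
  have hWU : W ⊆ U := by
    rintro y (hy | hy)
    · exact hy.1.1
    · have h3 : ψ (ψ.symm y) ∈ U \ A := hy.2
      rw [ψ.apply_symm_apply] at h3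
      exact h3.1
  have hdisj : ∀ y : X, y ∈ V → ψ.symm y ∈ V → False := by
    intro y h1 h2
    have h3 : ψ (ψ.symm y) ∈ U \ A := h2.2
    rw [ψ.apply_symm_apply] at h3
    exact h3.2 h1.1.2
  -- indicator function and coboundary
  set g : X → ℤ := V.indicator (fun _ => (1:ℤ)) with hg_def
  have hg : Continuous g := clopen_indicator_continuous hV
  obtain ⟨f, hf, hfy⟩ := coboundary_exists φ g hg (-n)
  have hsymm : ∀ y : X, (φ ^ (-n)) y = ψ.symm y := by
    intro y; rw [zpow_neg]; rfl
  refine ⟨W, hW, hxW, hWU, g, f, hg, hf, fun y => ?_⟩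
  have hWy : W.indicator (fun _ => (1:ℤ)) y = g y + g (ψ.symm y) := by
    by_cases h1 : y ∈ V <;> by_cases h2 : ψ.symm y ∈ V
    · exact absurd (hdisj y h1 h2) (by simp)
    · have hmem : y ∈ W := Or.inl h1
      rw [Set.indicator_of_mem hmem, hg_def, Set.indicator_of_mem h1,
        Set.indicator_of_notMem h2]; norm_num
    · have hmem : y ∈ W := Or.inr h2
      rw [Set.indicator_of_mem hmem, hg_def, Set.indicator_of_notMem h1,
        Set.indicator_of_mem h2]; norm_num
    · have hmem : y ∉ W := fun h => h.elim h1 h2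
      rw [Set.indicator_of_notMem hmem, hg_def, Set.indicator_of_notMem h1,
        Set.indicator_of_notMem h2]; norm_num
  have hfy' := hfy y
  rw [hsymm y] at hfy'
  rw [hWy]
  linarith
end
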